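/- arXiv:1002.4676 — 4 statements merged into one kernel-verified Lean document; each statement's English description precedes it below -/
import Mathlib

section
/- For all d ≥ 2, h ≥ 1 and c ≥ 1, the black pebbling cost of the DAG G'_{d,h} (the goal being to place a pebble on the new root, starting and finishing from the empty configuration) is exactly c·((d−1)(h−1) + 1). -/
/-! The balanced `d`-ary tree `T_d^h` with `h` levels: a node at depth `l` (the root having
depth `0`, the leaves depth `h-1`; a node at depth `l` has level `h - l`, so leaves have
level 1 and the tree root level `h`) is indexed by an element of `Fin (d^l)`; the children
of node `(l, j)` are the nodes `(l+1, d*j + r)` for `r < d` (child number `r` among its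
siblings, in left-to-right order). -/

/-- The nodes of the balanced `d`-ary tree with `h` levels. -/
abbrev TreeNode (d h : ℕ) := Σ l : Fin h, Fin (d ^ (l : ℕ))

/-- The inorder-traversal strict order on `T_d^h` (first the leftmost subtree, then the
node, then the remaining subtrees in order): node `(l, j)` gets the key
`(j*d + 1)/d^(l+1)`, and `u < v` iff `key u < key v` (stated here with the denominators
cleared). -/
def inorderLt (d h : ℕ) (u v : TreeNode d h) : Prop :=
  ((u.2 : ℕ) * d + 1) * d ^ (v.1 : ℕ) < ((v.2 : ℕ) * d + 1) * d ^ (u.1 : ℕ)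

/-- The copy nodes of `G_{d,h}`: `c` copies of each node of `T_d^h` (with the copy index
in `Fin c`, `0`-based). -/
abbrev CopyNode (d h c : ℕ) := TreeNode d h × Fin c

/-- The order `<` on copy nodes: `u < u'` iff the underlying tree nodes satisfy
`T(u) < T(u')` in inorder, or they are copies of the same tree node and the copy index of
`u` is smaller. -/
def copyLt (d h c : ℕ) (u v : CopyNode d h c) : Prop :=
  inorderLt d h u.1 v.1 ∨ (u.1 = v.1 ∧ (u.2 : ℕ) < (v.2 : ℕ))

/-- The nodes of `G_{d,h}` (and of `G'_{d,h}`): the copy nodes together with one new root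
(`none`), which has the `c` copies of the tree root as its children. -/
abbrev GNode (d h c : ℕ) := Option (CopyNode d h c)

/-- The child relation of `G'_{d,h}` (edges directed from children to parents).  In
`G_{d,h}`, the children of `v[i]` are all `c` copies of each of the `d` tree children of
`v`, and the children of the new root are the `c` copies of the tree root.  `G'_{d,h}` is
obtained by deleting, for each internal tree node `v` and each copy `v[i]`
(`i ∈ Fin c`, `0`-based), the edges from the `i` smallest and the `c - 1 - i` largest
children of `v[i]` with respect to `<` (so `v[i]` keeps exactly `c(d-1) + 1` children):
the children of `v[i]` in `G_{d,h}`, listed in increasing `<` order, are `u_r[m]` at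
position `r*c + m` where `u_r` is tree child number `r` of `v`, and `v[i]` keeps exactly
the children at positions `i, …, (d-1)c + i`. -/
def gChild' (d h c : ℕ) : GNode d h c → GNode d h c → Prop
  | some u, some v =>
      (u.1.1 : ℕ) = (v.1.1 : ℕ) + 1 ∧ (u.1.2 : ℕ) / d = (v.1.2 : ℕ) ∧
      (v.2 : ℕ) ≤ ((u.1.2 : ℕ) % d) * c + (u.2 : ℕ) ∧
      ((u.1.2 : ℕ) % d) * c + (u.2 : ℕ) ≤ (d - 1) * c + (v.2 : ℕ)
  | some u, none => (u.1.1 : ℕ) = 0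
  | none, _ => False

/-! Black pebbling on a DAG whose edges are directed from children to parents
(`child u v` means `u` is a child of `v`; a leaf is a node with no children). -/

/-- A legal black pebbling move from configuration `C` to `C'`:
place a pebble on a leaf; remove a pebble from any node; or, if all children of a node
carry pebbles, place a pebble on it or slide onto it a pebble from one of its children. -/
def BlackStep {V : Type} (child : V → V → Prop) (C C' : Set V) : Prop :=
  (∃ v, (∀ u, ¬ child u v) ∧ C' = insert v C) ∨
  (∃ v, C' = C \ {v}) ∨
  (∃ v, (∀ u, child u v → u ∈ C) ∧
     (C' = insert v C ∨ ∃ u, child u v ∧ u ∈ C ∧ C' = insert v (C \ {u})))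

/-- A black pebbling of the DAG `(V, child)`: a finite sequence of configurations starting
from the empty configuration, each obtained from the previous by a legal move. -/
structure BlackPebbling (V : Type) (child : V → V → Prop) where
  T : ℕ
  cfg : ℕ → Set V
  start : cfg 0 = ∅
  step : ∀ t < T, BlackStep child (cfg t) (cfg (t + 1))

/-- The pebbling places a pebble on `u` at some point. -/
def BlackPebbling.Pebbles {V : Type} {child : V → V → Prop}
    (P : BlackPebbling V child) (u : V) : Prop :=
  ∃ t ≤ P.T, u ∈ P.cfg t

/-- The pebbling never has more than `p` pebbles simultaneously on the graph. -/
def BlackPebbling.CostLE {V : Type} {child : V → V → Prop}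
    (P : BlackPebbling V child) (p : ℕ) : Prop :=
  ∀ t ≤ P.T, (P.cfg t).ncard ≤ p


namespace Stmt13Aux

variable {d h c : ℕ}

/-- extensionality for tree nodes via values -/
lemma tn_ext {a b : TreeNode d h} (h1 : (a.1 : ℕ) = (b.1 : ℕ)) (h2 : (a.2 : ℕ) = (b.2 : ℕ)) :
    a = b := by
  obtain ⟨⟨l1, hl1⟩, ⟨j1, hj1⟩⟩ := a
  obtain ⟨⟨l2, hl2⟩, ⟨j2, hj2⟩⟩ := b
  simp only [Fin.val_mk] at h1 h2
  subst h1; subst h2; rfl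

/-- The `r`-th child of an internal tree node. -/
def chd (w : TreeNode d h) (hw : (w.1 : ℕ) + 1 < h) (r : Fin d) : TreeNode d h :=
  ⟨⟨(w.1 : ℕ) + 1, hw⟩, ⟨d * (w.2 : ℕ) + (r : ℕ), by
    have h1 : (w.2 : ℕ) < d ^ (w.1 : ℕ) := w.2.isLt
    have h2 : (r : ℕ) < d := r.isLt
    have : d * (w.2 : ℕ) + (r : ℕ) < d * ((w.2 : ℕ) + 1) := by nlinarith
    calc d * (w.2 : ℕ) + (r : ℕ) < d * ((w.2 : ℕ) + 1) := this
      _ ≤ d * d ^ (w.1 : ℕ) := by exact Nat.mul_le_mul_left d h1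
      _ = d ^ ((w.1 : ℕ) + 1) := by rw [pow_succ, Nat.mul_comm]⟩⟩

@[simp] lemma chd_fst (w : TreeNode d h) (hw) (r : Fin d) :
    ((chd w hw r).1 : ℕ) = (w.1 : ℕ) + 1 := rfl

@[simp] lemma chd_snd (w : TreeNode d h) (hw) (r : Fin d) :
    ((chd w hw r).2 : ℕ) = d * (w.2 : ℕ) + (r : ℕ) := rfl

/-- `x` lies in the subtree rooted at `w`. -/
def Sub (d : ℕ) {h : ℕ} (w x : TreeNode d h) : Prop :=
  (w.1 : ℕ) ≤ (x.1 : ℕ) ∧ (x.2 : ℕ) / d ^ ((x.1 : ℕ) - (w.1 : ℕ)) = (w.2 : ℕ)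

lemma sub_refl (w : TreeNode d h) : Sub d w w := by
  constructor
  · exact le_refl _
  · simp

lemma sub_depth {w x : TreeNode d h} (hs : Sub d w x) : (w.1 : ℕ) ≤ (x.1 : ℕ) := hs.1

lemma sub_same_depth {w x : TreeNode d h} (hs : Sub d w x) (hdep : (x.1 : ℕ) = (w.1 : ℕ)) :
    x = w := by
  apply tn_ext hdep
  have h2 := hs.2
  have hz : (x.1 : ℕ) - (w.1 : ℕ) = 0 := by omega
  rw [hz] at h2
  simpa using h2

lemma sub_chd_trans (hd : 2 ≤ d) {w x : TreeNode d h} (hw : (w.1 : ℕ) + 1 < h) (r : Fin d)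
    (hs : Sub d (chd w hw r) x) : Sub d w x := by
  obtain ⟨h1, h2⟩ := hs
  simp only [chd_fst, chd_snd] at h1 h2
  refine ⟨by omega, ?_⟩
  have hkey : (x.1 : ℕ) - (w.1 : ℕ) = ((x.1 : ℕ) - ((w.1 : ℕ) + 1)) + 1 := by omega
  rw [hkey, pow_succ, ← Nat.div_div_eq_div_mul, h2]
  have hr : (r : ℕ) < d := r.isLt
  rw [Nat.mul_add_div (by omega : 0 < d),
    Nat.div_eq_of_lt hr]
  omega

/-- distinct children have disjoint subtrees -/
lemma sub_chd_disj (hd : 2 ≤ d) {w x : TreeNode d h} (hw : (w.1 : ℕ) + 1 < h) {r r' : Fin d}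
    (hs : Sub d (chd w hw r) x) (hs' : Sub d (chd w hw r') x) : r = r' := by
  obtain ⟨h1, h2⟩ := hs
  obtain ⟨h1', h2'⟩ := hs'
  simp only [chd_fst, chd_snd] at h1 h2 h1' h2'
  have : d * (w.2 : ℕ) + (r : ℕ) = d * (w.2 : ℕ) + (r' : ℕ) := by rw [← h2, ← h2']
  exact Fin.ext (by omega)

lemma not_sub_chd_self (hd : 2 ≤ d) {w : TreeNode d h} (hw : (w.1 : ℕ) + 1 < h) (r : Fin d) :
    ¬ Sub d (chd w hw r) w := by
  intro hs
  have := hs.1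
  simp only [chd_fst] at this
  omega

/-- The set of copy nodes in the subtree of `w`. -/
def Dset (d h c : ℕ) (w : TreeNode d h) : Set (GNode d h c) :=
  {y | ∃ x : TreeNode d h, ∃ m : Fin c, y = some (x, m) ∧ Sub d w x}

lemma copy_mem_Dset (w : TreeNode d h) (i : Fin c) : (some (w, i) : GNode d h c) ∈ Dset d h c w :=
  ⟨w, i, rfl, sub_refl w⟩

lemma Dset_chd_subset (hd : 2 ≤ d) {w : TreeNode d h} (hw : (w.1 : ℕ) + 1 < h) (r : Fin d) :
    Dset d h c (chd w hw r) ⊆ Dset d h c w := by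
  rintro y ⟨x, m, rfl, hs⟩
  exact ⟨x, m, rfl, sub_chd_trans hd hw r hs⟩

lemma copy_not_mem_Dset_chd (hd : 2 ≤ d) {w : TreeNode d h} (hw : (w.1 : ℕ) + 1 < h)
    (r : Fin d) (i : Fin c) : (some (w, i) : GNode d h c) ∉ Dset d h c (chd w hw r) := by
  rintro ⟨x, m, hx, hs⟩
  have hxw : x = w := by
    have := hx
    injection this with h'
    injection h' with h1 h2
    exact h1.symm
  subst hxw
  exact not_sub_chd_self hd hw r hs

lemma Dset_chd_disjoint (hd : 2 ≤ d) {w : TreeNode d h} (hw : (w.1 : ℕ) + 1 < h) {r r' : Fin d}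
    (hrr : r ≠ r') : Disjoint (Dset d h c (chd w hw r)) (Dset d h c (chd w hw r')) := by
  rw [Set.disjoint_left]
  rintro y ⟨x, m, rfl, hs⟩ ⟨x', m', hx', hs'⟩
  obtain rfl : x' = x := by cases hx'; rfl
  exact hrr (sub_chd_disj hd hw hs hs')


/-- characterization of children of a copy `v[i]` of an internal tree node -/
lemma gChild_some_iff (hd : 2 ≤ d) {w : TreeNode d h} (hw : (w.1 : ℕ) + 1 < h) (i : Fin c)
    (y : GNode d h c) :
    gChild' d h c y (some (w, i)) ↔
      ∃ r : Fin d, ∃ m : Fin c, y = some (chd w hw r, m) ∧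
        (i : ℕ) ≤ (r : ℕ) * c + (m : ℕ) ∧ (r : ℕ) * c + (m : ℕ) ≤ (d - 1) * c + (i : ℕ) := by
  constructor
  · intro hy
    match y, hy with
    | some u, hy =>
      obtain ⟨h1, h2, h3, h4⟩ := hy
      have hdpos : 0 < d := by omega
      refine ⟨⟨(u.1.2 : ℕ) % d, Nat.mod_lt _ hdpos⟩, u.2, ?_, h3, h4⟩
      have hu1 : u.1 = chd w hw ⟨(u.1.2 : ℕ) % d, Nat.mod_lt _ hdpos⟩ := by
        apply tn_ext
        · simpa using h1
        · simp only [chd_snd]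
          rw [← h2]
          exact (Nat.div_add_mod (u.1.2 : ℕ) d).symm.trans (by ring_nf)
      have hu : u = (chd w hw ⟨(u.1.2 : ℕ) % d, Nat.mod_lt _ hdpos⟩, u.2) := by
        exact Prod.ext hu1 rfl
      exact congrArg some hu
  · rintro ⟨r, m, rfl, hlo, hhi⟩
    refine ⟨by simp, ?_, ?_, ?_⟩
    · simp only [chd_snd]
      rw [Nat.mul_add_div (by omega : 0 < d), Nat.div_eq_of_lt r.isLt]
      omega
    · simp only [chd_snd]
      rw [Nat.mul_add_mod, Nat.mod_eq_of_lt r.isLt]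
      exact hlo
    · simp only [chd_snd]
      rw [Nat.mul_add_mod, Nat.mod_eq_of_lt r.isLt]
      exact hhi

/-- generic: sum of ncards of pairwise disjoint subsets of a finite type -/
lemma sum_ncard_le {α : Type*} [Finite α] {ι : Type*} [DecidableEq ι] (s : Finset ι)
    (f : ι → Set α) (B : Set α)
    (hsub : ∀ i ∈ s, f i ⊆ B)
    (hdisj : ∀ i ∈ s, ∀ j ∈ s, i ≠ j → Disjoint (f i) (f j)) :
    ∑ i ∈ s, (f i).ncard ≤ B.ncard := by
  classical
  induction s using Finset.induction generalizing B with
  | empty => simp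
  | @insert a s ha ih =>
    rw [Finset.sum_insert ha]
    have h1 : (f a).ncard + (B \ f a).ncard = B.ncard := by
      rw [← Set.ncard_union_eq Set.disjoint_sdiff_right (Set.toFinite _) (Set.toFinite _)]
      rw [Set.union_diff_cancel (hsub a (Finset.mem_insert_self a s))]
    have h2 : ∑ i ∈ s, (f i).ncard ≤ (B \ f a).ncard := by
      apply ih
      · intro i hi
        have hia : i ≠ a := by rintro rfl; exact ha hi
        refine Set.subset_diff.2 ⟨hsub i (Finset.mem_insert_of_mem hi), ?_⟩
        exact hdisj i (Finset.mem_insert_of_mem hi) a (Finset.mem_insert_self a s) hia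
      · intro i hi j hj hij
        exact hdisj i (Finset.mem_insert_of_mem hi) j (Finset.mem_insert_of_mem hj) hij
    omega

/-- a node newly appearing in a black-pebbling step had all its children pebbled before -/
lemma step_children_mem {V : Type} {child : V → V → Prop} {C C' : Set V}
    (hs : BlackStep child C C') {x : V} (hx : x ∈ C') (hxn : x ∉ C) :
    ∀ u, child u x → u ∈ C := by
  rcases hs with ⟨v, hv, rfl⟩ | ⟨v, rfl⟩ | ⟨v, hv, hC' | ⟨u, hu, huC, hC'⟩⟩
  · rcases hx with rfl | hx
    · intro u hu; exact absurd hu (hv u)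
    · exact absurd hx hxn
  · exact absurd hx.1 hxn
  · subst hC'
    rcases hx with rfl | hx
    · exact hv
    · exact absurd hx hxn
  · subst hC'
    rcases hx with rfl | hx
    · exact hv
    · exact absurd hx.1 hxn

end Stmt13Aux

namespace Stmt13Aux

section Lower

variable {d h c : ℕ}

/-- superadditivity of pebble counts over children subtrees plus copies of `w` itself -/
lemma subadd (hd : 2 ≤ d) {w : TreeNode d h} (hw : (w.1 : ℕ) + 1 < h)
    (C : Set (GNode d h c)) (G : Finset (Fin c))
    (hG : ∀ i ∈ G, (some (w, i) : GNode d h c) ∈ C)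
    (n : Fin d → ℕ) (hn : ∀ r, n r ≤ (C ∩ Dset d h c (chd w hw r)).ncard) :
    (∑ r, n r) + G.card ≤ (C ∩ Dset d h c w).ncard := by
  classical
  set E : Set (GNode d h c) := (fun i => (some (w, i) : GNode d h c)) '' (G : Set (Fin c)) with hE
  have hEcard : E.ncard = G.card := by
    rw [hE, Set.ncard_image_of_injective _ (by
      intro a b hab
      simpa using hab), Set.ncard_coe_finset]
  have hEsub : E ⊆ C ∩ Dset d h c w := by
    rintro y ⟨i, hi, rfl⟩
    exact ⟨hG i (by simpa using hi), copy_mem_Dset w i⟩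
  have h1 : ∑ r, (C ∩ Dset d h c (chd w hw r)).ncard ≤ ((C ∩ Dset d h c w) \ E).ncard := by
    apply sum_ncard_le
    · intro r _
      refine Set.subset_diff.2 ⟨?_, ?_⟩
      · exact fun y hy => ⟨hy.1, Dset_chd_subset hd hw r hy.2⟩
      · rw [Set.disjoint_left]
        rintro y ⟨hyC, hyD⟩ ⟨i, hi, rfl⟩
        exact copy_not_mem_Dset_chd hd hw r i hyD
    · intro r _ r' _ hrr
      exact Set.disjoint_of_subset Set.inter_subset_right Set.inter_subset_right
        (Dset_chd_disjoint hd hw hrr)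
  have h2 : ((C ∩ Dset d h c w) \ E).ncard + E.ncard = (C ∩ Dset d h c w).ncard := by
    rw [← Set.ncard_union_eq Set.disjoint_sdiff_left (Set.toFinite _) (Set.toFinite _)]
    rw [Set.diff_union_of_subset hEsub]
  have h3 : ∑ r, n r ≤ ∑ r, (C ∩ Dset d h c (chd w hw r)).ncard :=
    Finset.sum_le_sum fun r _ => hn r
  omega

set_option maxHeartbeats 1000000 in
/-- The main lower-bound lemma: if at time `t₀` all copies in `S` of the node `w` are
simultaneously pebbled, and at time `s < t₀` the subtree of `w` holds fewer than `|S|`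
pebbles, then at some time in `(s, t₀]` the subtree of `w` holds at least
`c((d-1)·level + 1) - (c - |S|)` pebbles. -/
lemma main_lower (hd : 2 ≤ d) (hc : 1 ≤ c)
    (P : BlackPebbling (GNode d h c) (gChild' d h c)) (ν : ℕ) :
    ∀ w : TreeNode d h, h - 1 - (w.1 : ℕ) = ν →
    ∀ S : Finset (Fin c), ∀ s t₀ : ℕ, s < t₀ → t₀ ≤ P.T →
    (∀ m ∈ S, (some (w, m) : GNode d h c) ∈ P.cfg t₀) →
    (P.cfg s ∩ Dset d h c w).ncard + 1 ≤ S.card →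
    ∃ τ, s < τ ∧ τ ≤ t₀ ∧
      c * ((d - 1) * (h - 1 - (w.1 : ℕ)) + 1) + S.card ≤ (P.cfg τ ∩ Dset d h c w).ncard + c := by
  classical
  induction ν with
  | zero =>
    intro w hν S s t₀ hst ht₀T hpres hsmall
    refine ⟨t₀, hst, le_refl _, ?_⟩
    rw [hν]
    have hcard : S.card ≤ (P.cfg t₀ ∩ Dset d h c w).ncard := by
      have : ((fun i => (some (w, i) : GNode d h c)) '' (S : Set (Fin c))) ⊆
          P.cfg t₀ ∩ Dset d h c w := by
        rintro y ⟨i, hi, rfl⟩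
        exact ⟨hpres i (by simpa using hi), copy_mem_Dset w i⟩
      calc S.card = ((fun i => (some (w, i) : GNode d h c)) '' (S : Set (Fin c))).ncard := by
            rw [Set.ncard_image_of_injective _ (by intro a b hab; simpa using hab),
              Set.ncard_coe_finset]
        _ ≤ _ := Set.ncard_le_ncard this (Set.toFinite _)
    omega
  | succ ν ih =>
    intro w hν S s t₀ hst ht₀T hpres hsmall
    have hw : (w.1 : ℕ) + 1 < h := by omega
    have hν' : ∀ r : Fin d, h - 1 - ((chd w hw r).1 : ℕ) = ν := by
      intro r; simp only [chd_fst]; omega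
    set Qc := c * ((d - 1) * ν + 1) with hQc
    -- the last time each copy of w is (re)placed before t₀
    have hex : ∀ i : Fin c, i ∈ S →
        ∃ p, ∀ σ, p ≤ σ → σ ≤ t₀ → (some (w, i) : GNode d h c) ∈ P.cfg σ := by
      intro i hi
      exact ⟨t₀, fun σ h1 h2 => by
        have : σ = t₀ := le_antisymm h2 h1
        rw [this]; exact hpres i hi⟩
    set p : Fin c → ℕ := fun i => if hi : i ∈ S then Nat.find (hex i hi) else 0 with hp
    have hp_pres : ∀ i ∈ S, ∀ σ, p i ≤ σ → σ ≤ t₀ →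
        (some (w, i) : GNode d h c) ∈ P.cfg σ := by
      intro i hi σ h1 h2
      rw [hp] at h1; simp only [dif_pos hi] at h1
      exact Nat.find_spec (hex i hi) σ h1 h2
    have hp_le : ∀ i ∈ S, p i ≤ t₀ := by
      intro i hi
      rw [hp]; simp only [dif_pos hi]
      exact Nat.find_le (fun σ h1 h2 => by
        have : σ = t₀ := le_antisymm h2 h1
        rw [this]; exact hpres i hi)
    -- if p i > s then all children of w[i] are pebbled at time p i - 1
    have hp_place : ∀ i ∈ S, s < p i →
        (∀ y, gChild' d h c y (some (w, i)) → y ∈ P.cfg (p i - 1)) := by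
      intro i hi hpi
      have hpi1 : 1 ≤ p i := by omega
      have hmin : ¬ (∀ σ, p i - 1 ≤ σ → σ ≤ t₀ → (some (w, i) : GNode d h c) ∈ P.cfg σ) := by
        have := Nat.find_min (hex i hi) (show p i - 1 < Nat.find (hex i hi) by
          rw [hp] at hpi1 ⊢; simp only [dif_pos hi] at hpi1 ⊢; omega)
        exact this
      push_neg at hmin
      obtain ⟨σ, hσ1, hσ2, hσ3⟩ := hmin
      have hσeq : σ = p i - 1 := by
        by_contra hne
        exact hσ3 (hp_pres i hi σ (by omega) hσ2)
      subst hσeq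
      have hmem : (some (w, i) : GNode d h c) ∈ P.cfg (p i) :=
        hp_pres i hi (p i) (le_refl _) (hp_le i hi)
      have hstep := P.step (p i - 1) (by
        have := hp_le i hi
        omega)
      rw [show p i - 1 + 1 = p i by omega] at hstep
      exact step_children_mem hstep hmem hσ3
    -- future copies and needed child-copy sets
    set F : ℕ → Finset (Fin c) := fun τ => S.filter (fun i => τ < p i) with hF
    have hFmem : ∀ {i : Fin c} {τ : ℕ}, i ∈ F τ ↔ i ∈ S ∧ τ < p i := by
      intro i τ
      simp only [hF, Finset.mem_filter]
    have hFmono : ∀ ⦃τ τ'⦄, τ ≤ τ' → F τ' ⊆ F τ := by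
      intro τ τ' hττ i hi
      rw [hFmem] at hi ⊢
      exact ⟨hi.1, by omega⟩
    set K : Fin d → ℕ → Finset (Fin c) := fun r τ =>
      Finset.univ.filter (fun m => ∃ i ∈ F τ,
        (i : ℕ) ≤ (r : ℕ) * c + (m : ℕ) ∧ (r : ℕ) * c + (m : ℕ) ≤ (d - 1) * c + (i : ℕ)) with hK
    have hKmem : ∀ {m : Fin c} {r : Fin d} {τ : ℕ}, m ∈ K r τ ↔ ∃ i ∈ F τ,
        (i : ℕ) ≤ (r : ℕ) * c + (m : ℕ) ∧ (r : ℕ) * c + (m : ℕ) ≤ (d - 1) * c + (i : ℕ) := by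
      intro m r τ
      simp only [hK, Finset.mem_filter, Finset.mem_univ, true_and]
    have hKmono : ∀ (r : Fin d) ⦃τ τ'⦄, τ ≤ τ' → K r τ' ⊆ K r τ := by
      intro r τ τ' hττ m hm
      rw [hKmem] at hm ⊢
      obtain ⟨i, hi, hi2⟩ := hm
      exact ⟨i, hFmono hττ hi, hi2⟩
    -- N nonempty
    have hNne : (F s).Nonempty := by
      by_contra hne
      rw [Finset.not_nonempty_iff_eq_empty] at hne
      have hall : ∀ i ∈ S, p i ≤ s := by
        intro i hi
        by_contra hlt
        have : i ∈ F s := hFmem.2 ⟨hi, by omega⟩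
        rw [hne] at this; simp at this
      have : S.card ≤ (P.cfg s ∩ Dset d h c w).ncard := by
        have hsub : ((fun i => (some (w, i) : GNode d h c)) '' (S : Set (Fin c))) ⊆
            P.cfg s ∩ Dset d h c w := by
          rintro y ⟨i, hi, rfl⟩
          simp only [Finset.mem_coe] at hi
          exact ⟨hp_pres i hi s (hall i hi) (by omega), copy_mem_Dset w i⟩
        calc S.card = ((fun i => (some (w, i) : GNode d h c)) '' (S : Set (Fin c))).ncard := by
              rw [Set.ncard_image_of_injective _ (by intro a b hab; simpa using hab),
                Set.ncard_coe_finset]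
          _ ≤ _ := Set.ncard_le_ncard hsub (Set.toFinite _)
      omega
    obtain ⟨jn, hjnF, hjnmax⟩ := Finset.exists_max_image (F s) p hNne
    have hjnS : jn ∈ S := (hFmem.1 hjnF).1
    have hjns : s < p jn := (hFmem.1 hjnF).2
    set Pi := p jn - 1 with hPi
    have hPis : s ≤ Pi := by omega
    have hPit₀ : Pi < t₀ := by have := hp_le jn hjnS; omega
    -- jn is always a future copy up to time Pi
    have hjn_mem_F : ∀ τ ≤ Pi, jn ∈ F τ := by
      intro τ hτ
      exact hFmem.2 ⟨hjnS, by omega⟩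
    -- child bulge extraction
    have hchild : ∀ τ, s ≤ τ → τ ≤ Pi → ∀ r : Fin d,
        (P.cfg τ ∩ Dset d h c (chd w hw r)).ncard + 1 ≤ (K r τ).card →
        ∃ τ', τ < τ' ∧ τ' ≤ Pi ∧
          Qc + (K r τ).card ≤ (P.cfg τ' ∩ Dset d h c (chd w hw r)).ncard + c := by
      intro τ hsτ hτPi r hsmall_r
      have hFne : (F τ).Nonempty := ⟨jn, hjn_mem_F τ hτPi⟩
      obtain ⟨iμ, hiμF, hiμmin⟩ := Finset.exists_min_image (F τ) (fun i => (i : ℕ)) hFne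
      obtain ⟨iν, hiνF, hiνmax⟩ := Finset.exists_max_image (F τ) (fun i => (i : ℕ)) hFne
      set istar : Fin c := if (r : ℕ) = d - 1 then iν else iμ with histar
      have histarF : istar ∈ F τ := by
        rw [histar]; split_ifs <;> assumption
      have histarS : istar ∈ S := (hFmem.1 histarF).1
      have histarp : τ < p istar := (hFmem.1 histarF).2
      -- K r τ ⊆ K^{istar}_r
      have hKsub : ∀ m ∈ K r τ, (istar : ℕ) ≤ (r : ℕ) * c + (m : ℕ) ∧
          (r : ℕ) * c + (m : ℕ) ≤ (d - 1) * c + (istar : ℕ) := by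
        intro m hm
        rw [hKmem] at hm
        obtain ⟨i, hiF, hlo, hhi⟩ := hm
        have hmc : (m : ℕ) < c := m.isLt
        have hic : (i : ℕ) < c := i.isLt
        have histc : (istar : ℕ) < c := istar.isLt
        have hrd : (r : ℕ) < d := r.isLt
        rw [histar]
        split_ifs with hrlast
        · -- r = d - 1 : use max
          have hiν : (i : ℕ) ≤ (iν : ℕ) := hiνmax i hiF
          have hiνc : (iν : ℕ) < c := iν.isLt
          have hcle : c ≤ (d - 1) * c := Nat.le_mul_of_pos_left c (by omega)
          constructor
          · calc (iν : ℕ) ≤ (d-1) * c := by omega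
              _ ≤ (r : ℕ) * c + (m : ℕ) := by rw [hrlast]; omega
          · omega
        · -- r < d - 1 : use min
          have hrlt : (r : ℕ) < d - 1 := by omega
          have hiμ : (iμ : ℕ) ≤ (i : ℕ) := hiμmin i hiF
          have hr1 : (r : ℕ) + 1 ≤ d - 1 := by omega
          have hmul : ((r : ℕ) + 1) * c ≤ (d - 1) * c := Nat.mul_le_mul_right c hr1
          have hA : (r : ℕ) * c + c = ((r : ℕ) + 1) * c := by ring
          constructor
          · omega
          · omega
      -- presence of needed copies at time (p istar - 1)
      have hpresK : ∀ m ∈ K r τ,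
          (some (chd w hw r, m) : GNode d h c) ∈ P.cfg (p istar - 1) := by
        intro m hm
        apply hp_place istar histarS (by omega)
        rw [gChild_some_iff hd hw]
        exact ⟨r, m, rfl, (hKsub m hm).1, (hKsub m hm).2⟩
      have hKne : (K r τ).Nonempty := by
        rw [← Finset.card_pos]; omega
      have hTle : p istar - 1 ≤ Pi := by
        have := hjnmax istar (hFmono hsτ histarF)
        omega
      by_cases hTτ : p istar - 1 = τ
      · -- contradiction: the needed copies are already all there at τ
        exfalso
        have hsub : ((fun m => (some (chd w hw r, m) : GNode d h c)) '' ((K r τ) : Set (Fin c))) ⊆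
            P.cfg τ ∩ Dset d h c (chd w hw r) := by
          rintro y ⟨m, hm, rfl⟩
          simp only [Finset.mem_coe] at hm
          exact ⟨hTτ ▸ hpresK m hm, copy_mem_Dset _ m⟩
        have : (K r τ).card ≤ (P.cfg τ ∩ Dset d h c (chd w hw r)).ncard := by
          calc (K r τ).card
              = ((fun m => (some (chd w hw r, m) : GNode d h c)) '' ((K r τ) : Set (Fin c))).ncard := by
                rw [Set.ncard_image_of_injective _ (by intro a b hab; simpa using hab),
                  Set.ncard_coe_finset]
            _ ≤ _ := Set.ncard_le_ncard hsub (Set.toFinite _)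
        omega
      · have hττ' : τ < p istar - 1 := by omega
        obtain ⟨τ', hτ'1, hτ'2, hτ'3⟩ := ih (chd w hw r) (hν' r) (K r τ) τ (p istar - 1)
          hττ' (by omega) (fun m hm => hpresK m hm) hsmall_r
        rw [hν' r] at hτ'3
        exact ⟨τ', hτ'1, by omega, hτ'3⟩
    -- initial bulge for child 0
    have hzd : (0 : ℕ) < d := by omega
    set r0 : Fin d := ⟨0, hzd⟩ with hr0
    have hNsubK : F s ⊆ K r0 s := by
      intro i hi
      rw [hKmem]
      refine ⟨i, hi, ?_, ?_⟩
      · simp [hr0]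
      · simp [hr0]
    have hO_card : (S.filter (fun i => ¬ s < p i)).card + (F s).card = S.card := by
      simp only [hF]
      rw [add_comm]
      exact Finset.card_filter_add_card_filter_not (fun i => s < p i)
    have hOpres : ∀ i ∈ S.filter (fun i => ¬ s < p i),
        (some (w, i) : GNode d h c) ∈ P.cfg s := by
      intro i hi
      rw [Finset.mem_filter] at hi
      exact hp_pres i hi.1 s (by omega) (by omega)
    have hinit_small : (P.cfg s ∩ Dset d h c (chd w hw r0)).ncard + 1 ≤ (K r0 s).card := by
      have hsub0 := subadd hd hw (P.cfg s) (S.filter (fun i => ¬ s < p i)) hOpres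
        (fun r => if r = r0 then (P.cfg s ∩ Dset d h c (chd w hw r0)).ncard else 0)
        (by
          intro r
          split_ifs with hr
          · subst hr; exact le_refl _
          · exact Nat.zero_le _)
      rw [Finset.sum_ite_eq' Finset.univ r0] at hsub0
      simp only [Finset.mem_univ, if_true] at hsub0
      have hNK : (F s).card ≤ (K r0 s).card := Finset.card_le_card hNsubK
      omega
    obtain ⟨τ₀, hτ₀1, hτ₀2, hτ₀3⟩ := hchild s (le_refl s) hPis r0 hinit_small
    -- the latest time with a child bulge
    set cond : ℕ → Prop := fun τ => s < τ ∧ ∃ r : Fin d,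
      Qc + (K r τ).card ≤ (P.cfg τ ∩ Dset d h c (chd w hw r)).ncard + c with hcond
    have hcondτ₀ : cond τ₀ := by
      refine ⟨hτ₀1, r0, ?_⟩
      have := Finset.card_le_card (hKmono r0 (le_of_lt hτ₀1))
      omega
    set τs := Nat.findGreatest cond Pi with hτs
    have hcondτs : cond τs := Nat.findGreatest_spec hτ₀2 hcondτ₀
    have hτsPi : τs ≤ Pi := Nat.findGreatest_le Pi
    obtain ⟨hsτs, rstar, hbulge⟩ := hcondτs
    -- floors for the other children
    have hfloor : ∀ r : Fin d, (K r τs).card ≤ (P.cfg τs ∩ Dset d h c (chd w hw r)).ncard := by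
      intro r
      by_contra hlt
      push_neg at hlt
      obtain ⟨τ', hτ'1, hτ'2, hτ'3⟩ := hchild τs (le_of_lt hsτs) hτsPi r (by omega)
      have hcondτ' : cond τ' := by
        refine ⟨by omega, r, ?_⟩
        have := Finset.card_le_card (hKmono r (le_of_lt hτ'1))
        omega
      have := Nat.le_findGreatest hτ'2 hcondτ'
      omega
    -- cards of K sets at τs
    have hFτsne : (F τs).Nonempty := ⟨jn, hjn_mem_F τs hτsPi⟩
    obtain ⟨iμ, hiμF, hiμmin⟩ := Finset.exists_min_image (F τs) (fun i => (i : ℕ)) hFτsne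
    obtain ⟨iν, hiνF, hiνmax⟩ := Finset.exists_max_image (F τs) (fun i => (i : ℕ)) hFτsne
    have hdd : d - 1 < d := by omega
    set rlast : Fin d := ⟨d - 1, hdd⟩ with hrlast
    have hr0last : r0 ≠ rlast := by
      rw [hr0, hrlast]
      intro hcontra
      have := Fin.mk.injEq 0 hzd (d-1) hdd ▸ hcontra
      omega
    -- K r0 τs contains Ici iμ
    have hK0 : c - (iμ : ℕ) ≤ (K r0 τs).card := by
      have hsub : Finset.Ici iμ ⊆ K r0 τs := by
        intro m hm
        rw [Finset.mem_Ici] at hm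
        rw [hKmem]
        refine ⟨iμ, hiμF, ?_, ?_⟩
        · simpa [hr0] using hm
        · simp only [hr0]
          have : (m : ℕ) < c := m.isLt
          have : (iμ : ℕ) < c := iμ.isLt
          have : c ≤ (d-1) * c := Nat.le_mul_of_pos_left c (by omega)
          simp only [Fin.val_mk, zero_mul, zero_add]
          omega
      calc c - (iμ : ℕ) = (Finset.Ici iμ).card := (Fin.card_Ici iμ).symm
        _ ≤ _ := Finset.card_le_card hsub
    have hKlast : (iν : ℕ) + 1 ≤ (K rlast τs).card := by
      have hsub : Finset.Iic iν ⊆ K rlast τs := by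
        intro m hm
        rw [Finset.mem_Iic] at hm
        rw [hKmem]
        refine ⟨iν, hiνF, ?_, ?_⟩
        · simp only [hrlast, Fin.val_mk]
          have : (iν : ℕ) < c := iν.isLt
          have : c ≤ (d-1) * c := Nat.le_mul_of_pos_left c (by omega)
          omega
        · simp only [hrlast, Fin.val_mk]
          have : (m : ℕ) ≤ (iν : ℕ) := Fin.le_def.1 hm
          omega
      calc (iν : ℕ) + 1 = (Finset.Iic iν).card := (Fin.card_Iic iν).symm
        _ ≤ _ := Finset.card_le_card hsub
    have hKmid : ∀ r : Fin d, r ≠ r0 → r ≠ rlast → (K r τs).card = c := by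
      intro r hr1 hr2
      have hr1' : 0 < (r : ℕ) := by
        rcases Nat.eq_zero_or_pos (r : ℕ) with h0 | h0
        · exact absurd (Fin.ext (by simp [hr0, h0])) hr1
        · exact h0
      have hr2' : (r : ℕ) < d - 1 := by
        have := r.isLt
        rcases Nat.lt_or_ge (r : ℕ) (d - 1) with h0 | h0
        · exact h0
        · exact absurd (Fin.ext (by simp [hrlast]; omega)) hr2
      have : K r τs = Finset.univ := by
        apply Finset.eq_univ_of_forall
        intro m
        rw [hKmem]
        refine ⟨iμ, hiμF, ?_, ?_⟩
        · have h1 : (iμ : ℕ) < c := iμ.isLt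
          have h2 : c ≤ (r : ℕ) * c := Nat.le_mul_of_pos_left c hr1'
          omega
        · have hmc : (m : ℕ) < c := m.isLt
          have h3 : ((r : ℕ) + 1) * c ≤ (d - 1) * c := Nat.mul_le_mul_right c (by omega)
          have hA : (r : ℕ) * c + c = ((r : ℕ) + 1) * c := by ring
          omega
      rw [this]
      simp
    -- |F τs| ≤ iν - iμ + 1
    have hμν : (iμ : ℕ) ≤ (iν : ℕ) := hiμmin iν hiνF
    have hFcard : (F τs).card ≤ (iν : ℕ) + 1 - (iμ : ℕ) := by
      have hsub : F τs ⊆ Finset.Icc iμ iν := by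
        intro i hi
        rw [Finset.mem_Icc]
        exact ⟨hiμmin i hi, hiνmax i hi⟩
      calc (F τs).card ≤ (Finset.Icc iμ iν).card := Finset.card_le_card hsub
        _ = (iν : ℕ) + 1 - (iμ : ℕ) := Fin.card_Icc iμ iν
    -- sum of the K-cards
    have hsumK : c * (d - 1) + (F τs).card ≤ ∑ r, (K r τs).card := by
      have hsplit : ∑ r, (K r τs).card =
          (K r0 τs).card + (K rlast τs).card + ∑ r ∈ (Finset.univ.erase r0).erase rlast, (K r τs).card := by
        rw [← Finset.add_sum_erase _ _ (Finset.mem_univ r0)]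
        rw [← Finset.add_sum_erase _ _ (Finset.mem_erase.2 ⟨Ne.symm hr0last, Finset.mem_univ rlast⟩)]
        ring
      have hmid : ∑ r ∈ (Finset.univ.erase r0).erase rlast, (K r τs).card =
          (d - 2) * c := by
        have hcardset : ((Finset.univ.erase r0).erase rlast).card = d - 2 := by
          rw [Finset.card_erase_of_mem (Finset.mem_erase.2 ⟨Ne.symm hr0last, Finset.mem_univ rlast⟩),
            Finset.card_erase_of_mem (Finset.mem_univ r0)]
          simp only [Finset.card_univ, Fintype.card_fin]
          omega
        calc ∑ r ∈ (Finset.univ.erase r0).erase rlast, (K r τs).card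
            = ∑ _r ∈ (Finset.univ.erase r0).erase rlast, c := by
              apply Finset.sum_congr rfl
              intro r hr
              rw [Finset.mem_erase, Finset.mem_erase] at hr
              exact hKmid r hr.2.1 hr.1
          _ = (d - 2) * c := by rw [Finset.sum_const, hcardset, smul_eq_mul]
      have hφ : (F τs).card ≤ (iν : ℕ) + 1 - (iμ : ℕ) := hFcard
      have hiμc : (iμ : ℕ) < c := iμ.isLt
      have hiνc : (iν : ℕ) < c := iν.isLt
      rw [hsplit, hmid]
      have : c * (d - 1) = c + (d - 2) * c := by
        have : d - 1 = 1 + (d - 2) := by omega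
        rw [this]
        ring
      omega
    -- the copies present at τs
    set G := S.filter (fun i => ¬ τs < p i) with hG
    have hGcard : G.card + (F τs).card = S.card := by
      simp only [hG, hF]
      rw [add_comm]
      exact Finset.card_filter_add_card_filter_not (fun i => τs < p i)
    have hGpres : ∀ i ∈ G, (some (w, i) : GNode d h c) ∈ P.cfg τs := by
      intro i hi
      rw [hG, Finset.mem_filter] at hi
      exact hp_pres i hi.1 τs (by omega) (by omega)
    -- total count at τs
    have htotal : (∑ r, (P.cfg τs ∩ Dset d h c (chd w hw r)).ncard) + G.card ≤
        (P.cfg τs ∩ Dset d h c w).ncard := by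
      simpa using subadd hd hw (P.cfg τs) G hGpres
        (fun r => (P.cfg τs ∩ Dset d h c (chd w hw r)).ncard) (fun r => le_refl _)
    have hsum_n : ∑ r, (K r τs).card + Qc ≤
        (∑ r, (P.cfg τs ∩ Dset d h c (chd w hw r)).ncard) + c := by
      rw [← Finset.add_sum_erase _ (fun r => (K r τs).card) (Finset.mem_univ rstar),
        ← Finset.add_sum_erase _ (fun r => (P.cfg τs ∩ Dset d h c (chd w hw r)).ncard)
          (Finset.mem_univ rstar)]
      have h1 : ∑ r ∈ Finset.univ.erase rstar, (K r τs).card ≤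
          ∑ r ∈ Finset.univ.erase rstar, (P.cfg τs ∩ Dset d h c (chd w hw r)).ncard :=
        Finset.sum_le_sum fun r _ => hfloor r
      omega
    refine ⟨τs, hsτs, by omega, ?_⟩
    have hQtop : c * ((d - 1) * (h - 1 - (w.1 : ℕ)) + 1) = Qc + c * (d - 1) := by
      rw [hQc]
      have : h - 1 - (w.1 : ℕ) = ν + 1 := hν
      rw [this]
      ring
    rw [hQtop]
    have hFS : (F τs).card ≤ S.card := by
      apply Finset.card_le_card
      simp only [hF]
      exact Finset.filter_subset _ _
    omega

end Lower

end Stmt13Aux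

namespace Stmt13Aux

lemma lower_final {d h c : ℕ} (hd : 2 ≤ d) (hh : 1 ≤ h) (hc : 1 ≤ c)
    (P : BlackPebbling (GNode d h c) (gChild' d h c)) (hpeb : P.Pebbles none) :
    ∃ t ≤ P.T, c * ((d - 1) * (h - 1) + 1) ≤ (P.cfg t).ncard := by
  classical
  have hex : ∃ t, none ∈ P.cfg t ∧ t ≤ P.T := by
    obtain ⟨t, ht1, ht2⟩ := hpeb
    exact ⟨t, ht2, ht1⟩
  set tm := Nat.find hex with htm
  obtain ⟨htm_mem, htm_le⟩ := Nat.find_spec hex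
  rw [← htm] at htm_mem htm_le
  have htm1 : 1 ≤ tm := by
    rcases Nat.eq_zero_or_pos tm with h0 | h0
    · rw [h0] at htm_mem
      rw [P.start] at htm_mem
      exact absurd htm_mem (Set.notMem_empty _)
    · exact h0
  have hnotmem : none ∉ P.cfg (tm - 1) := by
    intro hmem
    exact Nat.find_min hex (show tm - 1 < tm by omega) ⟨hmem, by omega⟩
  have hstep := P.step (tm - 1) (by omega)
  rw [show tm - 1 + 1 = tm by omega] at hstep
  have hch := step_children_mem hstep htm_mem hnotmem
  set w0 : TreeNode d h := ⟨⟨0, by omega⟩, ⟨0, by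
    rw [pow_zero]; exact one_pos⟩⟩ with hw0
  have hpres : ∀ m : Fin c, (some (w0, m) : GNode d h c) ∈ P.cfg (tm - 1) := by
    intro m
    apply hch
    show ((w0.1 : ℕ) = 0)
    rfl
  have ht₀pos : 1 ≤ tm - 1 := by
    rcases Nat.eq_zero_or_pos (tm - 1) with h0 | h0
    · exfalso
      have := hpres ⟨0, hc⟩
      rw [h0, P.start] at this
      exact absurd this (Set.notMem_empty _)
    · exact h0
  obtain ⟨τ, hτ1, hτ2, hτ3⟩ := main_lower hd hc P (h - 1) w0 rfl Finset.univ 0 (tm - 1)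
    (by omega) (by omega) (fun m _ => hpres m)
    (by
      rw [P.start, Set.empty_inter, Set.ncard_empty]
      simpa using hc)
  refine ⟨τ, by omega, ?_⟩
  have hsub : (P.cfg τ ∩ Dset d h c w0).ncard ≤ (P.cfg τ).ncard :=
    Set.ncard_le_ncard Set.inter_subset_left (Set.toFinite _)
  have hcards : (Finset.univ : Finset (Fin c)).card = c := by simp
  rw [hcards] at hτ3
  have h00 : (w0.1 : ℕ) = 0 := rfl
  rw [h00] at hτ3
  simp only [Nat.sub_zero] at hτ3
  omega

end Stmt13Aux

namespace Stmt13Aux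

section RunMachinery

variable {V : Type} (child : V → V → Prop)

/-- A run of legal pebbling moves from `A` to `B`, all configurations satisfying `Inv`. -/
inductive Run (Inv : Set V → Prop) : Set V → Set V → Prop
  | refl (C : Set V) (h : Inv C) : Run Inv C C
  | tail {A B C : Set V} : Run Inv A B → BlackStep child B C → Inv C → Run Inv A C

variable {child}

lemma Run.inv_right {Inv : Set V → Prop} {A B : Set V} (h : Run child Inv A B) : Inv B := by
  cases h with
  | refl h => exact h
  | tail _ _ h => exact h

lemma Run.inv_left {Inv : Set V → Prop} {A B : Set V} (h : Run child Inv A B) : Inv A := by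
  induction h with
  | refl h => exact h
  | tail _ _ _ ih => exact ih

lemma Run.trans {Inv : Set V → Prop} {A B C : Set V} (h1 : Run child Inv A B)
    (h2 : Run child Inv B C) : Run child Inv A C := by
  induction h2 with
  | refl _ => exact h1
  | tail _ hs hI ih => exact Run.tail ih hs hI

lemma Run.mono {Inv Inv' : Set V → Prop} (hmono : ∀ C, Inv C → Inv' C) {A B : Set V}
    (h : Run child Inv A B) : Run child Inv' A B := by
  induction h with
  | refl hC => exact Run.refl _ (hmono _ hC)
  | tail _ hs hI ih => exact Run.tail ih hs (hmono _ hI)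

/-- placing pebbles on a finite set of leaves, one at a time -/
lemma run_place (X : Finset V) (C : Set V) (hX : ∀ x ∈ X, ∀ u, ¬ child u x) :
    Run child (fun D => C ⊆ D ∧ D ⊆ C ∪ ↑X) C (C ∪ ↑X) := by
  classical
  induction X using Finset.induction with
  | empty => simpa using Run.refl C (by simp)
  | @insert a X ha ih =>
    have hbase := (ih (fun x hx => hX x (Finset.mem_insert_of_mem hx))).mono
      (fun D hD => show C ⊆ D ∧ D ⊆ insert a (C ∪ ↑X) from
        ⟨hD.1, hD.2.trans (Set.subset_insert _ _)⟩)
    have hstep : BlackStep child (C ∪ ↑X) (insert a (C ∪ ↑X)) :=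
      Or.inl ⟨a, hX a (Finset.mem_insert_self a X), rfl⟩
    have hfin : Run child (fun D => C ⊆ D ∧ D ⊆ insert a (C ∪ ↑X)) C (insert a (C ∪ ↑X)) :=
      Run.tail hbase hstep
        ⟨(Set.subset_union_left).trans (Set.subset_insert _ _), subset_rfl⟩
    have heq : C ∪ ↑(insert a X) = insert a (C ∪ ↑X) := by
      rw [Finset.coe_insert, Set.union_insert]
    rw [heq]
    exact hfin

/-- removing a finite set of pebbles, one at a time -/
lemma run_remove (X : Finset V) (C : Set V) :
    Run child (fun D => D ⊆ C) C (C \ ↑X) := by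
  classical
  induction X using Finset.induction with
  | empty =>
    have heq : (C \ ↑(∅ : Finset V)) = C := by simp
    rw [heq]
    exact Run.refl C (fun y hy => hy)
  | @insert a X ha ih =>
    have hstep : BlackStep child (C \ ↑X) ((C \ ↑X) \ {a}) := Or.inr (Or.inl ⟨a, rfl⟩)
    have heq : C \ ↑(insert a X) = (C \ ↑X) \ {a} := by
      ext y; simp only [Finset.coe_insert, Set.mem_diff, Set.mem_insert_iff, Finset.mem_coe,
        Set.mem_singleton_iff]
      tauto
    rw [heq]
    exact Run.tail ih hstep (fun y hy => hy.1.1)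

/-- lifting a run by a disjoint ambient set of pebbles `E` -/
lemma run_lift (E Γ : Set V) (hdisj : ∀ x ∈ E, x ∉ Γ) {Inv : Set V → Prop} {A B : Set V}
    (hInv : ∀ C, Inv C → C ⊆ Γ) (hrun : Run child Inv A B) :
    Run child (fun D => ∃ C₀, Inv C₀ ∧ D = E ∪ C₀) (E ∪ A) (E ∪ B) := by
  induction hrun with
  | refl hC => exact Run.refl _ ⟨_, hC, rfl⟩
  | @tail B' C' hAB hs hI ih =>
    by_cases hEC : E ∪ C' = E ∪ B'
    · rw [hEC]; exact ih
    have hB'Γ : B' ⊆ Γ := hInv B' hAB.inv_right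
    refine Run.tail ih ?_ ⟨C', hI, rfl⟩
    rcases hs with ⟨v, hv, rfl⟩ | ⟨v, rfl⟩ | ⟨v, hv, hC' | ⟨u, hu, huB, hC'⟩⟩
    · refine Or.inl ⟨v, hv, ?_⟩
      rw [Set.union_insert]
    · refine Or.inr (Or.inl ⟨v, ?_⟩)
      by_cases hvB : v ∈ B'
      · have hvE : v ∉ E := fun hvE => hdisj v hvE (hB'Γ hvB)
        ext y
        simp only [Set.mem_union, Set.mem_diff, Set.mem_singleton_iff]
        constructor
        · rintro (hy | hy)
          · exact ⟨Or.inl hy, fun hyv => hvE (hyv ▸ hy)⟩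
          · exact ⟨Or.inr hy.1, hy.2⟩
        · rintro ⟨hy | hy, hyv⟩
          · exact Or.inl hy
          · exact Or.inr ⟨hy, hyv⟩
      · exfalso
        apply hEC
        rw [Set.diff_singleton_eq_self hvB]
    · subst hC'
      refine Or.inr (Or.inr ⟨v, fun u hu => Or.inr (hv u hu), Or.inl ?_⟩)
      rw [Set.union_insert]
    · subst hC'
      have huE : u ∉ E := fun huE => hdisj u huE (hB'Γ huB)
      refine Or.inr (Or.inr ⟨v, fun u' hu' => Or.inr (hv u' hu'), Or.inr
        ⟨u, hu, Or.inr huB, ?_⟩⟩)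
      ext y
      simp only [Set.mem_union, Set.mem_insert_iff, Set.mem_diff, Set.mem_singleton_iff]
      constructor
      · rintro (hy | (hy | ⟨hy, hyu⟩))
        · exact Or.inr ⟨Or.inl hy, fun hyu => huE (hyu ▸ hy)⟩
        · exact Or.inl hy
        · exact Or.inr ⟨Or.inr hy, hyu⟩
      · rintro (hy | ⟨hy | hy, hyu⟩)
        · exact Or.inr (Or.inl hy)
        · exact Or.inl hy
        · exact Or.inr (Or.inr ⟨hy, hyu⟩)

/-- converting a run into a list of configurations -/
lemma run_to_list {Inv : Set V → Prop} {A B : Set V} (hrun : Run child Inv A B) :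
    ∃ L : List (Set V), L ≠ [] ∧ L.head? = some A ∧ L.getLast? = some B ∧
      List.Chain' (BlackStep child) L ∧ ∀ C ∈ L, Inv C := by
  induction hrun with
  | refl hC => exact ⟨[_], by simp, rfl, rfl, List.isChain_singleton _, by simpa using hC⟩
  | @tail B' C' hAB hs hI ih =>
    obtain ⟨L, hne, hhead, hlast, hchain, hinv⟩ := ih
    refine ⟨L ++ [C'], by simp, ?_, ?_, ?_, ?_⟩
    · cases L with
      | nil => exact absurd rfl hne
      | cons a L' => simpa using hhead
    · simp
    · refine List.IsChain.append hchain (List.isChain_singleton C') ?_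
      intro x hx y hy
      rw [hlast] at hx
      simp only [Option.mem_def, Option.some.injEq] at hx
      simp only [List.head?_cons, Option.mem_def, Option.some.injEq] at hy
      subst hx; subst hy
      exact hs
    · intro C hC
      rcases List.mem_append.1 hC with hC | hC
      · exact hinv C hC
      · simp only [List.mem_singleton] at hC
        subst hC
        exact hI

end RunMachinery

end Stmt13Aux

namespace Stmt13Aux

section Upper

variable {d h c : ℕ}

/-- the set of the `c` copies of a tree node -/
def TopSet (d h c : ℕ) (w : TreeNode d h) : Set (GNode d h c) :=
  {y | ∃ m : Fin c, y = some (w, m)}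

lemma TopSet_subset_Dset (w : TreeNode d h) : TopSet d h c w ⊆ Dset d h c w := by
  rintro y ⟨m, rfl⟩
  exact copy_mem_Dset w m

lemma ncard_TopSet (w : TreeNode d h) : (TopSet d h c w).ncard = c := by
  have himg : TopSet d h c w = (fun m : Fin c => (some (w, m) : GNode d h c)) '' Set.univ := by
    ext y
    simp only [TopSet, Set.image_univ, Set.mem_setOf_eq, Set.mem_range]
    exact ⟨fun ⟨m, hm⟩ => ⟨m, hm.symm⟩, fun ⟨m, hm⟩ => ⟨m, hm.symm⟩⟩
  rw [himg, Set.ncard_image_of_injective _ (by intro a b hab; simpa using hab)]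
  simp [Set.ncard_univ]

lemma ncard_copies (x : TreeNode d h) (k : ℕ) (hk : k ≤ c) :
    ({y : GNode d h c | ∃ m : Fin c, (m : ℕ) < k ∧ y = some (x, m)}).ncard = k := by
  classical
  have himg : {y : GNode d h c | ∃ m : Fin c, (m : ℕ) < k ∧ y = some (x, m)} =
      (fun m : Fin c => (some (x, m) : GNode d h c)) '' {m : Fin c | (m : ℕ) < k} := by
    ext y
    simp only [Set.mem_setOf_eq, Set.mem_image]
    exact ⟨fun ⟨m, h1, h2⟩ => ⟨m, h1, h2.symm⟩, fun ⟨m, h1, h2⟩ => ⟨m, h1, h2.symm⟩⟩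
  rw [himg, Set.ncard_image_of_injective _ (by intro a b hab; simpa using hab)]
  have hset : {m : Fin c | (m : ℕ) < k} =
      ↑(Finset.univ.filter (fun m : Fin c => (m : ℕ) < k)) := by
    ext m; simp
  rw [hset, Set.ncard_coe_finset]
  rcases Nat.eq_or_lt_of_le hk with hkc | hkc
  · subst hkc
    rw [Finset.filter_true_of_mem (fun m _ => m.isLt)]
    simp
  · have : Finset.univ.filter (fun m : Fin c => (m : ℕ) < k) = Finset.Iio (⟨k, hkc⟩ : Fin c) := by
      ext m
      simp [Fin.lt_def]
    rw [this, Fin.card_Iio]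

/-- the recursive pebbling strategy for the subtree of `w` -/
lemma build (hd : 2 ≤ d) (hc : 1 ≤ c) (ν : ℕ) :
    ∀ w : TreeNode d h, h - 1 - (w.1 : ℕ) = ν →
    Run (gChild' d h c)
      (fun C => C ⊆ Dset d h c w ∧ C.ncard ≤ c * ((d - 1) * (h - 1 - (w.1 : ℕ)) + 1))
      ∅ (TopSet d h c w) := by
  classical
  induction ν with
  | zero =>
    intro w hν
    have hleaf : ∀ (m : Fin c) (u : GNode d h c), ¬ gChild' d h c u (some (w, m)) := by
      intro m u hu
      match u, hu with
      | none, hu => exact hu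
      | some u', hu =>
        have h1 := hu.1
        have h2 := u'.1.1.isLt
        have h3 := w.1.isLt
        simp only at h1
        omega
    set X : Finset (GNode d h c) := Finset.image (fun m : Fin c => some (w, m)) Finset.univ
      with hX
    have hXcoe : (↑X : Set (GNode d h c)) = TopSet d h c w := by
      ext y
      simp only [hX, Finset.coe_image, Finset.coe_univ, Set.image_univ, Set.mem_range, TopSet,
        Set.mem_setOf_eq]
      exact ⟨fun ⟨m, hm⟩ => ⟨m, hm.symm⟩, fun ⟨m, hm⟩ => ⟨m, hm.symm⟩⟩
    have hrun := run_place (child := gChild' d h c) X ∅ (fun x hx u => by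
      rw [hX, Finset.mem_image] at hx
      obtain ⟨m, -, rfl⟩ := hx
      exact hleaf m u)
    rw [Set.empty_union, hXcoe] at hrun
    apply hrun.mono
    intro C hC
    constructor
    · exact hC.2.trans (TopSet_subset_Dset w)
    · calc C.ncard ≤ (TopSet d h c w).ncard :=
            Set.ncard_le_ncard hC.2 (Set.toFinite _)
      _ = c := ncard_TopSet w
      _ ≤ c * ((d - 1) * (h - 1 - (w.1 : ℕ)) + 1) := Nat.le_mul_of_pos_right c (by omega)
  | succ ν ih =>
    intro w hν
    have hw : (w.1 : ℕ) + 1 < h := by omega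
    have hν' : ∀ r : Fin d, h - 1 - ((chd w hw r).1 : ℕ) = ν := by
      intro r; simp only [chd_fst]; omega
    set Qc := c * ((d - 1) * ν + 1) with hQc
    set Qd' := c * ((d - 1) * (ν + 1) + 1) with hQd'
    have hQeq : c * ((d - 1) * (h - 1 - (w.1 : ℕ)) + 1) = Qd' := by rw [hν]
    have hQsum : Qd' = Qc + c * (d - 1) := by rw [hQc, hQd']; ring
    have hcQc : c ≤ Qc := Nat.le_mul_of_pos_right c (by omega)
    have hdcQd : d * c ≤ Qd' := by
      have hd1 : (d - 1) + 1 = d := by omega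
      have hA : c * (d - 1) + c = c * d := by
        calc c * (d - 1) + c = c * ((d - 1) + 1) := by ring
          _ = c * d := by rw [hd1]
      have hB : d * c = c * d := Nat.mul_comm d c
      omega
    have hchildrun : ∀ r : Fin d,
        Run (gChild' d h c) (fun C => C ⊆ Dset d h c (chd w hw r) ∧ C.ncard ≤ Qc)
          ∅ (TopSet d h c (chd w hw r)) := by
      intro r
      apply (ih (chd w hw r) (hν' r)).mono
      intro C hC
      refine ⟨hC.1, ?_⟩
      have h2 := hC.2
      rw [hν' r] at h2
      exact h2
    set U : ℕ → Set (GNode d h c) := fun k =>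
      {y | ∃ r : Fin d, (r : ℕ) < k ∧ ∃ m : Fin c, y = some (chd w hw r, m)} with hU
    have hU0 : U 0 = ∅ := by
      ext y; simp [hU]
    have hUsub : ∀ k, U k ⊆ Dset d h c w := by
      rintro k y ⟨r, hr, m, rfl⟩
      exact Dset_chd_subset hd hw r (copy_mem_Dset _ m)
    have hUsucc : ∀ k (hkd : k < d),
        U (k + 1) = U k ∪ TopSet d h c (chd w hw ⟨k, hkd⟩) := by
      intro k hkd
      ext y
      simp only [hU, Set.mem_setOf_eq, Set.mem_union, TopSet]
      constructor
      · rintro ⟨r, hr, m, rfl⟩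
        rcases Nat.lt_or_ge (r : ℕ) k with hlt | hge
        · exact Or.inl ⟨r, hlt, m, rfl⟩
        · have : r = ⟨k, hkd⟩ := Fin.ext (show (r : ℕ) = k by omega)
          subst this
          exact Or.inr ⟨m, rfl⟩
      · rintro (⟨r, hr, m, rfl⟩ | ⟨m, rfl⟩)
        · exact ⟨r, by omega, m, rfl⟩
        · exact ⟨⟨k, hkd⟩, by simp, m, rfl⟩
    -- the main loop over the children
    have loop : ∀ k, k ≤ d → (U k).ncard ≤ k * c ∧
        Run (gChild' d h c) (fun C => C ⊆ Dset d h c w ∧ C.ncard ≤ Qd') ∅ (U k) := by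
      intro k
      induction k with
      | zero =>
        intro _
        constructor
        · rw [hU0]; simp
        · rw [hU0]
          exact Run.refl ∅ ⟨Set.empty_subset _, by simp⟩
      | succ k ihk =>
        intro hk1
        have hkd : k < d := by omega
        obtain ⟨hcard, hrun⟩ := ihk (by omega)
        set rk : Fin d := ⟨k, hkd⟩ with hrk
        have hrkval : (rk : ℕ) = k := rfl
        have hdisj : ∀ x ∈ U k, x ∉ Dset d h c (chd w hw rk) := by
          rintro x ⟨r, hr, m, rfl⟩ hmem
          have hrne : r ≠ rk := by
            intro e
            rw [e] at hr
            omega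
          exact (Set.disjoint_left.1 (Dset_chd_disjoint hd hw hrne)) (copy_mem_Dset _ m) hmem
        have hlift := run_lift (U k) (Dset d h c (chd w hw rk)) hdisj
          (fun C hC => hC.1) (hchildrun rk)
        rw [Set.union_empty, ← hUsucc k hkd] at hlift
        have hcard1 : (U (k + 1)).ncard ≤ (k + 1) * c := by
          rw [hUsucc k hkd]
          calc (U k ∪ TopSet d h c (chd w hw ⟨k, hkd⟩)).ncard
              ≤ (U k).ncard + (TopSet d h c (chd w hw ⟨k, hkd⟩)).ncard :=
                Set.ncard_union_le _ _
            _ ≤ k * c + c := by rw [ncard_TopSet]; omega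
            _ = (k + 1) * c := by ring
        refine ⟨hcard1, hrun.trans (hlift.mono ?_)⟩
        rintro C ⟨C₀, hC₀, rfl⟩
        constructor
        · exact Set.union_subset (hUsub k) (hC₀.1.trans (Dset_chd_subset hd hw rk))
        · have h1 : (U k ∪ C₀).ncard ≤ (U k).ncard + C₀.ncard := Set.ncard_union_le _ _
          have h2 : k * c ≤ (d - 1) * c := Nat.mul_le_mul_right c (by omega)
          have h3 := hC₀.2
          have hcomm : (d - 1) * c = c * (d - 1) := Nat.mul_comm _ _
          omega
    obtain ⟨hUdcard, hrunUd⟩ := loop d (le_refl d)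
    have hUdc : (U d).ncard ≤ d * c := hUdcard
    -- the slide phase
    have hzd : (0 : ℕ) < d := by omega
    set r0 : Fin d := ⟨0, hzd⟩ with hr0
    have hr0val : (r0 : ℕ) = 0 := rfl
    set Rem : ℕ → Set (GNode d h c) := fun i =>
      {y | ∃ m : Fin c, (m : ℕ) < i ∧ y = some (chd w hw r0, m)} with hRem
    set Add : ℕ → Set (GNode d h c) := fun i =>
      {y | ∃ m : Fin c, (m : ℕ) < i ∧ y = some (w, m)} with hAdd
    set Sl : ℕ → Set (GNode d h c) := fun i => (U d \ Rem i) ∪ Add i with hSl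
    have hSl0 : Sl 0 = U d := by
      ext y
      simp [hSl, hRem, hAdd]
    have hRemsub : ∀ i, Rem i ⊆ U d := by
      rintro i y ⟨m, hm, rfl⟩
      exact ⟨r0, by rw [hr0]; simpa using hzd, m, rfl⟩
    have hSlsub : ∀ i, Sl i ⊆ Dset d h c w := by
      rintro i y (⟨hy, -⟩ | ⟨m, -, rfl⟩)
      · exact hUsub d hy
      · exact copy_mem_Dset w m
    have hSlcard : ∀ i, i ≤ c → (Sl i).ncard ≤ d * c := by
      intro i hic
      have h1 : (Sl i).ncard ≤ (U d \ Rem i).ncard + (Add i).ncard := Set.ncard_union_le _ _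
      have h2 : (Add i).ncard = i := ncard_copies w i hic
      have h3 : (U d \ Rem i).ncard = (U d).ncard - (Rem i).ncard :=
        Set.ncard_diff (hRemsub i) (Set.toFinite _)
      have h4 : (Rem i).ncard = i := ncard_copies _ i hic
      have h5 : c ≤ d * c := Nat.le_mul_of_pos_left c hzd
      omega
    have slloop : ∀ i, i ≤ c →
        Run (gChild' d h c) (fun C => C ⊆ Dset d h c w ∧ C.ncard ≤ Qd') (U d) (Sl i) := by
      intro i
      induction i with
      | zero =>
        intro _
        rw [hSl0]
        exact Run.refl _ ⟨hUsub d, le_trans hUdc hdcQd⟩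
      | succ i ihi =>
        intro hic
        have hi : i < c := by omega
        have hrun := ihi (by omega)
        set mi : Fin c := ⟨i, hi⟩ with hmi
        have hmival : (mi : ℕ) = i := rfl
        have hmem_Ud : (some (chd w hw r0, mi) : GNode d h c) ∈ U d := by
          exact ⟨r0, by rw [hr0]; simpa using hzd, mi, rfl⟩
        have hnotRem : ∀ (m : Fin c), (i : ℕ) ≤ (m : ℕ) →
            (some (chd w hw r0, m) : GNode d h c) ∉ Rem i := by
          rintro m him ⟨m', hm', he⟩
          simp only [Option.some.injEq, Prod.mk.injEq] at he
          obtain ⟨-, rfl⟩ := he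
          omega
        have hch : ∀ u, gChild' d h c u (some (w, mi)) → u ∈ Sl i := by
          intro u hu
          rw [gChild_some_iff hd hw] at hu
          obtain ⟨r, m, rfl, hlo, hhi⟩ := hu
          left
          refine ⟨⟨r, r.isLt, m, rfl⟩, ?_⟩
          rintro ⟨m', hm', he⟩
          simp only [Option.some.injEq, Prod.mk.injEq] at he
          obtain ⟨hre1, rfl⟩ := he
          have hrval : (r : ℕ) = 0 := by
            have h5 := congrArg (fun t : TreeNode d h => (t.2 : ℕ)) hre1
            simp only [chd_snd] at h5
            omega
          rw [hrval] at hlo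
          simp only [Nat.zero_mul, Nat.zero_add] at hlo
          omega
        have hrel : gChild' d h c (some (chd w hw r0, mi)) (some (w, mi)) := by
          rw [gChild_some_iff hd hw]
          refine ⟨r0, mi, rfl, ?_, ?_⟩
          · rw [hr0]; simp
          · rw [hr0]; simp
        have hmem : (some (chd w hw r0, mi) : GNode d h c) ∈ Sl i :=
          Or.inl ⟨hmem_Ud, hnotRem mi (le_refl _)⟩
        have hne_wc : ∀ (m m' : Fin c), (some (w, m) : GNode d h c) ≠ some (chd w hw r0, m') := by
          intro m m' he
          simp only [Option.some.injEq, Prod.mk.injEq] at he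
          have h5 := congrArg (fun t : TreeNode d h => (t.1 : ℕ)) he.1
          simp only [chd_fst] at h5
          omega
        have heq : Sl (i + 1) = insert (some (w, mi) : GNode d h c)
            (Sl i \ {some (chd w hw r0, mi)}) := by
          ext y
          simp only [hSl, hRem, hAdd, Set.mem_union, Set.mem_diff, Set.mem_setOf_eq,
            Set.mem_insert_iff, Set.mem_singleton_iff]
          constructor
          · rintro (⟨hyU, hyR⟩ | ⟨m, hm, rfl⟩)
            · refine Or.inr ⟨Or.inl ⟨hyU, ?_⟩, ?_⟩
              · rintro ⟨m', hm', rfl⟩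
                exact hyR ⟨m', by omega, rfl⟩
              · rintro rfl
                exact hyR ⟨mi, by omega, rfl⟩
            · rcases Nat.lt_or_ge (m : ℕ) i with hmi' | hmi'
              · exact Or.inr ⟨Or.inr ⟨m, hmi', rfl⟩, hne_wc m mi⟩
              · have : m = mi := Fin.ext (show (m : ℕ) = (mi : ℕ) by omega)
                subst this
                exact Or.inl rfl
          · rintro (rfl | ⟨hyL | ⟨m, hm, rfl⟩, hyne⟩)
            · exact Or.inr ⟨mi, by omega, rfl⟩
            · obtain ⟨hyU, hyR⟩ := hyL
              refine Or.inl ⟨hyU, ?_⟩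
              rintro ⟨m', hm', rfl⟩
              rcases Nat.lt_or_ge (m' : ℕ) i with h' | h'
              · exact hyR ⟨m', h', rfl⟩
              · have : m' = mi := Fin.ext (show (m' : ℕ) = (mi : ℕ) by omega)
                subst this
                exact hyne rfl
            · exact Or.inr ⟨m, by omega, rfl⟩
        have hstep : BlackStep (gChild' d h c) (Sl i) (Sl (i + 1)) := by
          refine Or.inr (Or.inr ⟨some (w, mi), hch, Or.inr
            ⟨some (chd w hw r0, mi), hrel, hmem, heq⟩⟩)
        exact Run.tail hrun hstep ⟨hSlsub (i + 1), le_trans (hSlcard (i + 1) hic) hdcQd⟩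
    -- the final removal phase
    set X : Finset (GNode d h c) :=
      Finset.image (fun q : Fin d × Fin c => some (chd w hw q.1, q.2)) Finset.univ with hXX
    have hXcoe : (↑X : Set (GNode d h c)) = U d := by
      ext y
      simp only [hXX, Finset.coe_image, Finset.coe_univ, Set.image_univ, Set.mem_range, hU,
        Set.mem_setOf_eq]
      constructor
      · rintro ⟨⟨r, m⟩, rfl⟩
        exact ⟨r, r.isLt, m, rfl⟩
      · rintro ⟨r, -, m, rfl⟩
        exact ⟨(r, m), rfl⟩
    have hSlc : Sl c \ ↑X = TopSet d h c w := by
      rw [hXcoe]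
      ext y
      simp only [hSl, hRem, hAdd, Set.mem_diff, Set.mem_union, Set.mem_setOf_eq, TopSet]
      constructor
      · rintro ⟨⟨hyU, -⟩ | ⟨m, -, rfl⟩, hyn⟩
        · exact absurd hyU hyn
        · exact ⟨m, rfl⟩
      · rintro ⟨m, rfl⟩
        refine ⟨Or.inr ⟨m, m.isLt, rfl⟩, ?_⟩
        rintro ⟨r, -, m', he⟩
        simp only [Option.some.injEq, Prod.mk.injEq] at he
        have h5 := congrArg (fun t : TreeNode d h => (t.1 : ℕ)) he.1
        simp only [chd_fst] at h5
        omega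
    have hremove := run_remove (child := gChild' d h c) X (Sl c)
    rw [hSlc] at hremove
    have htot : Run (gChild' d h c) (fun C => C ⊆ Dset d h c w ∧ C.ncard ≤ Qd') ∅
        (TopSet d h c w) := by
      refine (hrunUd.trans (slloop c (le_refl c))).trans (hremove.mono ?_)
      intro D hD
      refine ⟨hD.trans (hSlsub c), ?_⟩
      calc D.ncard ≤ (Sl c).ncard := Set.ncard_le_ncard hD (Set.toFinite _)
        _ ≤ d * c := hSlcard c (le_refl c)
        _ ≤ Qd' := hdcQd
    apply htot.mono
    intro C hC
    refine ⟨hC.1, ?_⟩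
    rw [hQeq]
    exact hC.2

end Upper

end Stmt13Aux

namespace Stmt13Aux

lemma upper_final {d h c : ℕ} (hd : 2 ≤ d) (hh : 1 ≤ h) (hc : 1 ≤ c) :
    ∃ P : BlackPebbling (GNode d h c) (gChild' d h c),
      P.Pebbles none ∧ P.cfg P.T = ∅ ∧ P.CostLE (c * ((d - 1) * (h - 1) + 1)) := by
  classical
  set Q := c * ((d - 1) * (h - 1) + 1) with hQ
  have hcQ : c ≤ Q := Nat.le_mul_of_pos_right c (by omega)
  set w0 : TreeNode d h := ⟨⟨0, by omega⟩, ⟨0, by rw [pow_zero]; exact one_pos⟩⟩ with hw0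
  have hw0fst : ((w0.1 : ℕ)) = 0 := rfl
  have hbuild := build hd hc (h - 1) w0 (by rw [hw0fst]; omega)
  have hrun1 : Run (gChild' d h c) (fun C => C.ncard ≤ Q) ∅ (TopSet d h c w0) := by
    apply hbuild.mono
    intro C hC
    have h2 := hC.2
    simp only [hw0fst, Nat.sub_zero] at h2
    exact h2
  set m0 : Fin c := ⟨0, hc⟩ with hm0
  set Cmid : Set (GNode d h c) :=
    insert none (TopSet d h c w0 \ {some (w0, m0)}) with hCmid
  have hrootch : ∀ u, gChild' d h c u (none : GNode d h c) → u ∈ TopSet d h c w0 := by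
    intro u hu
    match u, hu with
    | some x, hu =>
      have hx : x.1 = w0 := by
        apply tn_ext
        · exact hu
        · have h3 : (x.1.2 : ℕ) < 1 := by
            calc (x.1.2 : ℕ) < d ^ ((x.1.1 : ℕ)) := x.1.2.isLt
              _ = 1 := by rw [hu, pow_zero]
          have hw0snd : ((w0.2 : ℕ)) = 0 := rfl
          omega
      refine ⟨x.2, ?_⟩
      have : x = (x.1, x.2) := rfl
      rw [this, hx]
  have hstep2 : BlackStep (gChild' d h c) (TopSet d h c w0) Cmid := by
    refine Or.inr (Or.inr ⟨none, hrootch, Or.inr ⟨some (w0, m0), ?_, ⟨m0, rfl⟩, rfl⟩⟩)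
    show ((w0.1 : ℕ) = 0)
    rfl
  have hCmidcard : Cmid.ncard ≤ c := by
    have h1 : Cmid.ncard ≤ (TopSet d h c w0 \ {some (w0, m0)}).ncard + 1 :=
      Set.ncard_insert_le _ _
    have h2 : (TopSet d h c w0 \ {some (w0, m0)}).ncard =
        (TopSet d h c w0).ncard - 1 :=
      Set.ncard_diff_singleton_of_mem (s := TopSet d h c w0) ⟨m0, rfl⟩
    rw [ncard_TopSet] at h2
    omega
  have hrun2 : Run (gChild' d h c) (fun C => C.ncard ≤ Q) ∅ Cmid :=
    Run.tail hrun1 hstep2 (le_trans hCmidcard hcQ)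
  have hrun3 : Run (gChild' d h c) (fun C => C.ncard ≤ Q) Cmid ∅ := by
    have hrem := run_remove (child := gChild' d h c) (Finset.univ : Finset (GNode d h c)) Cmid
    have hempty : Cmid \ ↑(Finset.univ : Finset (GNode d h c)) = ∅ := by
      simp
    rw [hempty] at hrem
    exact hrem.mono (fun D hD =>
      le_trans (le_trans (Set.ncard_le_ncard hD (Set.toFinite _)) hCmidcard) hcQ)
  obtain ⟨L₁, hne1, hh1, hl1, hc1, hi1⟩ := run_to_list hrun2
  obtain ⟨L₂, hne2, hh2, hl2, hc2, hi2⟩ := run_to_list hrun3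
  obtain ⟨L, hL⟩ : ∃ L : List (Set (GNode d h c)), L = L₁ ++ L₂.tail := ⟨_, rfl⟩
  have hneL : L ≠ [] := by
    rw [hL]
    intro he
    exact hne1 (List.append_eq_nil_iff.1 he).1
  have hheadL : L.head? = some ∅ := by
    rw [hL]
    cases L₁ with
    | nil => exact absurd rfl hne1
    | cons a t => simpa using hh1
  -- L₂ = Cmid :: L₂.tail
  have hL₂cons : L₂ = Cmid :: L₂.tail := by
    cases L₂ with
    | nil => exact absurd rfl hne2
    | cons b t =>
      simp only [List.head?_cons, Option.some.injEq] at hh2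
      rw [hh2]
      rfl
  have hlastL : L.getLast? = some ∅ := by
    rw [hL]
    cases htt : L₂.tail with
    | nil =>
      have : L₂ = [Cmid] := by rw [hL₂cons, htt]
      rw [this] at hl2
      simp only [List.getLast?_singleton, Option.some.injEq] at hl2
      simp only [List.append_nil]
      rw [hl1, hl2]
    | cons y t' =>
      rw [List.getLast?_append_of_ne_nil _ (by simp)]
      rw [← htt]
      have : L₂.tail.getLast? = L₂.getLast? := by
        rw [hL₂cons, htt]
        simp [List.getLast?_cons_cons]
      rw [this, hl2]
  have hchainL : List.Chain' (BlackStep (gChild' d h c)) L := by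
    rw [hL]
    refine List.IsChain.append hc1 (hc2.tail) ?_
    intro x hx y hy
    rw [hl1] at hx
    simp only [Option.mem_def, Option.some.injEq] at hx
    subst hx
    cases htt : L₂.tail with
    | nil => rw [htt] at hy; simp at hy
    | cons z t' =>
      rw [htt] at hy
      simp only [List.head?_cons, Option.mem_def, Option.some.injEq] at hy
      subst hy
      have hch2 : List.Chain' (BlackStep (gChild' d h c)) (Cmid :: z :: t') := by
        rw [← htt, ← hL₂cons]
        exact hc2
      exact (List.isChain_cons_cons.1 hch2).1
  have hmemL : ∀ C ∈ L, C.ncard ≤ Q := by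
    intro C hC
    rw [hL] at hC
    rcases List.mem_append.1 hC with hC | hC
    · exact hi1 C hC
    · refine hi2 C ?_
      rw [hL₂cons]
      exact List.mem_cons_of_mem _ hC
  have hCmidL : Cmid ∈ L := by
    rw [hL]
    refine List.mem_append.2 (Or.inl ?_)
    have := List.getLast?_eq_getLast_of_ne_nil hne1
    rw [this] at hl1
    simp only [Option.some.injEq] at hl1
    rw [← hl1]
    exact List.getLast_mem hne1
  -- build the pebbling
  have hlen : 1 ≤ L.length := by
    cases L with
    | nil => exact absurd rfl hneL
    | cons a t => simp
  refine ⟨⟨L.length - 1, fun t => L.getD t ∅, ?_, ?_⟩, ?_, ?_, ?_⟩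
  · -- start
    show L.getD 0 ∅ = ∅
    cases L with
    | nil => exact absurd rfl hneL
    | cons a t =>
      simp only [List.head?_cons, Option.some.injEq] at hheadL
      simpa using hheadL
  · -- steps
    intro t ht
    show BlackStep (gChild' d h c) (L.getD t ∅) (L.getD (t + 1) ∅)
    have h1 : t < L.length := by omega
    have h2 : t + 1 < L.length := by omega
    rw [List.getD_eq_getElem L ∅ h1, List.getD_eq_getElem L ∅ h2]
    have := List.isChain_iff_getElem.1 hchainL t (by omega)
    simpa [List.get_eq_getElem] using this
  · -- pebbles none
    obtain ⟨i, hi, hgi⟩ := List.mem_iff_getElem.1 hCmidL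
    refine ⟨i, ?_, ?_⟩
    · show i ≤ L.length - 1
      omega
    show none ∈ L.getD i ∅
    rw [List.getD_eq_getElem L ∅ hi, hgi]
    exact Set.mem_insert _ _
  · -- final configuration is empty
    show L.getD (L.length - 1) ∅ = ∅
    rw [List.getD_eq_getElem L ∅ (by omega)]
    have := List.getLast?_eq_getLast_of_ne_nil hneL
    rw [this] at hlastL
    simp only [Option.some.injEq] at hlastL
    rw [← hlastL]
    exact (List.getLast_eq_getElem hneL).symm
  · -- cost
    intro t ht
    have ht' : t ≤ L.length - 1 := ht
    have h1 : t < L.length := by omega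
    show (L.getD t ∅).ncard ≤ Q
    rw [List.getD_eq_getElem L ∅ h1]
    exact hmemL _ (List.getElem_mem h1)

end Stmt13Aux

/-- For all `d ≥ 2`, `h ≥ 1` and `c ≥ 1`, the black pebbling cost of
`G'_{d,h}` — the goal being to place a pebble on the new root, starting and finishing
from the empty configuration — is exactly `c((d-1)(h-1) + 1)`: there is such a pebbling
using at most `c((d-1)(h-1)+1)` pebbles, and every such pebbling has a configuration with
at least `c((d-1)(h-1)+1)` pebbles. -/
theorem stmt_13 (d h c : ℕ) (hd : 2 ≤ d) (hh : 1 ≤ h) (hc : 1 ≤ c) :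
    (∃ P : BlackPebbling (GNode d h c) (gChild' d h c),
      P.Pebbles none ∧ P.cfg P.T = ∅ ∧ P.CostLE (c * ((d - 1) * (h - 1) + 1))) ∧
    (∀ P : BlackPebbling (GNode d h c) (gChild' d h c),
      P.Pebbles none → P.cfg P.T = ∅ →
      ∃ t ≤ P.T, c * ((d - 1) * (h - 1) + 1) ≤ (P.cfg t).ncard) := by
  constructor
  · exact Stmt13Aux.upper_final hd hh hc
  · intro P hpeb _
    exact Stmt13Aux.lower_final hd hh hc P hpeb
end

section
/- For all d ≥ 2, h ≥ 1, c ≥ 1 and every level l with 1 ≤ l ≤ h, and every node u of G'_{d,h} of height l, the black pebbling cost of placing a pebble on u (starting from the empty configuration) is exactly c(d−1)(l−1) + 1. In particular, any two nodes of G'_{d,h} that are children of a common node have equal black pebbling cost. -/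
namespace Stmt14

variable {d h c : ℕ}

/-- Extensionality for copy nodes via ℕ data. -/
lemma copy_ext {v w : CopyNode d h c} (h1 : (v.1.1 : ℕ) = (w.1.1 : ℕ))
    (h2 : (v.1.2 : ℕ) = (w.1.2 : ℕ)) (h3 : (v.2 : ℕ) = (w.2 : ℕ)) : v = w := by
  obtain ⟨⟨⟨l1, hl1⟩, ⟨m1, hm1⟩⟩, ⟨i1, hi1⟩⟩ := v
  obtain ⟨⟨⟨l2, hl2⟩, ⟨m2, hm2⟩⟩, ⟨i2, hi2⟩⟩ := w
  simp only [Fin.val_mk] at h1 h2 h3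
  subst h1; subst h2; subst h3
  rfl

/-- Build a copy node from ℕ data. -/
def mkNode (d h c : ℕ) (k n j : ℕ) (hk : k < h) (hn : n < d ^ k) (hj : j < c) :
    CopyNode d h c := ⟨⟨⟨k, hk⟩, ⟨n, hn⟩⟩, ⟨j, hj⟩⟩

@[simp] lemma mkNode_depth (k n j : ℕ) (hk hn hj) :
    (((mkNode d h c k n j hk hn hj).1.1 : ℕ)) = k := rfl
@[simp] lemma mkNode_idx (k n j : ℕ) (hk hn hj) :
    (((mkNode d h c k n j hk hn hj).1.2 : ℕ)) = n := rfl
@[simp] lemma mkNode_copy (k n j : ℕ) (hk hn hj) :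
    (((mkNode d h c k n j hk hn hj).2 : ℕ)) = j := rfl

/-- The "territory" of a copy node: itself together with all copies of strict tree
descendants, restricted on the left and right spines by the copy index. -/
def Sset (d h c : ℕ) (x : CopyNode d h c) : Set (GNode d h c) :=
  { w | ∃ y : CopyNode d h c, w = some y ∧
      (y = x ∨ ∃ kk, 0 < kk ∧ (y.1.1 : ℕ) = (x.1.1 : ℕ) + kk ∧
        (y.1.2 : ℕ) / d ^ kk = (x.1.2 : ℕ) ∧
        ((y.1.2 : ℕ) % d ^ kk = 0 → (x.2 : ℕ) ≤ (y.2 : ℕ)) ∧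
        ((y.1.2 : ℕ) % d ^ kk = d ^ kk - 1 → (y.2 : ℕ) ≤ (x.2 : ℕ))) }

lemma self_mem_Sset (x : CopyNode d h c) : some x ∈ Sset d h c x :=
  ⟨x, rfl, Or.inl rfl⟩

lemma depth_lt_of_mem_Sset {x y : CopyNode d h c} (hy : some y ∈ Sset d h c x)
    (hne : y ≠ x) : (x.1.1 : ℕ) < (y.1.1 : ℕ) := by
  obtain ⟨y', hy', hcase⟩ := hy
  obtain rfl : y' = y := by injection hy'.symm
  rcases hcase with rfl | ⟨kk, hkk, hdep, -⟩
  · exact absurd rfl hne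
  · omega

/-- copies of tree descendants with the same copy index lie in the territory. -/
lemma const_copy_mem_Sset {x y : CopyNode d h c} (hk : ∃ kk, 0 < kk ∧
    (y.1.1 : ℕ) = (x.1.1 : ℕ) + kk ∧ (y.1.2 : ℕ) / d ^ kk = (x.1.2 : ℕ))
    (hj : (y.2 : ℕ) = (x.2 : ℕ)) : some y ∈ Sset d h c x := by
  obtain ⟨kk, h1, h2, h3⟩ := hk
  exact ⟨y, rfl, Or.inr ⟨kk, h1, h2, h3, fun _ => hj.ge, fun _ => hj.le⟩⟩

end Stmt14
namespace Stmt14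

variable {d h c : ℕ}

lemma mod_mul_eq_zero {a e f : ℕ} (he : 0 < e) (hmod : a % (e * f) = 0) :
    a % e = 0 ∧ (a / e) % f = 0 := by
  obtain ⟨q, rfl⟩ := Nat.dvd_of_mod_eq_zero hmod
  rw [mul_assoc]
  refine ⟨Nat.mul_mod_right _ _, ?_⟩
  rw [Nat.mul_div_cancel_left _ he, mul_comm f q, Nat.mul_mod_left]

lemma mod_mul_eq_last {a e f : ℕ} (he : 0 < e) (hf : 0 < f)
    (hmod : a % (e * f) = e * f - 1) : a % e = e - 1 ∧ (a / e) % f = f - 1 := by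
  have hkey : e * f - 1 = e * (f - 1) + (e - 1) := by
    have h1 : e * f = e * (f - 1) + e := by
      rw [← Nat.mul_succ]; congr 1; omega
    omega
  have hda : a = e * f * (a / (e * f)) + (e * f - 1) := by
    conv_lhs => rw [← Nat.div_add_mod a (e * f)]
    rw [hmod]
  set q := a / (e * f) with hq
  have ha : a = e * (f * q + (f - 1)) + (e - 1) := by
    rw [hda, hkey]; ring
  constructor
  · rw [ha, Nat.mul_add_mod, Nat.mod_eq_of_lt (by omega)]
  · have hdiv : a / e = f * q + (f - 1) := by
      rw [ha, Nat.mul_add_div he, Nat.div_eq_of_lt (by omega), add_zero]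
    rw [hdiv, Nat.mul_add_mod, Nat.mod_eq_of_lt (by omega)]


/-- The territory is monotone along the child relation. -/
lemma Sset_child_subset (hd : 2 ≤ d) {u v : CopyNode d h c}
    (huv : gChild' d h c (some u) (some v)) : Sset d h c u ⊆ Sset d h c v := by
  have hd0 : 0 < d := by omega
  obtain ⟨hdep, hdiv, hw1, hw2⟩ := huv
  have hself : some u ∈ Sset d h c v := by
    refine ⟨u, rfl, Or.inr ⟨1, one_pos, by omega, by rw [pow_one]; exact hdiv, ?_, ?_⟩⟩
    · intro h0
      rw [pow_one] at h0
      rw [h0, zero_mul, zero_add] at hw1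
      exact hw1
    · intro h0
      rw [pow_one] at h0
      rw [h0] at hw2
      exact (Nat.add_le_add_iff_left).mp hw2
  intro w hw
  obtain ⟨y, rfl, hcase⟩ := hw
  rcases hcase with rfl | ⟨kk, hkk0, hdep', hdiv', hleft, hright⟩
  · exact hself
  · obtain ⟨u', hu', hc'⟩ := hself
    obtain rfl : u' = u := by injection hu'.symm
    refine ⟨y, rfl, Or.inr ⟨kk + 1, by omega, by omega, ?_, ?_, ?_⟩⟩
    · rw [pow_succ, ← Nat.div_div_eq_div_mul, hdiv', hdiv]
    · intro h0
      rw [pow_succ] at h0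
      obtain ⟨h1, h2⟩ := mod_mul_eq_zero (pow_pos hd0 kk) h0
      rw [hdiv'] at h2
      rw [h2, zero_mul, zero_add] at hw1
      exact le_trans hw1 (hleft h1)
    · intro h0
      rw [pow_succ] at h0
      obtain ⟨h1, h2⟩ := mod_mul_eq_last (pow_pos hd0 kk) hd0 h0
      rw [hdiv'] at h2
      rw [h2] at hw2
      exact le_trans (hright h1) ((Nat.add_le_add_iff_left).mp hw2)

lemma not_mem_Sset_of_same_depth {x y : CopyNode d h c} (hne : y ≠ x)
    (hdep : (y.1.1 : ℕ) = (x.1.1 : ℕ)) : some y ∉ Sset d h c x := fun hmem =>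
  absurd hdep (by have := depth_lt_of_mem_Sset hmem hne; omega)

end Stmt14
namespace Stmt14

variable {d h c : ℕ}

lemma gChild'_none_left {v : GNode d h c} : ¬ gChild' d h c none v := by
  cases v <;> exact fun hh => hh

lemma no_child_of_bottom {v : CopyNode d h c} (hv : (v.1.1 : ℕ) + 1 = h) :
    ∀ u, ¬ gChild' d h c u (some v) := by
  intro u hu
  match u with
  | none => exact hu
  | some u =>
      have h1 := hu.1
      have h2 := u.1.1.isLt
      omega

lemma sub_one_mul_add (hd0 : 0 < d) : (d - 1) * c + c = d * c := by
  have h' : d - 1 + 1 = d := by omega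
  calc (d - 1) * c + c = (d - 1 + 1) * c := by ring
  _ = d * c := by rw [h']

lemma div_c_lt (hd0 : 0 < d) (hc0 : 0 < c) {q j : ℕ} (hj : j < c)
    (hq : q ≤ (d - 1) * c + j) : q / c < d := by
  apply Nat.div_lt_of_lt_mul
  have hdc := sub_one_mul_add (c := c) hd0
  rw [mul_comm]
  omega

/-- Construct the child of `v` at window position `q` (as `gChild'` membership data). -/
lemma child_from_q (hd0 : 0 < d) (hc0 : 0 < c) {v y : CopyNode d h c} {q : ℕ}
    (hq1 : (v.2 : ℕ) ≤ q) (hq2 : q ≤ (d - 1) * c + (v.2 : ℕ))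
    (h1 : (y.1.1 : ℕ) = (v.1.1 : ℕ) + 1) (h2 : (y.1.2 : ℕ) = (v.1.2 : ℕ) * d + q / c)
    (h3 : (y.2 : ℕ) = q % c) : gChild' d h c (some y) (some v) := by
  have hqd : q / c < d := div_c_lt hd0 hc0 v.2.isLt hq2
  have hdivd : (y.1.2 : ℕ) / d = (v.1.2 : ℕ) := by
    rw [h2, mul_comm (v.1.2 : ℕ) d, Nat.mul_add_div hd0, Nat.div_eq_of_lt hqd, add_zero]
  have hmodd : (y.1.2 : ℕ) % d = q / c := by
    rw [h2, mul_comm (v.1.2 : ℕ) d, Nat.mul_add_mod, Nat.mod_eq_of_lt hqd]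
  have hsplit : q / c * c + q % c = q := by
    rw [mul_comm]; exact Nat.div_add_mod q c
  exact ⟨h1, hdivd, by rw [hmodd, h3, hsplit]; exact hq1, by rw [hmodd, h3, hsplit]; exact hq2⟩

/-- Every child of `v` arises from a window position `q`. -/
lemma child_to_q (hd0 : 0 < d) (hc0 : 0 < c) {u v : CopyNode d h c}
    (hch : gChild' d h c (some u) (some v)) :
    ∃ q, (v.2 : ℕ) ≤ q ∧ q ≤ (d - 1) * c + (v.2 : ℕ) ∧ (u.1.1 : ℕ) = (v.1.1 : ℕ) + 1 ∧
      (u.1.2 : ℕ) = (v.1.2 : ℕ) * d + q / c ∧ (u.2 : ℕ) = q % c := by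
  obtain ⟨h1, h2, h3, h4⟩ := hch
  refine ⟨(u.1.2 : ℕ) % d * c + (u.2 : ℕ), h3, h4, h1, ?_, ?_⟩
  · have hq : ((u.1.2 : ℕ) % d * c + (u.2 : ℕ)) / c = (u.1.2 : ℕ) % d := by
      rw [mul_comm _ c, Nat.mul_add_div hc0, Nat.div_eq_of_lt u.2.isLt, add_zero]
    rw [hq, ← h2, mul_comm]
    exact (Nat.div_add_mod (u.1.2 : ℕ) d).symm
  · rw [mul_comm _ c, Nat.mul_add_mod, Nat.mod_eq_of_lt u.2.isLt]

/-- Existence of the node on a spine path: depth `v+1+t`, index `(v*d + q/c)*d^t + e`,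
copy `q % c`. -/
lemma exists_pathNode (hd0 : 0 < d) (hc0 : 0 < c) (v : CopyNode d h c) {q t e : ℕ}
    (he : e < d ^ t) (ht : (v.1.1 : ℕ) + 1 + t < h) (hq : q ≤ (d - 1) * c + (v.2 : ℕ)) :
    ∃ y : CopyNode d h c, (y.1.1 : ℕ) = (v.1.1 : ℕ) + 1 + t ∧
      (y.1.2 : ℕ) = ((v.1.2 : ℕ) * d + q / c) * d ^ t + e ∧ (y.2 : ℕ) = q % c := by
  have hv2 : (v.1.2 : ℕ) < d ^ (v.1.1 : ℕ) := v.1.2.isLt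
  have hqd : q / c < d := div_c_lt hd0 hc0 v.2.isLt hq
  have hA : (v.1.2 : ℕ) * d + q / c < d ^ ((v.1.1 : ℕ) + 1) := by
    have hh1 : (v.1.2 : ℕ) * d + q / c < ((v.1.2 : ℕ) + 1) * d := by
      rw [add_mul, one_mul]; omega
    have hh2 : ((v.1.2 : ℕ) + 1) * d ≤ d ^ (v.1.1 : ℕ) * d :=
      Nat.mul_le_mul_right d (by omega)
    rw [pow_succ]
    omega
  have hIdx : ((v.1.2 : ℕ) * d + q / c) * d ^ t + e < d ^ ((v.1.1 : ℕ) + 1 + t) := by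
    have hh3 : ((v.1.2 : ℕ) * d + q / c) * d ^ t + e
        < ((v.1.2 : ℕ) * d + q / c + 1) * d ^ t := by
      have hx : ((v.1.2 : ℕ) * d + q / c + 1) * d ^ t
          = ((v.1.2 : ℕ) * d + q / c) * d ^ t + d ^ t := by ring
      omega
    have hh4 : ((v.1.2 : ℕ) * d + q / c + 1) * d ^ t ≤ d ^ ((v.1.1 : ℕ) + 1) * d ^ t :=
      Nat.mul_le_mul_right _ (by omega)
    rw [pow_add]
    omega
  exact ⟨mkNode d h c _ _ _ ht hIdx (Nat.mod_lt _ hc0), rfl, rfl, rfl⟩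

/-- Consecutive nodes on a spine path are related by `gChild'`. -/
lemma path_step (hd0 : 0 < d) (hc0 : 0 < c) {v y y' : CopyNode d h c} {q t e e' : ℕ}
    (hee' : (e = 0 ∧ e' = 0) ∨ (e = d ^ t - 1 ∧ e' = d ^ (t + 1) - 1))
    (hy1 : (y.1.1 : ℕ) = (v.1.1 : ℕ) + 1 + t)
    (hy2 : (y.1.2 : ℕ) = ((v.1.2 : ℕ) * d + q / c) * d ^ t + e)
    (hy3 : (y.2 : ℕ) = q % c)
    (hy'1 : (y'.1.1 : ℕ) = (v.1.1 : ℕ) + 1 + (t + 1))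
    (hy'2 : (y'.1.2 : ℕ) = ((v.1.2 : ℕ) * d + q / c) * d ^ (t + 1) + e')
    (hy'3 : (y'.2 : ℕ) = q % c) : gChild' d h c (some y') (some y) := by
  set A := (v.1.2 : ℕ) * d + q / c with hA
  have hpow : 0 < d ^ t := pow_pos hd0 t
  rcases hee' with ⟨rfl, rfl⟩ | ⟨rfl, rfl⟩
  · -- left spine
    have hidx : (y'.1.2 : ℕ) = d * (A * d ^ t) := by
      rw [hy'2, add_zero, pow_succ]; ring
    refine ⟨by omega, ?_, ?_, ?_⟩
    · rw [hidx, Nat.mul_div_cancel_left _ hd0, hy2, add_zero]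
    · rw [hidx, Nat.mul_mod_right, zero_mul, zero_add, hy3, hy'3]
    · rw [hidx, Nat.mul_mod_right, zero_mul, zero_add, hy3, hy'3]; omega
  · -- right spine
    have key : A * (d ^ t * d) + (d ^ t * d - 1)
        = d * (A * d ^ t + (d ^ t - 1)) + (d - 1) := by
      obtain ⟨E', hE'⟩ : ∃ E', d ^ t = E' + 1 := ⟨d ^ t - 1, by omega⟩
      obtain ⟨D', hD'⟩ : ∃ D', d = D' + 1 := ⟨d - 1, by omega⟩
      rw [hE', hD']
      have hexp : (E' + 1) * (D' + 1) = E' * D' + E' + D' + 1 := by ring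
      rw [hexp, Nat.add_sub_cancel, Nat.add_sub_cancel, Nat.add_sub_cancel]
      ring
    have hdec : (y'.1.2 : ℕ) = d * ((y.1.2 : ℕ)) + (d - 1) := by
      rw [hy'2, hy2, pow_succ, key]
    refine ⟨by omega, ?_, ?_, ?_⟩
    · rw [hdec, Nat.mul_add_div hd0, Nat.div_eq_of_lt (by omega), add_zero]
    · rw [hdec, Nat.mul_add_mod, Nat.mod_eq_of_lt (by omega), hy3, hy'3]
      omega
    · rw [hdec, Nat.mul_add_mod, Nat.mod_eq_of_lt (by omega), hy3, hy'3]

end Stmt14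
namespace Stmt14

variable {d h c : ℕ}

lemma mul_add_inj {E a b r s : ℕ} (hE : 0 < E) (hr : r < E) (hs : s < E)
    (heq : a * E + r = b * E + s) : a = b ∧ r = s := by
  have h1 : (a * E + r) % E = r := by
    rw [mul_comm, Nat.mul_add_mod, Nat.mod_eq_of_lt hr]
  have h2 : (b * E + s) % E = s := by
    rw [mul_comm, Nat.mul_add_mod, Nat.mod_eq_of_lt hs]
  have hrs : r = s := by rw [← h1, ← h2, heq]
  subst hrs
  exact ⟨Nat.eq_of_mul_eq_mul_right hE (by omega), rfl⟩

/-- The spine path below `v` through window position `q` (left spine if `side = false`,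
right spine if `side = true`), as a set of nodes. -/
def Pset (d h c : ℕ) (v : CopyNode d h c) (q : ℕ) (side : Bool) : Set (GNode d h c) :=
  { w | ∃ y : CopyNode d h c, w = some y ∧ (y.2 : ℕ) = q % c ∧ ∃ t,
      (y.1.1 : ℕ) = (v.1.1 : ℕ) + 1 + t ∧
      (y.1.2 : ℕ) = ((v.1.2 : ℕ) * d + q / c) * d ^ t + (if side then d ^ t - 1 else 0) }

/-- Decompose the index of a path node modulo `d^(t+1)`. -/
lemma pathNode_div_mod (hd0 : 0 < d) (hc0 : 0 < c) {v : CopyNode d h c} {q t e n : ℕ}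
    (hqd : q / c < d) (he : e < d ^ t)
    (hn : n = ((v.1.2 : ℕ) * d + q / c) * d ^ t + e) :
    n / d ^ (t + 1) = (v.1.2 : ℕ) ∧ n % d ^ (t + 1) = q / c * d ^ t + e := by
  have hpow : 0 < d ^ t := pow_pos hd0 t
  have hform : n = d ^ (t + 1) * (v.1.2 : ℕ) + (q / c * d ^ t + e) := by
    rw [hn, pow_succ]; ring
  have hlt : q / c * d ^ t + e < d ^ (t + 1) := by
    have hh1 : q / c * d ^ t + e < (q / c + 1) * d ^ t := by
      have hx : (q / c + 1) * d ^ t = q / c * d ^ t + d ^ t := by ring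
      omega
    have hh2 : (q / c + 1) * d ^ t ≤ d * d ^ t := Nat.mul_le_mul_right _ (by omega)
    rw [pow_succ]
    have hx2 : d * d ^ t = d ^ t * d := mul_comm _ _
    omega
  constructor
  · rw [hform, Nat.mul_add_div (pow_pos hd0 _), Nat.div_eq_of_lt hlt, add_zero]
  · rw [hform, Nat.mul_add_mod, Nat.mod_eq_of_lt hlt]

/-- Path nodes lie in the territory of `v`. -/
lemma Pset_subset_Sset (hd0 : 0 < d) (hc0 : 0 < c) {v : CopyNode d h c} {q : ℕ}
    {side : Bool} (hq1 : (v.2 : ℕ) ≤ q) (hq2 : q ≤ (d - 1) * c + (v.2 : ℕ)) :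
    Pset d h c v q side ⊆ Sset d h c v := by
  rintro w ⟨y, rfl, hy3, t, hy1, hy2⟩
  have hqd : q / c < d := div_c_lt hd0 hc0 v.2.isLt hq2
  have hpow : 0 < d ^ t := pow_pos hd0 t
  have he : (if side then d ^ t - 1 else 0) < d ^ t := by cases side <;> simp <;> omega
  obtain ⟨hdiv, hmod⟩ := pathNode_div_mod hd0 hc0 hqd he hy2
  refine ⟨y, rfl, Or.inr ⟨t + 1, by omega, by omega, hdiv, ?_, ?_⟩⟩
  · intro h0
    rw [hmod] at h0
    have hq0 : q / c = 0 := by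
      rcases Nat.mul_eq_zero.mp (by omega : q / c * d ^ t = 0) with hh | hh
      · exact hh
      · omega
    have hqc : q < c := (Nat.div_eq_zero_iff.mp hq0).resolve_left (by omega)
    rw [hy3, Nat.mod_eq_of_lt hqc]
    exact hq1
  · intro h0
    rw [hmod] at h0
    have hrhs : d ^ (t + 1) - 1 = (d - 1) * d ^ t + (d ^ t - 1) := by
      obtain ⟨E', hE'⟩ : ∃ E', d ^ t = E' + 1 := ⟨d ^ t - 1, by omega⟩
      obtain ⟨D', hD'⟩ : ∃ D', d = D' + 1 := ⟨d - 1, by omega⟩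
      rw [pow_succ, hE', hD']
      have hexp : (E' + 1) * (D' + 1) = D' * (E' + 1) + E' + 1 := by ring
      rw [hexp]
      simp [Nat.add_sub_cancel]
    rw [hrhs] at h0
    have hee : (if side then d ^ t - 1 else 0) < d ^ t := he
    obtain ⟨hqq, -⟩ := mul_add_inj hpow hee (by omega) h0
    -- q / c = d - 1
    have hqeq : c * (q / c) + q % c = q := Nat.div_add_mod q c
    rw [hqq] at hqeq
    have hcm : c * (d - 1) = (d - 1) * c := mul_comm _ _
    rw [hy3]
    omega

/-- Path nodes through position `q` avoid the territory of the sibling at position `q₀`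
(provided the side is chosen according to the comparison of `q` and `q₀`). -/
lemma Pset_disj_Sset (hd0 : 0 < d) (hc0 : 0 < c) {v u : CopyNode d h c} {q q₀ : ℕ}
    (hu1 : (u.1.1 : ℕ) = (v.1.1 : ℕ) + 1) (hu2 : (u.1.2 : ℕ) = (v.1.2 : ℕ) * d + q₀ / c)
    (hu3 : (u.2 : ℕ) = q₀ % c) (hqne : q ≠ q₀) (hqd : q / c < d) :
    ∀ w ∈ Pset d h c v q (decide (q₀ < q)), w ∉ Sset d h c u := by
  rintro w ⟨y, rfl, hy3, t, hy1, hy2⟩ ⟨y2, hy', hcase⟩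
  have hyy : y = y2 := by injection hy'
  subst hyy
  have hpow : 0 < d ^ t := pow_pos hd0 t
  have he : (if decide (q₀ < q) then d ^ t - 1 else 0) < d ^ t := by
    cases (decide (q₀ < q)) <;> simp <;> omega
  have e1 := Nat.div_add_mod q c
  have e2 := Nat.div_add_mod q₀ c
  rcases hcase with rfl | ⟨kk, hkk0, hdep', hdiv', hleft, hright⟩
  · -- y = u : same depth forces t = 0, then q = q₀
    have ht0 : t = 0 := by omega
    subst ht0
    have he0 : (if decide (q₀ < q) then d ^ 0 - 1 else 0) = 0 := by
      cases (decide (q₀ < q)) <;> simp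
    rw [he0, pow_zero, mul_one] at hy2
    rw [hy2] at hu2
    have hdiv : q / c = q₀ / c := by omega
    have hmodeq : q % c = q₀ % c := by rw [← hy3, hu3]
    rw [hdiv, hmodeq] at e1
    omega
  · -- y a strict descendant of u
    have htkk : t = kk := by omega
    subst htkk
    have hydiv : (y.1.2 : ℕ) / d ^ t = (v.1.2 : ℕ) * d + q / c := by
      rw [hy2, mul_comm ((v.1.2 : ℕ) * d + q / c), Nat.mul_add_div hpow,
        Nat.div_eq_of_lt he, add_zero]
    have hymod : (y.1.2 : ℕ) % d ^ t = (if decide (q₀ < q) then d ^ t - 1 else 0) := by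
      rw [hy2, mul_comm ((v.1.2 : ℕ) * d + q / c), Nat.mul_add_mod, Nat.mod_eq_of_lt he]
    have hAq : q / c = q₀ / c := by
      rw [hydiv] at hdiv'
      rw [hu2] at hdiv'
      omega
    rw [hAq] at e1
    by_cases hlt : q₀ < q
    · have hmodval : (y.1.2 : ℕ) % d ^ t = d ^ t - 1 := by
        rw [hymod]; simp [hlt]
      have := hright hmodval
      rw [hy3, hu3] at this
      omega
    · have hmodval : (y.1.2 : ℕ) % d ^ t = 0 := by
        rw [hymod]; simp [hlt]
      have := hleft hmodval
      rw [hy3, hu3] at this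
      omega

/-- Two path nodes with the same underlying node come from the same window position. -/
lemma Pset_inj (hd0 : 0 < d) (hc0 : 0 < c) {v : CopyNode d h c} {q q' : ℕ}
    {side side' : Bool} {w : GNode d h c} (h1 : w ∈ Pset d h c v q side)
    (h2 : w ∈ Pset d h c v q' side') : q % c = q' % c ∧ q / c = q' / c := by
  obtain ⟨y, rfl, hy3, t, hy1, hy2⟩ := h1
  obtain ⟨y', hy', hy3', t', hy1', hy2'⟩ := h2
  obtain rfl : y' = y := by injection hy'.symm
  have htt : t = t' := by omega
  subst htt
  have hpow : 0 < d ^ t := pow_pos hd0 t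
  have he : (if side then d ^ t - 1 else 0) < d ^ t := by cases side <;> simp <;> omega
  have he' : (if side' then d ^ t - 1 else 0) < d ^ t := by cases side' <;> simp <;> omega
  have := mul_add_inj hpow he he' (by rw [← hy2, hy2'])
  exact ⟨by omega, by omega⟩

/-- Existence of the path node at depth offset `t`. -/
lemma exists_pathNode' (hd0 : 0 < d) (hc0 : 0 < c) (v : CopyNode d h c) {q t : ℕ}
    (side : Bool) (ht : (v.1.1 : ℕ) + 1 + t < h) (hq : q ≤ (d - 1) * c + (v.2 : ℕ)) :
    ∃ y : CopyNode d h c, some y ∈ Pset d h c v q side ∧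
      (y.1.1 : ℕ) = (v.1.1 : ℕ) + 1 + t ∧
      (y.1.2 : ℕ) = ((v.1.2 : ℕ) * d + q / c) * d ^ t + (if side then d ^ t - 1 else 0) ∧
      (y.2 : ℕ) = q % c := by
  have hpow : 0 < d ^ t := pow_pos hd0 t
  have he : (if side then d ^ t - 1 else 0) < d ^ t := by cases side <;> simp <;> omega
  obtain ⟨y, hy1, hy2, hy3⟩ := exists_pathNode hd0 hc0 v he ht hq
  exact ⟨y, ⟨y, rfl, hy3, t, hy1, hy2⟩, hy1, hy2, hy3⟩

end Stmt14
namespace Stmt14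

variable {d h c : ℕ}

/-- There is a pebble-free path from `v` down to a leaf in configuration `C`. -/
inductive OpenP {V : Type} (child : V → V → Prop) (C : Set V) : V → Prop
  | leaf : ∀ v, (∀ u, ¬ child u v) → v ∉ C → OpenP child C v
  | step : ∀ u v, child u v → v ∉ C → OpenP child C u → OpenP child C v

lemma OpenP.not_mem {V : Type} {child : V → V → Prop} {C : Set V} {v : V}
    (hv : OpenP child C v) : v ∉ C := by cases hv <;> assumption

/-- If all nodes of the spine path below `v` through window position `q` are unpebbled
and `v` itself is unpebbled, then there is an open path from `v`. -/
lemma open_of_path_free (hd : 2 ≤ d) (hc0 : 0 < c) {v : CopyNode d h c} {q : ℕ}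
    (side : Bool) {C : Set (GNode d h c)} (hdep : (v.1.1 : ℕ) + 1 < h)
    (hq1 : (v.2 : ℕ) ≤ q) (hq2 : q ≤ (d - 1) * c + (v.2 : ℕ))
    (hfree : ∀ w ∈ Pset d h c v q side, w ∉ C) (hv : some v ∉ C) :
    OpenP (gChild' d h c) C (some v) := by
  have hd0 : 0 < d := by omega
  have claim : ∀ i t (y : CopyNode d h c), (v.1.1 : ℕ) + 1 + t < h →
      h - 1 - ((v.1.1 : ℕ) + 1 + t) = i →
      (y.1.1 : ℕ) = (v.1.1 : ℕ) + 1 + t →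
      (y.1.2 : ℕ) = ((v.1.2 : ℕ) * d + q / c) * d ^ t + (if side then d ^ t - 1 else 0) →
      (y.2 : ℕ) = q % c → OpenP (gChild' d h c) C (some y) := by
    intro i
    induction i with
    | zero =>
        intro t y hth hi hy1 hy2 hy3
        have hbot : (y.1.1 : ℕ) + 1 = h := by omega
        exact OpenP.leaf _ (no_child_of_bottom hbot)
          (hfree _ ⟨y, rfl, hy3, t, hy1, hy2⟩)
    | succ i ih =>
        intro t y hth hi hy1 hy2 hy3
        have hth' : (v.1.1 : ℕ) + 1 + (t + 1) < h := by omega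
        obtain ⟨y', hy'mem, hy'1, hy'2, hy'3⟩ :=
          exists_pathNode' hd0 hc0 v (t := t + 1) side hth' hq2
        have hch : gChild' d h c (some y') (some y) := by
          cases side
          · simp only [Bool.false_eq_true, if_false] at hy2 hy'2
            exact path_step hd0 hc0 (Or.inl ⟨rfl, rfl⟩) hy1 hy2 hy3 hy'1 hy'2 hy'3
          · simp only [if_true] at hy2 hy'2
            exact path_step hd0 hc0 (Or.inr ⟨rfl, rfl⟩) hy1 hy2 hy3 hy'1 hy'2 hy'3
        exact OpenP.step _ _ hch (hfree _ ⟨y, rfl, hy3, t, hy1, hy2⟩)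
          (ih (t + 1) y' hth' (by omega) hy'1 (by exact hy'2) hy'3)
  obtain ⟨y₀, hy₀mem, hy₀1, hy₀2, hy₀3⟩ :=
    exists_pathNode' hd0 hc0 v (t := 0) side hdep hq2
  have hy₀2' : (y₀.1.2 : ℕ) = (v.1.2 : ℕ) * d + q / c := by
    rw [hy₀2, pow_zero, mul_one]
    cases side <;> simp
  have hch0 : gChild' d h c (some y₀) (some v) :=
    child_from_q hd0 hc0 hq1 hq2 hy₀1 hy₀2' hy₀3
  exact OpenP.step _ _ hch0 hv
    (claim (h - 1 - ((v.1.1 : ℕ) + 1 + 0)) 0 y₀ (by omega) rfl hy₀1 hy₀2 hy₀3)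

/-- In the empty configuration every copy node has an open path. -/
lemma open_of_empty (hd : 2 ≤ d) (hc0 : 0 < c) (v : CopyNode d h c) :
    OpenP (gChild' d h c) (∅ : Set (GNode d h c)) (some v) := by
  have hd0 : 0 < d := by omega
  by_cases hbot : (v.1.1 : ℕ) + 1 = h
  · exact OpenP.leaf _ (no_child_of_bottom hbot) (Set.notMem_empty _)
  · have hdep : (v.1.1 : ℕ) + 1 < h := by have := v.1.1.isLt; omega
    exact open_of_path_free hd hc0 false hdep (le_refl _)
      (le_add_self) (fun w _ => Set.notMem_empty w) (Set.notMem_empty _)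

end Stmt14
namespace Stmt14

/-- Reachability between configurations by legal moves, never exceeding `b` pebbles. -/
inductive Reach {V : Type} (child : V → V → Prop) (b : ℕ) : Set V → Set V → Prop
  | refl : ∀ C, C.ncard ≤ b → Reach child b C C
  | tail : ∀ {C C' C''}, Reach child b C C' → BlackStep child C' C'' → C''.ncard ≤ b →
      Reach child b C C''

variable {V : Type} {child : V → V → Prop} {b b' : ℕ} {C C' C'' : Set V}

lemma Reach.trans (h1 : Reach child b C C') (h2 : Reach child b C' C'') :
    Reach child b C C'' := by
  induction h2 with
  | refl _ => exact h1
  | tail _ hs hn ih => exact Reach.tail ih hs hn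

lemma Reach.mono (hb : b ≤ b') (h1 : Reach child b C C') : Reach child b' C C' := by
  induction h1 with
  | refl hn => exact Reach.refl _ (le_trans hn hb)
  | tail _ hs hn ih => exact Reach.tail ih hs (hn.trans hb)

lemma Reach.extend (h1 : Reach child b C C') :
    ∀ P : BlackPebbling V child, P.cfg P.T = C → P.CostLE b →
      ∃ P' : BlackPebbling V child, P'.cfg P'.T = C' ∧ P'.CostLE b := by
  induction h1 with
  | refl _ => exact fun P h1 h2 => ⟨P, h1, h2⟩
  | @tail Cb Cc hr hs hn ih =>
      intro P hP1 hP2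
      obtain ⟨P1, hc1, hcost⟩ := ih P hP1 hP2
      refine ⟨⟨P1.T + 1, fun t => if t ≤ P1.T then P1.cfg t else Cc, ?_, ?_⟩, ?_, ?_⟩
      · simp [P1.start]
      · intro t ht
        rcases Nat.lt_or_ge t P1.T with h | h
        · simpa [Nat.le_of_lt h, Nat.succ_le_of_lt h] using P1.step t h
        · have ht' : t = P1.T := by omega
          subst ht'
          simpa [hc1] using hs
      · simp
      · intro t ht
        by_cases h : t ≤ P1.T
        · simpa [h] using hcost t h
        · simpa [h] using hn

lemma Reach.toPebbling (h1 : Reach child b ∅ C) :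
    ∃ P : BlackPebbling V child, P.cfg P.T = C ∧ P.CostLE b := by
  have hb : (∅ : Set V).ncard ≤ b := by simp
  refine h1.extend ⟨0, fun _ => ∅, rfl, fun t ht => absurd ht (by omega)⟩ rfl ?_
  intro t _
  simp

lemma reach_remove_finset [Finite V] (F : Finset V) :
    ∀ C : Set V, C.ncard ≤ b → Reach child b C (C \ ↑F) := by
  classical
  induction F using Finset.induction_on with
  | empty => intro C hC; simpa using Reach.refl C hC
  | @insert a F hnotin ih =>
      intro C hC
      have hset : C \ ↑(insert a F) = (C \ {a}) \ ↑F := by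
        ext w
        simp only [Set.mem_diff, Finset.coe_insert, Set.mem_insert_iff,
          Set.mem_singleton_iff, Finset.mem_coe]
        tauto
      rw [hset]
      have h1 : (C \ {a}).ncard ≤ b :=
        le_trans (Set.ncard_le_ncard Set.diff_subset (Set.toFinite C)) hC
      exact Reach.trans (Reach.tail (Reach.refl C hC) (Or.inr (Or.inl ⟨a, rfl⟩)) h1)
        (ih (C \ {a}) h1)

end Stmt14
namespace Stmt14

variable {d h c : ℕ}

/-- `w` is (the `some` of) the child of `v` at window position `q`. -/
def ChildAt (d h c : ℕ) (v : CopyNode d h c) (q : ℕ) (w : GNode d h c) : Prop :=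
  ∃ y : CopyNode d h c, w = some y ∧ (y.1.1 : ℕ) = (v.1.1 : ℕ) + 1 ∧
    (y.1.2 : ℕ) = (v.1.2 : ℕ) * d + q / c ∧ (y.2 : ℕ) = q % c

lemma childAt_unique {v : CopyNode d h c} {q q' : ℕ} {w : GNode d h c}
    (h1 : ChildAt d h c v q w) (h2 : ChildAt d h c v q' w) : q = q' := by
  obtain ⟨y, rfl, _, hy2, hy3⟩ := h1
  obtain ⟨y', heq, _, hy2', hy3'⟩ := h2
  have hyy : y = y' := by injection heq
  subst hyy
  have e1 := Nat.div_add_mod q c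
  have e2 := Nat.div_add_mod q' c
  have hdiv : q / c = q' / c := by omega
  rw [hdiv] at e1
  omega

lemma childAt_gChild (hd : 2 ≤ d) (hc0 : 0 < c) {v : CopyNode d h c} {q : ℕ}
    {w : GNode d h c} (hq1 : (v.2 : ℕ) ≤ q) (hq2 : q ≤ (d - 1) * c + (v.2 : ℕ))
    (hw : ChildAt d h c v q w) : ∃ y, w = some y ∧ gChild' d h c (some y) (some v) := by
  obtain ⟨y, rfl, hy1, hy2, hy3⟩ := hw
  exact ⟨y, rfl, child_from_q (by omega) hc0 hq1 hq2 hy1 hy2 hy3⟩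

lemma childAt_mem_Sset (hd : 2 ≤ d) (hc0 : 0 < c) {v : CopyNode d h c} {q : ℕ}
    {w : GNode d h c} (hq1 : (v.2 : ℕ) ≤ q) (hq2 : q ≤ (d - 1) * c + (v.2 : ℕ))
    (hw : ChildAt d h c v q w) : w ∈ Sset d h c v := by
  obtain ⟨y, rfl, hch⟩ := childAt_gChild hd hc0 hq1 hq2 hw
  exact Sset_child_subset hd hch (self_mem_Sset y)

/-- Upper bound: from any configuration disjoint from the territory of `v`, one can
pebble `v` using at most `c(d-1)m + 1` extra pebbles, where `m = h - 1 - depth v`. -/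
lemma UB (hd : 2 ≤ d) (hc0 : 0 < c) :
    ∀ m : ℕ, ∀ v : CopyNode d h c, h - 1 - (v.1.1 : ℕ) = m →
    ∀ C : Set (GNode d h c), C ∩ Sset d h c v = ∅ →
    Reach (gChild' d h c) (C.ncard + (c * (d - 1) * m + 1)) C (insert (some v) C) := by
  have hd0 : 0 < d := by omega
  intro m
  induction m using Nat.strong_induction_on with
  | _ m ih =>
  intro v hm C hC
  have hvlt := v.1.1.isLt
  have hv_not : some v ∉ C := fun hmem =>
    (hC ▸ (⟨hmem, self_mem_Sset v⟩ : some v ∈ C ∩ Sset d h c v) : some v ∈ (∅ : Set _))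
  rcases Nat.eq_zero_or_pos m with rfl | hmpos
  · -- v is a leaf
    have hbot : (v.1.1 : ℕ) + 1 = h := by omega
    refine Reach.tail (Reach.refl C (by omega))
      (Or.inl ⟨some v, no_child_of_bottom hbot, rfl⟩) ?_
    have := Set.ncard_insert_of_notMem hv_not (Set.toFinite C)
    omega
  · -- v is internal
    have hdep : (v.1.1 : ℕ) + 1 < h := by omega
    have hj₀c : (v.2 : ℕ) < c := v.2.isLt
    set b := C.ncard + (c * (d - 1) * m + 1) with hb
    clear_value b
    have hcomm : (d - 1) * c = c * (d - 1) := mul_comm _ _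
    have hmul : c * (d - 1) * (m - 1) + c * (d - 1) = c * (d - 1) * m := by
      rw [← Nat.mul_succ]; congr 1; omega
    have hym0 : h - 1 - ((v.1.1 : ℕ) + 1) = m - 1 := by omega
    have claim : ∀ i, i ≤ (d - 1) * c + 1 → ∃ S : Set (GNode d h c),
        (∀ w, w ∈ S ↔ ∃ q, (v.2 : ℕ) ≤ q ∧ q < (v.2 : ℕ) + i ∧ ChildAt d h c v q w) ∧
        (C ∪ S).ncard = C.ncard + i ∧ Reach (gChild' d h c) b C (C ∪ S) := by
      intro i
      induction i with
      | zero =>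
          intro _
          refine ⟨∅, fun w => ⟨fun hw => absurd hw (Set.notMem_empty w), ?_⟩, by simp,
            by simpa using Reach.refl C (by omega)⟩
          rintro ⟨q, h1, h2, -⟩; omega
      | succ i ihi =>
          intro hi
          obtain ⟨S, hSmem, hScard, hSreach⟩ := ihi (by omega)
          set q := (v.2 : ℕ) + i with hq
          clear_value q
          have hqlo : (v.2 : ℕ) ≤ q := by omega
          have hqhi : q ≤ (d - 1) * c + (v.2 : ℕ) := by omega
          obtain ⟨y, -, hy1, hy2, hy3⟩ :=
            exists_pathNode' hd0 hc0 v (q := q) (t := 0) false hdep hqhi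
          have hy2' : (y.1.2 : ℕ) = (v.1.2 : ℕ) * d + q / c := by
            rw [hy2, pow_zero, mul_one]; simp
          have hyCA : ChildAt d h c v q (some y) := ⟨y, rfl, hy1, hy2', hy3⟩
          have hch : gChild' d h c (some y) (some v) :=
            child_from_q hd0 hc0 hqlo hqhi hy1 hy2' hy3
          have hySv : some y ∈ Sset d h c v := Sset_child_subset hd hch (self_mem_Sset y)
          have hynotC : some y ∉ C := fun hmem =>
            (hC ▸ (⟨hmem, hySv⟩ : some y ∈ C ∩ Sset d h c v) : some y ∈ (∅ : Set _))
          have hynotS : some y ∉ S := by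
            intro hmem
            obtain ⟨q', h1, h2, hca⟩ := (hSmem _).mp hmem
            have := childAt_unique hyCA hca
            omega
          have hynotCS : some y ∉ C ∪ S := by
            rintro (hh | hh)
            exacts [hynotC hh, hynotS hh]
          have hdisj : (C ∪ S) ∩ Sset d h c y = ∅ := by
            rw [Set.eq_empty_iff_forall_notMem]
            rintro w ⟨hw1 | hw1, hw2⟩
            · have hwv : w ∈ Sset d h c v := Sset_child_subset hd hch hw2
              exact (hC ▸ (⟨hw1, hwv⟩ : w ∈ C ∩ Sset d h c v) : w ∈ (∅ : Set _))
            · obtain ⟨q', h1, h2, y', rfl, hd1, hd2, hd3⟩ := (hSmem _).mp hw1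
              have hne : y' ≠ y := by
                intro hee
                subst hee
                have := childAt_unique (⟨y', rfl, hd1, hd2, hd3⟩ :
                  ChildAt d h c v q' (some y')) hyCA
                omega
              exact not_mem_Sset_of_same_depth hne (by omega) hw2
          have hmlt : m - 1 < m := by omega
          have hym : h - 1 - (y.1.1 : ℕ) = m - 1 := by
            rw [hy1, Nat.add_zero]
            exact hym0
          have hrec := ih (m - 1) hmlt y hym (C ∪ S) hdisj
          have hbud : (C ∪ S).ncard + (c * (d - 1) * (m - 1) + 1) ≤ b := by
            rw [hScard]; omega
          have hreach2 : Reach (gChild' d h c) b C (insert (some y) (C ∪ S)) :=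
            Reach.trans hSreach (Reach.mono hbud hrec)
          refine ⟨insert (some y) S, ?_, ?_, ?_⟩
          · intro w
            constructor
            · rintro (rfl | hw)
              · exact ⟨q, hqlo, by omega, hyCA⟩
              · obtain ⟨q', h1, h2, hca⟩ := (hSmem _).mp hw
                exact ⟨q', h1, by omega, hca⟩
            · rintro ⟨q', h1, h2, hca⟩
              rcases Nat.lt_or_ge q' ((v.2 : ℕ) + i) with hlt | hge
              · exact Or.inr ((hSmem _).mpr ⟨q', h1, by omega, hca⟩)
              · have hqq : q' = q := by omega
                subst hqq
                obtain ⟨y', rfl, hd1, hd2, hd3⟩ := hca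
                have : y' = y := copy_ext (by omega) (by omega) (by omega)
                subst this
                exact Or.inl rfl
          · rw [Set.union_insert, Set.ncard_insert_of_notMem hynotCS (Set.toFinite _),
              hScard]
            omega
          · rw [Set.union_insert]
            exact hreach2
    obtain ⟨S, hSmem, hScard, hSreach⟩ := claim ((d - 1) * c + 1) le_rfl
    have hSsub : ∀ w ∈ S, w ∈ Sset d h c v := by
      intro w hw
      obtain ⟨q', h1, h2, hca⟩ := (hSmem _).mp hw
      exact childAt_mem_Sset hd hc0 h1 (by omega) hca
    have hall : ∀ u', gChild' d h c u' (some v) → u' ∈ C ∪ S := by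
      intro u' hu'
      match u' with
      | none => exact absurd hu' gChild'_none_left
      | some u =>
          obtain ⟨q', h1, h2, h3, h4, h5⟩ := child_to_q hd0 hc0 hu'
          exact Or.inr ((hSmem _).mpr ⟨q', h1, by omega, u, rfl, h3, h4, h5⟩)
    obtain ⟨ys, -, hys1, hys2, hys3⟩ :=
      exists_pathNode' hd0 hc0 v (q := (v.2 : ℕ)) (t := 0) false hdep (by omega)
    have hys2' : (ys.1.2 : ℕ) = (v.1.2 : ℕ) * d + (v.2 : ℕ) / c := by
      rw [hys2, pow_zero, mul_one]; simp
    have hysCA : ChildAt d h c v (v.2 : ℕ) (some ys) := ⟨ys, rfl, hys1, hys2', hys3⟩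
    have hysS : some ys ∈ S := (hSmem _).mpr ⟨(v.2 : ℕ), le_rfl, by omega, hysCA⟩
    have hchys : gChild' d h c (some ys) (some v) :=
      child_from_q hd0 hc0 le_rfl (by omega) hys1 hys2' hys3
    have hstep : BlackStep (gChild' d h c) (C ∪ S)
        (insert (some v) ((C ∪ S) \ {some ys})) :=
      Or.inr (Or.inr ⟨some v, hall, Or.inr ⟨some ys, hchys, Or.inr hysS, rfl⟩⟩)
    have hvnotS : some v ∉ S := by
      intro hmem
      obtain ⟨q', h1, h2, y', heq, hd1, hd2, hd3⟩ := (hSmem _).mp hmem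
      have hvy : v = y' := by injection heq
      rw [← hvy] at hd1
      omega
    have hC''card : (insert (some v) ((C ∪ S) \ {some ys})).ncard ≤ b := by
      have h1 : ((C ∪ S) \ {some ys}).ncard = (C ∪ S).ncard - 1 :=
        Set.ncard_diff_singleton_of_mem (show some ys ∈ C ∪ S from Or.inr hysS)
      have h2 := Set.ncard_insert_le (some v) ((C ∪ S) \ {some ys})
      have h3 : c * (d - 1) * 1 ≤ c * (d - 1) * m := Nat.mul_le_mul_left _ (by omega)
      omega
    have hremove := reach_remove_finset (child := gChild' d h c) (b := b)
      (Set.toFinite S).toFinset (insert (some v) ((C ∪ S) \ {some ys})) hC''card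
    have hfinal : insert (some v) ((C ∪ S) \ {some ys}) \ ↑(Set.toFinite S).toFinset
        = insert (some v) C := by
      rw [Set.Finite.coe_toFinset]
      ext w
      simp only [Set.mem_diff, Set.mem_insert_iff, Set.mem_union, Set.mem_singleton_iff]
      constructor
      · rintro ⟨rfl | ⟨hw1 | hw1, hw2⟩, hw3⟩
        · exact Or.inl rfl
        · exact Or.inr hw1
        · exact absurd hw1 hw3
      · rintro (rfl | hw)
        · exact ⟨Or.inl rfl, hvnotS⟩
        · have hwS : w ∉ S := fun hmem =>
            (hC ▸ (⟨hw, hSsub w hmem⟩ : w ∈ C ∩ Sset d h c v) : w ∈ (∅ : Set _))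
          exact ⟨Or.inr ⟨Or.inl hw, fun hee => hwS (hee ▸ hysS)⟩, hwS⟩
    rw [hfinal] at hremove
    exact Reach.trans (Reach.tail hSreach hstep hC''card) hremove

end Stmt14
namespace Stmt14

variable {d h c : ℕ}

/-- Lower bound: if at time `a` there is an open path from `v` and `v` carries a pebble at
time `b`, then at some intermediate time there are at least `c(d-1)m + 1` pebbles on the
territory of `v`, where `m = h - 1 - depth v`. -/
lemma LB (hd : 2 ≤ d) (hc0 : 0 < c) (P : BlackPebbling (GNode d h c) (gChild' d h c)) :
    ∀ m : ℕ, ∀ v : CopyNode d h c, h - 1 - (v.1.1 : ℕ) = m →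
    ∀ a b : ℕ, a ≤ b → b ≤ P.T → OpenP (gChild' d h c) (P.cfg a) (some v) →
    some v ∈ P.cfg b →
    ∃ τ, a < τ ∧ τ ≤ b ∧ c * (d - 1) * m + 1 ≤ (P.cfg τ ∩ Sset d h c v).ncard := by
  classical
  have hd0 : 0 < d := by omega
  intro m
  induction m using Nat.strong_induction_on with
  | _ m ih =>
  intro v hm a b hab hbT hopen hvb
  have hvlt := v.1.1.isLt
  have hj₀c : (v.2 : ℕ) < c := v.2.isLt
  have hva : some v ∉ P.cfg a := hopen.not_mem
  have hexb : ∃ t, a < t ∧ t ≤ b ∧ some v ∈ P.cfg t :=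
    ⟨b, lt_of_le_of_ne hab fun hh => hva (hh ▸ hvb), le_rfl, hvb⟩
  set b' := Nat.find hexb with hb'def
  obtain ⟨hab', hb'b, hvb'⟩ := Nat.find_spec hexb
  have hvnot : ∀ t, a ≤ t → t < b' → some v ∉ P.cfg t := by
    intro t h1 h2 hmem
    rcases eq_or_lt_of_le h1 with rfl | h1'
    · exact hva hmem
    · exact Nat.find_min hexb h2 ⟨h1', le_trans (le_of_lt h2) hb'b, hmem⟩
  rcases Nat.eq_zero_or_pos m with rfl | hmpos
  · -- base case: one pebble suffices for the bound
    refine ⟨b', hab', hb'b, ?_⟩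
    have hpos : 0 < (P.cfg b' ∩ Sset d h c v).ncard :=
      (Set.ncard_pos (Set.toFinite _)).mpr ⟨some v, hvb', self_mem_Sset v⟩
    omega
  · -- inductive case
    have hdep : (v.1.1 : ℕ) + 1 < h := by omega
    have hym0 : h - 1 - ((v.1.1 : ℕ) + 1) = m - 1 := by omega
    have hchild_ex : ∃ y, gChild' d h c (some y) (some v) := by
      obtain ⟨y, -, hy1, hy2, hy3⟩ :=
        exists_pathNode' hd0 hc0 v (q := (v.2 : ℕ)) (t := 0) false hdep (by omega)
      have hy2' : (y.1.2 : ℕ) = (v.1.2 : ℕ) * d + (v.2 : ℕ) / c := by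
        rw [hy2, pow_zero, mul_one]; simp
      exact ⟨y, child_from_q hd0 hc0 le_rfl (by omega) hy1 hy2' hy3⟩
    have hb'pos : 0 < b' := by omega
    have hstep' : BlackStep (gChild' d h c) (P.cfg (b' - 1)) (P.cfg b') := by
      have := P.step (b' - 1) (by omega)
      rwa [Nat.sub_add_cancel hb'pos] at this
    have hvprev : some v ∉ P.cfg (b' - 1) := hvnot _ (by omega) (by omega)
    have hall : ∀ u', gChild' d h c u' (some v) → u' ∈ P.cfg (b' - 1) := by
      rcases hstep' with ⟨w, hleaf, hins⟩ | ⟨w, hrem⟩ | ⟨w, hch, hcase⟩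
      · exfalso
        have hwv : w = some v := by
          have hmem := hvb'
          rw [hins] at hmem
          rcases hmem with hh | hh
          · exact hh.symm
          · exact absurd hh hvprev
        obtain ⟨y, hy⟩ := hchild_ex
        exact hleaf (some y) (hwv ▸ hy)
      · exfalso
        have hmem := hvb'
        rw [hrem] at hmem
        exact hvprev hmem.1
      · have hwv : w = some v := by
          rcases hcase with heq | ⟨u0, -, -, heq⟩ <;>
          · have hmem := hvb'
            rw [heq] at hmem
            rcases hmem with hh | hh
            · exact hh.symm
            · first
              | exact absurd hh hvprev
              | exact absurd hh.1 hvprev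
        intro u' hu'
        exact hch u' (hwv ▸ hu')
    -- the last time with an open path from v
    set Op : ℕ → Prop := fun t => OpenP (gChild' d h c) (P.cfg t) (some v) with hOp
    have hanot : ¬ Op (b' - 1) := by
      intro hOpen
      cases hOpen with
      | leaf _ hnoch _ =>
          obtain ⟨y, hy⟩ := hchild_ex
          exact hnoch (some y) hy
      | step u₀ _ hch hnm hopu =>
          exact hopu.not_mem (hall u₀ hch)
    have haleb : a ≤ b' - 1 := by omega
    set ts := Nat.findGreatest Op (b' - 1) with htsdef
    have htsO : Op ts := Nat.findGreatest_spec haleb hopen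
    have htsa : a ≤ ts := Nat.le_findGreatest haleb hopen
    have htsle : ts ≤ b' - 1 := Nat.findGreatest_le _
    have htslt : ts < b' - 1 :=
      lt_of_le_of_ne htsle fun he => hanot (he ▸ htsO)
    have hmax : ∀ t, ts < t → t ≤ b' - 1 → ¬ Op t := fun t h1 h2 =>
      Nat.findGreatest_is_greatest h1 h2
    -- the open child of v at time ts
    obtain ⟨u, hchu, hopenu⟩ : ∃ u : CopyNode d h c,
        gChild' d h c (some u) (some v) ∧ OpenP (gChild' d h c) (P.cfg ts) (some u) := by
      cases htsO with
      | leaf _ hnoch _ =>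
          obtain ⟨y, hy⟩ := hchild_ex
          exact absurd hy (hnoch (some y))
      | step u₀ _ hch hnm hopu =>
          match u₀ with
          | none => exact absurd hch gChild'_none_left
          | some u => exact ⟨u, hch, hopu⟩
    obtain ⟨q₀, hq01, hq02, hu1, hu2, hu3⟩ := child_to_q hd0 hc0 hchu
    have hexs : ∃ t, ts < t ∧ t ≤ b' - 1 ∧ some u ∈ P.cfg t :=
      ⟨b' - 1, htslt, le_rfl, hall _ hchu⟩
    set s := Nat.find hexs with hsdef
    obtain ⟨hts_s, hs_b, hus⟩ := Nat.find_spec hexs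
    have hsT : s ≤ P.T := by omega
    have hum : h - 1 - (u.1.1 : ℕ) = m - 1 := by rw [hu1]; exact hym0
    obtain ⟨τ, htτ, hτs, hcard⟩ :=
      ih (m - 1) (by omega) u hum ts s (le_of_lt hts_s) hsT hopenu hus
    have hτb1 : τ ≤ b' - 1 := le_trans hτs hs_b
    have hnotO : ¬ Op τ := hmax τ htτ hτb1
    have hvτ : some v ∉ P.cfg τ := hvnot τ (by omega) (by omega)
    have hblock : ∀ q, (v.2 : ℕ) ≤ q → q ≤ (d - 1) * c + (v.2 : ℕ) →
        ∃ w, w ∈ Pset d h c v q (decide (q₀ < q)) ∧ w ∈ P.cfg τ := by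
      intro q hq1 hq2
      by_contra hcon
      push_neg at hcon
      exact hnotO (open_of_path_free hd hc0 _ hdep hq1 hq2 hcon hvτ)
    -- counting
    set Q : Finset ℕ := (Finset.Icc (v.2 : ℕ) ((d - 1) * c + (v.2 : ℕ))).erase q₀ with hQdef
    have hQmem : ∀ q ∈ Q, q ≠ q₀ ∧ (v.2 : ℕ) ≤ q ∧ q ≤ (d - 1) * c + (v.2 : ℕ) := by
      intro q hq
      rw [hQdef, Finset.mem_erase, Finset.mem_Icc] at hq
      exact ⟨hq.1, hq.2.1, hq.2.2⟩
    have hQcard : Q.card = (d - 1) * c := by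
      rw [hQdef, Finset.card_erase_of_mem (Finset.mem_Icc.mpr ⟨hq01, hq02⟩),
        Nat.card_Icc]
      omega
    let f : ℕ → GNode d h c := fun q =>
      if hq : (v.2 : ℕ) ≤ q ∧ q ≤ (d - 1) * c + (v.2 : ℕ) then
        (hblock q hq.1 hq.2).choose else none
    have hfspec : ∀ q ∈ Q, f q ∈ Pset d h c v q (decide (q₀ < q)) ∧ f q ∈ P.cfg τ := by
      intro q hq
      obtain ⟨-, h1, h2⟩ := hQmem q hq
      simp only [f, dif_pos (⟨h1, h2⟩ : _ ∧ _)]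
      exact (hblock q h1 h2).choose_spec
    set W : Finset (GNode d h c) := Q.image f with hWdef
    have hWcard : W.card = (d - 1) * c := by
      rw [hWdef, Finset.card_image_of_injOn, hQcard]
      intro q hq q' hq' hff
      have h1 := (hfspec q hq).1
      have h2 := (hfspec q' hq').1
      rw [hff] at h1
      obtain ⟨e1, e2⟩ := Pset_inj hd0 hc0 h1 h2
      have e3 := Nat.div_add_mod q c
      have e4 := Nat.div_add_mod q' c
      rw [e2] at e3
      omega
    have hWsubcfg : ∀ w ∈ W, w ∈ P.cfg τ ∩ Sset d h c v := by
      intro w hw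
      rw [hWdef, Finset.mem_image] at hw
      obtain ⟨q, hq, rfl⟩ := hw
      obtain ⟨-, h1, h2⟩ := hQmem q hq
      exact ⟨(hfspec q hq).2, Pset_subset_Sset hd0 hc0 h1 h2 (hfspec q hq).1⟩
    have hWnotSu : ∀ w ∈ W, w ∉ Sset d h c u := by
      intro w hw
      rw [hWdef, Finset.mem_image] at hw
      obtain ⟨q, hq, rfl⟩ := hw
      obtain ⟨hne, h1, h2⟩ := hQmem q hq
      exact Pset_disj_Sset hd0 hc0 hu1 hu2 hu3 hne (div_c_lt hd0 hc0 hj₀c h2) _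
        (hfspec q hq).1
    set A := P.cfg τ ∩ Sset d h c u with hAdef
    have hAsub : A ⊆ P.cfg τ ∩ Sset d h c v :=
      Set.inter_subset_inter_right _ (Sset_child_subset hd hchu)
    have hdisj : Disjoint A (↑W : Set (GNode d h c)) := by
      rw [Set.disjoint_left]
      intro w hwA hwW
      exact hWnotSu w (Finset.mem_coe.mp hwW) hwA.2
    have hunion : (A ∪ ↑W).ncard = A.ncard + W.card := by
      rw [Set.ncard_union_eq hdisj (Set.toFinite _) (Set.toFinite _),
        Set.ncard_coe_finset]
    have hsub : A ∪ ↑W ⊆ P.cfg τ ∩ Sset d h c v := by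
      intro w hw
      rcases hw with hw | hw
      · exact hAsub hw
      · exact hWsubcfg w (Finset.mem_coe.mp hw)
    have hfinal : A.ncard + W.card ≤ (P.cfg τ ∩ Sset d h c v).ncard := by
      rw [← hunion]
      exact Set.ncard_le_ncard hsub (Set.toFinite _)
    refine ⟨τ, by omega, by omega, ?_⟩
    have hcomm : (d - 1) * c = c * (d - 1) := mul_comm _ _
    have hmul : c * (d - 1) * (m - 1) + c * (d - 1) = c * (d - 1) * m := by
      rw [← Nat.mul_succ]; congr 1; omega
    omega

end Stmt14
namespace Stmt14

variable {d h c : ℕ}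

lemma upper_bound (hd : 2 ≤ d) (hc0 : 0 < c) (u : CopyNode d h c) :
    ∃ P : BlackPebbling (GNode d h c) (gChild' d h c),
      P.Pebbles (some u) ∧ P.CostLE (c * (d - 1) * (h - 1 - (u.1.1 : ℕ)) + 1) := by
  have hreach := UB hd hc0 (h - 1 - (u.1.1 : ℕ)) u rfl ∅ (by simp)
  rw [Set.ncard_empty, zero_add] at hreach
  obtain ⟨P, hcfg, hcost⟩ := hreach.toPebbling
  exact ⟨P, ⟨P.T, le_rfl, by rw [hcfg]; exact Set.mem_insert _ _⟩, hcost⟩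

lemma lower_bound (hd : 2 ≤ d) (hc0 : 0 < c) (u : CopyNode d h c)
    (P : BlackPebbling (GNode d h c) (gChild' d h c)) (hP : P.Pebbles (some u)) :
    ∃ t ≤ P.T, c * (d - 1) * (h - 1 - (u.1.1 : ℕ)) + 1 ≤ (P.cfg t).ncard := by
  obtain ⟨t0, ht0, hmem⟩ := hP
  have hopen : OpenP (gChild' d h c) (P.cfg 0) (some u) := by
    rw [P.start]; exact open_of_empty hd hc0 u
  obtain ⟨τ, -, hτ, hcard⟩ :=
    LB hd hc0 P (h - 1 - (u.1.1 : ℕ)) u rfl 0 t0 (Nat.zero_le _) ht0 hopen hmem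
  exact ⟨τ, le_trans hτ ht0,
    le_trans hcard (Set.ncard_le_ncard Set.inter_subset_left (Set.toFinite _))⟩

/-- Exact characterization of the achievable budgets. -/
lemma price_iff (hd : 2 ≤ d) (hc0 : 0 < c) (u : CopyNode d h c) (N : ℕ) :
    (∃ P : BlackPebbling (GNode d h c) (gChild' d h c),
        P.Pebbles (some u) ∧ P.CostLE N) ↔
      c * (d - 1) * (h - 1 - (u.1.1 : ℕ)) + 1 ≤ N := by
  constructor
  · rintro ⟨P, hPeb, hCost⟩
    obtain ⟨t, ht, hcard⟩ := lower_bound hd hc0 u P hPeb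
    exact le_trans hcard (hCost t ht)
  · intro hN
    obtain ⟨P, hPeb, hCost⟩ := upper_bound hd hc0 u
    exact ⟨P, hPeb, fun t ht => le_trans (hCost t ht) hN⟩

end Stmt14

theorem stmt_14' (d h c : ℕ) (hd : 2 ≤ d) (hh : 1 ≤ h) (hc : 1 ≤ c)
    (l : ℕ) (hl1 : 1 ≤ l) (hlh : l ≤ h) (u : CopyNode d h c) (hu : (u.1.1 : ℕ) = h - l) :
    ((∃ P : BlackPebbling (GNode d h c) (gChild' d h c),
        P.Pebbles (some u) ∧ P.CostLE (c * (d - 1) * (l - 1) + 1)) ∧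
     (∀ P : BlackPebbling (GNode d h c) (gChild' d h c),
        P.Pebbles (some u) → ∃ t ≤ P.T, c * (d - 1) * (l - 1) + 1 ≤ (P.cfg t).ncard)) ∧
    (∀ u₁ u₂ v : GNode d h c, gChild' d h c u₁ v → gChild' d h c u₂ v →
      ∀ N : ℕ,
        (∃ P : BlackPebbling (GNode d h c) (gChild' d h c), P.Pebbles u₁ ∧ P.CostLE N) ↔
        (∃ P : BlackPebbling (GNode d h c) (gChild' d h c), P.Pebbles u₂ ∧ P.CostLE N)) := by
  have hc0 : 0 < c := hc
  have hmu : h - 1 - (u.1.1 : ℕ) = l - 1 := by rw [hu]; omega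
  constructor
  · constructor
    · obtain ⟨P, h1, h2⟩ := Stmt14.upper_bound hd hc0 u
      rw [hmu] at h2
      exact ⟨P, h1, h2⟩
    · intro P hP
      obtain ⟨t, ht, hcard⟩ := Stmt14.lower_bound hd hc0 u P hP
      rw [hmu] at hcard
      exact ⟨t, ht, hcard⟩
  · intro u₁ u₂ v hch1 hch2 N
    match u₁, u₂ with
    | none, _ => exact absurd hch1 Stmt14.gChild'_none_left
    | some w₁, none => exact absurd hch2 Stmt14.gChild'_none_left
    | some w₁, some w₂ =>
      have hdep_eq : (w₁.1.1 : ℕ) = (w₂.1.1 : ℕ) := by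
        match v with
        | none => rw [hch1, hch2]
        | some v' => rw [hch1.1, hch2.1]
      rw [Stmt14.price_iff hd hc0 w₁ N, Stmt14.price_iff hd hc0 w₂ N, hdep_eq]

/-- For all `d ≥ 2`, `h ≥ 1`, `c ≥ 1`, every level `l` with `1 ≤ l ≤ h`, and
every node `u` of `G'_{d,h}` of height `l` (i.e. a copy of a tree node at depth `h - l`),
the black pebbling cost of placing a pebble on `u`, starting from the empty configuration,
is exactly `c(d-1)(l-1) + 1`.  In particular, any two nodes of `G'_{d,h}` that are
children of a common node have equal black pebbling cost. -/
theorem stmt_14 (d h c : ℕ) (hd : 2 ≤ d) (hh : 1 ≤ h) (hc : 1 ≤ c)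
    (l : ℕ) (hl1 : 1 ≤ l) (hlh : l ≤ h) (u : CopyNode d h c) (hu : (u.1.1 : ℕ) = h - l) :
    ((∃ P : BlackPebbling (GNode d h c) (gChild' d h c),
        P.Pebbles (some u) ∧ P.CostLE (c * (d - 1) * (l - 1) + 1)) ∧
     (∀ P : BlackPebbling (GNode d h c) (gChild' d h c),
        P.Pebbles (some u) → ∃ t ≤ P.T, c * (d - 1) * (l - 1) + 1 ≤ (P.cfg t).ncard)) ∧
    (∀ u₁ u₂ v : GNode d h c, gChild' d h c u₁ v → gChild' d h c u₂ v →
      ∀ N : ℕ,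
        (∃ P : BlackPebbling (GNode d h c) (gChild' d h c), P.Pebbles u₁ ∧ P.CostLE N) ↔
        (∃ P : BlackPebbling (GNode d h c) (gChild' d h c), P.Pebbles u₂ ∧ P.CostLE N)) := by
  exact stmt_14' d h c hd hh hc l hl1 hlh u hu
end

section
/- Let d ≥ 2, h ≥ 1 and c ≥ 1, and let u and u' be nodes of G'_{d,h} that are copies of internal nodes of T_d^h with u < u'. Then the smallest child of u (with respect to <) is not a child of u', and the largest child of u' is not a child of u. -/
/-- Let `d ≥ 2`, `h ≥ 1`, `c ≥ 1`, and let `u < u'` be nodes of `G'_{d,h}`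
that are copies of internal nodes of `T_d^h`.  Then the smallest child of `u` (w.r.t. `<`,
i.e. any child of `u` no child of `u` is smaller than) is not a child of `u'`, and the
largest child of `u'` is not a child of `u`. -/
theorem stmt_15 (d h c : ℕ) (hd : 2 ≤ d) (hh : 1 ≤ h) (hc : 1 ≤ c)
    (u u' : CopyNode d h c)
    (hu : (u.1.1 : ℕ) + 1 < h) (hu' : (u'.1.1 : ℕ) + 1 < h)
    (hlt : copyLt d h c u u') :
    (∀ w : CopyNode d h c,
      gChild' d h c (some w) (some u) →
      (∀ w' : CopyNode d h c, gChild' d h c (some w') (some u) → ¬ copyLt d h c w' w) →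
      ¬ gChild' d h c (some w) (some u')) ∧
    (∀ w : CopyNode d h c,
      gChild' d h c (some w) (some u') →
      (∀ w' : CopyNode d h c, gChild' d h c (some w') (some u') → ¬ copyLt d h c w w') →
      ¬ gChild' d h c (some w) (some u)) := by
  obtain ⟨⟨⟨l, hl⟩, ⟨j, hj⟩⟩, ⟨i, hi⟩⟩ := u
  obtain ⟨⟨⟨l', hl'⟩, ⟨j', hj'⟩⟩, ⟨i', hi'⟩⟩ := u'
  dsimp only at hu hu'
  have hd0 : 0 < d := by omega
  have hpow1 : 0 < d ^ (l + 1) := Nat.pow_pos hd0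
  have hjbound : d * j + d ≤ d ^ (l + 1) := by
    have h1 : d * (j + 1) ≤ d * d ^ l := Nat.mul_le_mul_left d hj
    have h2 : d ^ (l + 1) = d ^ l * d := pow_succ d l
    nlinarith
  constructor
  · rintro ⟨⟨⟨L, hL⟩, ⟨a, ha⟩⟩, ⟨m, hm⟩⟩ hw hmin hw'
    obtain ⟨hL1, hdiv, hlo, hhi⟩ := hw
    obtain ⟨hL2, hdiv', hlo', hhi'⟩ := hw'
    dsimp only at hL1 hdiv hlo hhi hL2 hdiv' hlo' hhi'
    have hll : l = l' := by omega
    subst hll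
    have hjj : j = j' := by omega
    subst hjj
    subst hL1
    have hii : i < i' := by
      rcases hlt with h1 | h2
      · exfalso
        simp only [inorderLt] at h1
        omega
      · exact h2.2
    -- a = d*j + a%d
    have hmod := Nat.div_add_mod a d
    rw [hdiv] at hmod
    have h0 := hmin ⟨⟨⟨l + 1, hu⟩, ⟨d * j, by omega⟩⟩, ⟨i, hi⟩⟩
      (by
        refine ⟨rfl, ?_, ?_, ?_⟩
        · exact Nat.mul_div_cancel_left j hd0
        · dsimp only
          rw [Nat.mul_mod_right]
          omega
        · dsimp only
          rw [Nat.mul_mod_right]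
          have : c ≤ (d - 1) * c := Nat.le_mul_of_pos_left c (by omega)
          omega)
    rw [copyLt, not_or] at h0
    obtain ⟨h0a, h0b⟩ := h0
    simp only [inorderLt] at h0a
    try dsimp only at h0a
    have haeq : a = d * j := by
      rcases Nat.lt_or_ge (d * j) a with hlt2 | hge
      · exfalso
        have hx : d * j * d < a * d := Nat.mul_lt_mul_of_pos_right hlt2 hd0
        exact h0a (Nat.mul_lt_mul_of_pos_right (by omega) hpow1)
      · omega
    subst haeq
    have hmi : ¬ i < m := fun him => h0b ⟨rfl, him⟩
    have hm0 : d * j % d = 0 := Nat.mul_mod_right d j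
    rw [hm0] at hlo hhi hlo' hhi'
    omega
  · rintro ⟨⟨⟨L, hL⟩, ⟨a, ha⟩⟩, ⟨m, hm⟩⟩ hw hmax hw'
    obtain ⟨hL1, hdiv, hlo, hhi⟩ := hw
    obtain ⟨hL2, hdiv', hlo', hhi'⟩ := hw'
    dsimp only at hL1 hdiv hlo hhi hL2 hdiv' hlo' hhi'
    have hll : l = l' := by omega
    subst hll
    have hjj : j = j' := by omega
    subst hjj
    subst hL1
    have hii : i < i' := by
      rcases hlt with h1 | h2
      · exfalso
        simp only [inorderLt] at h1
        omega
      · exact h2.2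
    have hmod := Nat.div_add_mod a d
    rw [hdiv] at hmod
    have hrd : a % d < d := Nat.mod_lt _ hd0
    have hmodtop : (d * j + (d - 1)) % d = d - 1 := by
      rw [Nat.mul_add_mod]
      exact Nat.mod_eq_of_lt (by omega)
    have h0 := hmax ⟨⟨⟨l + 1, hu⟩, ⟨d * j + (d - 1), by exact (by omega : d * j + (d - 1) < d ^ (l + 1))⟩⟩, ⟨i', hi'⟩⟩
      (by
        refine ⟨rfl, ?_, ?_, ?_⟩
        · dsimp only
          rw [Nat.mul_add_div hd0, Nat.div_eq_of_lt (by omega)]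
          omega
        · dsimp only
          rw [hmodtop]
          have : c ≤ (d - 1) * c := Nat.le_mul_of_pos_left c (by omega)
          omega
        · dsimp only
          rw [hmodtop])
    rw [copyLt, not_or] at h0
    obtain ⟨h0a, h0b⟩ := h0
    simp only [inorderLt] at h0a
    try dsimp only at h0a
    have haeq : a = d * j + (d - 1) := by
      rcases Nat.lt_or_ge a (d * j + (d - 1)) with hlt2 | hge
      · exfalso
        have hx : a * d < (d * j + (d - 1)) * d := Nat.mul_lt_mul_of_pos_right hlt2 hd0
        exact h0a (Nat.mul_lt_mul_of_pos_right (by omega) hpow1)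
      · omega
    subst haeq
    have hmi : ¬ m < i' := fun him => h0b ⟨rfl, him⟩
    rw [hmodtop] at hlo hhi hlo' hhi'
    omega
end

section
/- Let d ≥ 2, h ≥ 1 and c ≥ 1, and let u and v be copy nodes of G'_{d,h} with u < v such that there is no directed path from u to v and no directed path from v to u in G'_{d,h}. Then the left-most path to u does not intersect any path from a leaf to v, and the right-most path to v does not intersect any path from a leaf to u. -/
/-- The order `<` on the nodes of `G'_{d,h}`, restricted to copy nodes. -/
def gLt (d h c : ℕ) : GNode d h c → GNode d h c → Prop
  | some x, some y => copyLt d h c x y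
  | _, _ => False

/-- `P` is a directed path in `(V, child)` from a leaf (a node with no children) to `u`:
a nonempty list of nodes starting at a leaf, ending at `u`, each consecutive pair related
by `child`. -/
def IsPathFromLeafTo {V : Type} (child : V → V → Prop) (P : List V) (u : V) : Prop :=
  P ≠ [] ∧ P.getLast? = some u ∧ (∀ w, P.head? = some w → ∀ x, ¬ child x w) ∧
    P.Chain' child

/-- `P` is the left-most path to `u` w.r.t. the order `lt`: the path from a leaf to `u`
obtained by repeatedly moving to the smallest child (each node of the path is the smallest
child of its successor). -/
def IsLeftmostPathTo {V : Type} (lt : V → V → Prop) (child : V → V → Prop)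
    (P : List V) (u : V) : Prop :=
  IsPathFromLeafTo child P u ∧ P.Chain' (fun a b => ∀ w, child w b → ¬ lt w a)

/-- `P` is the right-most path to `u` w.r.t. the order `lt`: the path from a leaf to `u`
obtained by repeatedly moving to the largest child. -/
def IsRightmostPathTo {V : Type} (lt : V → V → Prop) (child : V → V → Prop)
    (P : List V) (u : V) : Prop :=
  IsPathFromLeafTo child P u ∧ P.Chain' (fun a b => ∀ w, child w b → ¬ lt a w)

section Aux0
variable {d h c : ℕ}

lemma gChild'_some {x y : GNode d h c} (hxy : gChild' d h c x y) (b : CopyNode d h c)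
    (hy : y = some b) : ∃ a : CopyNode d h c, x = some a ∧
    (a.1.1 : ℕ) = (b.1.1 : ℕ) + 1 ∧ (a.1.2 : ℕ) / d = (b.1.2 : ℕ) ∧
    (b.2 : ℕ) ≤ ((a.1.2 : ℕ) % d) * c + (a.2 : ℕ) ∧
    ((a.1.2 : ℕ) % d) * c + (a.2 : ℕ) ≤ (d - 1) * c + (b.2 : ℕ) := by
  subst hy
  match x with
  | some a => exact ⟨a, rfl, hxy⟩
  | none => exact absurd hxy (by simp [gChild'])

end Aux0

section Aux

variable {d h c : ℕ}

lemma rtg_none {x : GNode d h c} (hx : Relation.ReflTransGen (gChild' d h c) none x) :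
    x = none := by
  rcases hx.cases_head with h | ⟨y, hstep, -⟩
  · exact h.symm
  · exact absurd hstep (by simp [gChild'])

lemma rtg_some {x : GNode d h c} {b : CopyNode d h c}
    (hx : Relation.ReflTransGen (gChild' d h c) x (some b)) :
    ∃ a : CopyNode d h c, x = some a := by
  match x with
  | some a => exact ⟨a, rfl⟩
  | none => exact absurd (rtg_none hx) (by simp)

/-- structure of reflexive-transitive reachability: depth decreases, tree index is a
quotient. -/
lemma rtg_struct (hd : 1 ≤ d) {b : CopyNode d h c} :
    ∀ {x}, Relation.ReflTransGen (gChild' d h c) x (some b) →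
    ∀ a : CopyNode d h c, x = some a → (b.1.1 : ℕ) ≤ (a.1.1 : ℕ) ∧
      (b.1.2 : ℕ) = (a.1.2 : ℕ) / d ^ ((a.1.1 : ℕ) - (b.1.1 : ℕ)) := by
  intro x hx
  induction hx using Relation.ReflTransGen.head_induction_on with
  | refl =>
    rintro a ha
    obtain rfl : b = a := by injection ha
    simp
  | head hstep hrest ih =>
    rintro a rfl
    obtain ⟨p, rfl⟩ := rtg_some hrest
    obtain ⟨hl, hj, -, -⟩ := hstep
    obtain ⟨hle, hq⟩ := ih p rfl
    have hexp : (a.1.1 : ℕ) - (b.1.1 : ℕ) = ((p.1.1 : ℕ) - (b.1.1 : ℕ)) + 1 := by omega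
    refine ⟨by omega, ?_⟩
    rw [hexp, hq, ← hj, Nat.div_div_eq_div_mul, pow_succ']

end Aux

section Aux2
variable {d h c : ℕ}

/-- split a path at an intermediate depth. -/
lemma rtg_split (hd : 1 ≤ d) {b : CopyNode d h c} (l : ℕ) :
    ∀ {x}, Relation.ReflTransGen (gChild' d h c) x (some b) →
    ∀ a : CopyNode d h c, x = some a → (b.1.1 : ℕ) ≤ l → l ≤ (a.1.1 : ℕ) →
    ∃ w : CopyNode d h c, Relation.ReflTransGen (gChild' d h c) (some a) (some w) ∧
      Relation.ReflTransGen (gChild' d h c) (some w) (some b) ∧ (w.1.1 : ℕ) = l := by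
  intro x hx
  induction hx using Relation.ReflTransGen.head_induction_on with
  | refl =>
    rintro a ha h1 h2
    obtain rfl : b = a := by injection ha
    exact ⟨b, .refl, .refl, by omega⟩
  | head hstep hrest ih =>
    rintro a rfl h1 h2
    obtain ⟨p, rfl⟩ := rtg_some hrest
    rcases eq_or_lt_of_le h2 with heq | hlt
    · exact ⟨a, .refl, .head hstep hrest, heq.symm⟩
    · have hl : (a.1.1 : ℕ) = (p.1.1 : ℕ) + 1 := hstep.1
      obtain ⟨w, hw1, hw2, hw3⟩ := ih p rfl h1 (by omega)
      exact ⟨w, .head hstep hw1, hw2, hw3⟩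

/-- along an all-branches-0 path, the copy index can only decrease. -/
lemma reach_left (hd : 1 ≤ d) {b : CopyNode d h c} :
    ∀ {x}, Relation.ReflTransGen (gChild' d h c) x (some b) →
    ∀ a : CopyNode d h c, x = some a →
    (a.1.2 : ℕ) = (b.1.2 : ℕ) * d ^ ((a.1.1 : ℕ) - (b.1.1 : ℕ)) →
    (b.2 : ℕ) ≤ (a.2 : ℕ) := by
  intro x hx
  induction hx using Relation.ReflTransGen.head_induction_on with
  | refl =>
    rintro a ha hj
    obtain rfl : b = a := by injection ha
    exact le_rfl
  | head hstep hrest ih =>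
    rintro a rfl hja
    obtain ⟨p, rfl⟩ := rtg_some hrest
    obtain ⟨hl, hj, hc1, -⟩ := hstep
    obtain ⟨hble, hbq⟩ := rtg_struct hd hrest p rfl
    have hk : (a.1.1 : ℕ) - (b.1.1 : ℕ) = ((p.1.1 : ℕ) - (b.1.1 : ℕ)) + 1 := by omega
    rw [hk, pow_succ] at hja
    have hmod : (a.1.2 : ℕ) % d = 0 := by
      rw [hja]
      simp [Nat.mul_mod, Nat.mod_self]
    have hjp : (p.1.2 : ℕ) = (b.1.2 : ℕ) * d ^ ((p.1.1 : ℕ) - (b.1.1 : ℕ)) := by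
      rw [← hj, hja, ← mul_assoc]
      exact Nat.mul_div_cancel _ (by omega)
    have := ih p rfl hjp
    rw [hmod] at hc1
    simp at hc1
    omega

/-- along an all-branches-(d-1) path, the copy index can only increase. -/
lemma reach_right (hd : 1 ≤ d) {b : CopyNode d h c} :
    ∀ {x}, Relation.ReflTransGen (gChild' d h c) x (some b) →
    ∀ a : CopyNode d h c, x = some a →
    (a.1.2 : ℕ) + 1 = ((b.1.2 : ℕ) + 1) * d ^ ((a.1.1 : ℕ) - (b.1.1 : ℕ)) →
    (a.2 : ℕ) ≤ (b.2 : ℕ) := by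
  intro x hx
  induction hx using Relation.ReflTransGen.head_induction_on with
  | refl =>
    rintro a ha hj
    obtain rfl : b = a := by injection ha
    exact le_rfl
  | head hstep hrest ih =>
    rintro a rfl hja
    obtain ⟨p, rfl⟩ := rtg_some hrest
    obtain ⟨hl, hj, -, hc2⟩ := hstep
    obtain ⟨hble, hbq⟩ := rtg_struct hd hrest p rfl
    have hk : (a.1.1 : ℕ) - (b.1.1 : ℕ) = ((p.1.1 : ℕ) - (b.1.1 : ℕ)) + 1 := by omega
    rw [hk, pow_succ] at hja
    set M := ((b.1.2 : ℕ) + 1) * d ^ ((p.1.1 : ℕ) - (b.1.1 : ℕ)) with hM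
    have hM1 : 1 ≤ M := Nat.one_le_iff_ne_zero.mpr (by positivity)
    have hja' : (a.1.2 : ℕ) + 1 = M * d := by rw [hja, hM, mul_assoc]
    have hMd : d ≤ M * d := Nat.le_mul_of_pos_left d hM1
    have hsub : (M - 1) * d = M * d - d := Nat.sub_one_mul M d
    have haval : (a.1.2 : ℕ) = (M - 1) * d + (d - 1) := by omega
    have hmod : (a.1.2 : ℕ) % d = d - 1 := by
      rw [haval, add_comm, Nat.add_mul_mod_self_right, Nat.mod_eq_of_lt (by omega)]
    have hdiv : (a.1.2 : ℕ) / d = M - 1 := by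
      rw [haval, add_comm, Nat.add_mul_div_right _ _ (by omega : 0 < d),
        Nat.div_eq_of_lt (by omega), Nat.zero_add]
    have hjp : (p.1.2 : ℕ) + 1 = M := by rw [← hj, hdiv]; omega
    have := ih p rfl hjp
    rw [hmod] at hc2
    omega
end Aux2

section Aux3
variable {d h c : ℕ}

/-- paths can be shifted upward in copy index. -/
lemma mono_up (hd : 2 ≤ d) (hc : 1 ≤ c) {b : CopyNode d h c} :
    ∀ {x}, Relation.ReflTransGen (gChild' d h c) x (some b) →
    ∀ a : CopyNode d h c, x = some a → ∀ m : Fin c, (a.2 : ℕ) ≤ (m : ℕ) →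
    ∃ i : Fin c, (b.2 : ℕ) ≤ (i : ℕ) ∧
      Relation.ReflTransGen (gChild' d h c) (some (a.1, m)) (some (b.1, i)) := by
  intro x hx
  induction hx using Relation.ReflTransGen.head_induction_on with
  | refl =>
    rintro a ha m hm
    obtain rfl : b = a := by injection ha
    exact ⟨m, hm, by rcases b with ⟨n, i⟩; exact .refl⟩
  | head hstep hrest ih =>
    rintro a rfl m hm
    obtain ⟨p, rfl⟩ := rtg_some hrest
    obtain ⟨hl, hj, hc1, hc2⟩ := hstep
    have hr : (a.1.2 : ℕ) % d ≤ d - 1 := by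
      have := Nat.mod_lt (a.1.2 : ℕ) (show 0 < d by omega); omega
    set q : ℕ := min (c - 1) ((a.1.2 : ℕ) % d * c + (m : ℕ)) with hq
    have hqc : q < c := by omega
    have hpq : (p.2 : ℕ) ≤ q := by
      have h1 : (p.2 : ℕ) ≤ c - 1 := by have := p.2.isLt; omega
      have h2 : (p.2 : ℕ) ≤ (a.1.2 : ℕ) % d * c + (m : ℕ) := by omega
      omega
    obtain ⟨i, hi1, hi2⟩ := ih p rfl ⟨q, hqc⟩ hpq
    refine ⟨i, hi1, .head ?_ hi2⟩
    refine ⟨hl, hj, ?_, ?_⟩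
    · have hmc := m.isLt
      simp only []
      omega
    · have hmc := m.isLt
      have : (d - 1) * c ≥ (a.1.2 : ℕ) % d * c := Nat.mul_le_mul_right c hr
      simp only []
      omega

/-- paths can be shifted downward in copy index. -/
lemma mono_down (hd : 2 ≤ d) (hc : 1 ≤ c) {b : CopyNode d h c} :
    ∀ {x}, Relation.ReflTransGen (gChild' d h c) x (some b) →
    ∀ a : CopyNode d h c, x = some a → ∀ m : Fin c, (m : ℕ) ≤ (a.2 : ℕ) →
    ∃ i : Fin c, (i : ℕ) ≤ (b.2 : ℕ) ∧
      Relation.ReflTransGen (gChild' d h c) (some (a.1, m)) (some (b.1, i)) := by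
  intro x hx
  induction hx using Relation.ReflTransGen.head_induction_on with
  | refl =>
    rintro a ha m hm
    obtain rfl : b = a := by injection ha
    exact ⟨m, hm, by rcases b with ⟨n, i⟩; exact .refl⟩
  | head hstep hrest ih =>
    rintro a rfl m hm
    obtain ⟨p, rfl⟩ := rtg_some hrest
    obtain ⟨hl, hj, hc1, hc2⟩ := hstep
    have hr : (a.1.2 : ℕ) % d ≤ d - 1 := by
      have := Nat.mod_lt (a.1.2 : ℕ) (show 0 < d by omega); omega
    have hrc : (a.1.2 : ℕ) % d * c ≤ (d - 1) * c := Nat.mul_le_mul_right c hr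
    set q : ℕ := (a.1.2 : ℕ) % d * c + (m : ℕ) - (d - 1) * c with hq
    have hqc : q < c := by have := m.isLt; omega
    have hpq : q ≤ (p.2 : ℕ) := by omega
    obtain ⟨i, hi1, hi2⟩ := ih p rfl ⟨q, hqc⟩ hpq
    refine ⟨i, hi1, .head ?_ hi2⟩
    exact ⟨hl, hj, by simp only []; omega, by simp only []; omega⟩

end Aux3
section Aux4
variable {d h c : ℕ}

lemma treeNode_eq {a b : TreeNode d h} (h1 : (a.1 : ℕ) = (b.1 : ℕ))
    (h2 : (a.2 : ℕ) = (b.2 : ℕ)) : a = b := by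
  obtain ⟨⟨la, hla⟩, ⟨ja, hja⟩⟩ := a
  obtain ⟨⟨lb, hlb⟩, ⟨jb, hjb⟩⟩ := b
  simp only [Fin.val_mk] at h1 h2
  subst h1
  subst h2
  rfl

lemma chain'_last_rtg {α : Type} {r : α → α → Prop} :
    ∀ (Q : List α) (v : α), Q.Chain' r → Q.getLast? = some v →
    ∀ x ∈ Q, Relation.ReflTransGen r x v := by
  intro Q
  induction Q with
  | nil => simp
  | cons q Q' ih =>
    intro v hch hlast x hx
    cases Q' with
    | nil =>
      simp only [List.getLast?_singleton, Option.some.injEq] at hlast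
      simp only [List.mem_singleton] at hx
      subst hlast; subst hx
      exact .refl
    | cons q' Q'' =>
      replace hch : r q q' ∧ List.Chain' r (q' :: Q'') := List.isChain_cons_cons.mp hch
      rw [List.getLast?_cons_cons] at hlast
      rcases List.mem_cons.mp hx with rfl | hx'
      · exact .head hch.1 (ih v hch.2 hlast q' List.mem_cons_self)
      · exact ih v hch.2 hlast x hx'

/-- the minimal child of `u[i]` is `(child 0 of u)[i]`. -/
lemma min_child (hd : 2 ≤ d) (hc : 1 ≤ c) (u : CopyNode d h c) {w : GNode d h c}
    (hw : gChild' d h c w (some u))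
    (hmin : ∀ w', gChild' d h c w' (some u) → ¬ gLt d h c w' w) :
    ∃ y : CopyNode d h c, w = some y ∧ (y.1.1 : ℕ) = (u.1.1 : ℕ) + 1 ∧
      (y.1.2 : ℕ) = (u.1.2 : ℕ) * d ∧ (y.2 : ℕ) = (u.2 : ℕ) := by
  match w with
  | none => exact absurd hw (by simp [gChild'])
  | some y =>
  obtain ⟨hl, hj, hc1, hc2⟩ := hw
  -- the candidate minimal child
  have hly : ((u.1.1 : ℕ) + 1) < h := hl ▸ y.1.1.isLt
  have hjy : (u.1.2 : ℕ) * d < d ^ ((u.1.1 : ℕ) + 1) := by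
    rw [pow_succ]
    exact (Nat.mul_lt_mul_right (by omega)).mpr u.1.2.isLt
  set y₀ : CopyNode d h c := (⟨⟨(u.1.1 : ℕ) + 1, hly⟩, ⟨(u.1.2 : ℕ) * d, hjy⟩⟩, u.2)
    with hy₀
  have hchild : gChild' d h c (some y₀) (some u) := by
    refine ⟨rfl, ?_, ?_, ?_⟩
    · exact Nat.mul_div_cancel _ (by omega)
    · simp only [hy₀, Nat.mul_mod_left]
      omega
    · simp only [hy₀, Nat.mul_mod_left]
      show ((u.1.2 : ℕ) * d) % d * c + (u.2 : ℕ) ≤ (d - 1) * c + (u.2 : ℕ)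
      have h0 : (u.1.2 : ℕ) * d % d = 0 := by simp
      rw [h0]
      have : c ≤ (d - 1) * c := Nat.le_mul_of_pos_left c (by omega)
      omega
  have hnlt := hmin (some y₀) hchild
  have h5 := Nat.div_add_mod (y.1.2 : ℕ) d
  rw [hj, Nat.mul_comm d _] at h5
  -- first, the tree index
  have hmodeq : (y.1.2 : ℕ) % d = 0 := by
    by_contra hne
    refine hnlt (Or.inl ?_)
    show ((u.1.2 : ℕ) * d * d + 1) * d ^ (y.1.1 : ℕ) <
      ((y.1.2 : ℕ) * d + 1) * d ^ ((u.1.1 : ℕ) + 1)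
    rw [← hl]
    have h2 : (u.1.2 : ℕ) * d < (y.1.2 : ℕ) := by omega
    have h3 : (u.1.2 : ℕ) * d * d < (y.1.2 : ℕ) * d :=
      (Nat.mul_lt_mul_right (by omega)).mpr h2
    exact (Nat.mul_lt_mul_right (by positivity)).mpr (by omega)
  have hjeq : (y.1.2 : ℕ) = (u.1.2 : ℕ) * d := by omega
  -- then, the copy index
  have hieq : (y.2 : ℕ) = (u.2 : ℕ) := by
    rw [hmodeq] at hc1
    simp only [Nat.zero_mul, Nat.zero_add] at hc1
    by_contra hne
    refine hnlt (Or.inr ⟨treeNode_eq ?_ ?_, ?_⟩)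
    · rw [hl]
    · exact hjeq.symm
    · show (u.2 : ℕ) < (y.2 : ℕ)
      omega
  exact ⟨y, rfl, hl, hjeq, hieq⟩

/-- the maximal child of `u[i]` is `(child d-1 of u)[i]`. -/
lemma max_child (hd : 2 ≤ d) (hc : 1 ≤ c) (u : CopyNode d h c) {w : GNode d h c}
    (hw : gChild' d h c w (some u))
    (hmax : ∀ w', gChild' d h c w' (some u) → ¬ gLt d h c w w') :
    ∃ y : CopyNode d h c, w = some y ∧ (y.1.1 : ℕ) = (u.1.1 : ℕ) + 1 ∧
      (y.1.2 : ℕ) + 1 = ((u.1.2 : ℕ) + 1) * d ∧ (y.2 : ℕ) = (u.2 : ℕ) := by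
  match w with
  | none => exact absurd hw (by simp [gChild'])
  | some y =>
  obtain ⟨hl, hj, hc1, hc2⟩ := hw
  have hly : ((u.1.1 : ℕ) + 1) < h := hl ▸ y.1.1.isLt
  have hjy : (u.1.2 : ℕ) * d + (d - 1) < d ^ ((u.1.1 : ℕ) + 1) := by
    rw [pow_succ]
    have h2 : (u.1.2 : ℕ) + 1 ≤ d ^ (u.1.1 : ℕ) := u.1.2.isLt
    have h3 := Nat.mul_le_mul_right d h2
    have h4 : ((u.1.2 : ℕ) + 1) * d = (u.1.2 : ℕ) * d + d := by ring
    omega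
  set y₀ : CopyNode d h c := (⟨⟨(u.1.1 : ℕ) + 1, hly⟩, ⟨(u.1.2 : ℕ) * d + (d - 1), hjy⟩⟩, u.2)
    with hy₀
  have hmod₀ : ((u.1.2 : ℕ) * d + (d - 1)) % d = d - 1 := by
    rw [Nat.mul_comm, Nat.mul_add_mod, Nat.mod_eq_of_lt (by omega)]
  have hchild : gChild' d h c (some y₀) (some u) := by
    refine ⟨rfl, ?_, ?_, ?_⟩
    · show ((u.1.2 : ℕ) * d + (d - 1)) / d = (u.1.2 : ℕ)
      rw [Nat.mul_comm, Nat.mul_add_div (by omega), Nat.div_eq_of_lt (by omega)]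
      omega
    · show (u.2 : ℕ) ≤ ((u.1.2 : ℕ) * d + (d - 1)) % d * c + (u.2 : ℕ)
      omega
    · show ((u.1.2 : ℕ) * d + (d - 1)) % d * c + (u.2 : ℕ) ≤ (d - 1) * c + (u.2 : ℕ)
      rw [hmod₀]
  have hnlt := hmax (some y₀) hchild
  have hrlt : (y.1.2 : ℕ) % d < d := Nat.mod_lt _ (by omega)
  have h5 := Nat.div_add_mod (y.1.2 : ℕ) d
  rw [hj, Nat.mul_comm d _] at h5
  have hyle : (y.1.2 : ℕ) ≤ (u.1.2 : ℕ) * d + (d - 1) := by omega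
  have hjeq : (y.1.2 : ℕ) = (u.1.2 : ℕ) * d + (d - 1) := by
    by_contra hne
    refine hnlt (Or.inl ?_)
    show ((y.1.2 : ℕ) * d + 1) * d ^ ((u.1.1 : ℕ) + 1) <
      (((u.1.2 : ℕ) * d + (d - 1)) * d + 1) * d ^ (y.1.1 : ℕ)
    rw [← hl]
    have h2 : (y.1.2 : ℕ) < (u.1.2 : ℕ) * d + (d - 1) := by omega
    have h3 : (y.1.2 : ℕ) * d < ((u.1.2 : ℕ) * d + (d - 1)) * d :=
      (Nat.mul_lt_mul_right (by omega)).mpr h2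
    exact (Nat.mul_lt_mul_right (by positivity)).mpr (by omega)
  have hmodeq : (y.1.2 : ℕ) % d = d - 1 := by rw [hjeq]; exact hmod₀
  have hieq : (y.2 : ℕ) = (u.2 : ℕ) := by
    rw [hmodeq] at hc2
    by_contra hne
    have hlt2 : (y.2 : ℕ) < (u.2 : ℕ) := by omega
    refine hnlt (Or.inr ⟨treeNode_eq ?_ ?_, ?_⟩)
    · rw [hl]
    · exact hjeq
    · show (y.2 : ℕ) < (u.2 : ℕ)
      omega
  have hexpand : ((u.1.2 : ℕ) + 1) * d = (u.1.2 : ℕ) * d + d := by ring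
  refine ⟨y, rfl, hl, by omega, hieq⟩

end Aux4
section Aux5
variable {d h c : ℕ}

/-- every node on the left-most path to `u` lies on the all-0-branches chain below `u`,
with the same copy index. -/
lemma leftmost_mem (hd : 2 ≤ d) (hc : 1 ≤ c) :
    ∀ (P : List (GNode d h c)) (u : CopyNode d h c),
    IsLeftmostPathTo (gLt d h c) (gChild' d h c) P (some u) →
    ∀ x ∈ P, ∃ (y : CopyNode d h c) (t : ℕ), x = some y ∧
      (y.1.1 : ℕ) = (u.1.1 : ℕ) + t ∧ (y.1.2 : ℕ) = (u.1.2 : ℕ) * d ^ t ∧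
      (y.2 : ℕ) = (u.2 : ℕ) := by
  intro P
  induction P using List.reverseRecOn with
  | nil => intro u hP; exact absurd rfl hP.1.1
  | append_singleton Ps a ih =>
    intro u hP x hx
    obtain ⟨⟨hne, hlast, hleaf, hchain⟩, hminchain⟩ := hP
    rw [List.getLast?_concat] at hlast
    obtain rfl : a = some u := by injection hlast
    rcases List.mem_append.mp hx with hxPs | hxa
    · -- x is in the earlier part
      have hne' : Ps ≠ [] := List.ne_nil_of_mem hxPs
      have hbl : Ps.getLast? = some (Ps.getLast hne') := List.getLast?_eq_getLast hne'
      set b := Ps.getLast hne' with hb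
      obtain ⟨hchPs, -, hrel⟩ := List.isChain_append.mp hchain
      obtain ⟨hmchPs, -, hmrel⟩ := List.isChain_append.mp hminchain
      have hbu : gChild' d h c b (some u) := hrel b hbl (some u) rfl
      have hbmin : ∀ w', gChild' d h c w' (some u) → ¬ gLt d h c w' b := by
        intro w' hw'
        exact hmrel b hbl (some u) rfl w' hw'
      obtain ⟨y₁, hby, hy₁l, hy₁j, hy₁i⟩ := min_child hd hc u hbu hbmin
      have hPs : IsLeftmostPathTo (gLt d h c) (gChild' d h c) Ps (some y₁) := by
        refine ⟨⟨hne', ?_, ?_, hchPs⟩, hmchPs⟩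
        · rw [hbl, hby]
        · intro w hw
          exact hleaf w (by rw [List.head?_append_of_ne_nil Ps hne']; exact hw)
      obtain ⟨y, t, hxy, h1, h2, h3⟩ := ih y₁ hPs x hxPs
      refine ⟨y, t + 1, hxy, by omega, ?_, by omega⟩
      rw [h2, hy₁j, pow_succ]
      ring
    · -- x = some u
      simp only [List.mem_singleton] at hxa
      exact ⟨u, 0, hxa, by simp, by simp, rfl⟩

/-- every node on the right-most path to `v` lies on the all-(d-1)-branches chain below
`v`, with the same copy index. -/
lemma rightmost_mem (hd : 2 ≤ d) (hc : 1 ≤ c) :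
    ∀ (P : List (GNode d h c)) (v : CopyNode d h c),
    IsRightmostPathTo (gLt d h c) (gChild' d h c) P (some v) →
    ∀ x ∈ P, ∃ (y : CopyNode d h c) (t : ℕ), x = some y ∧
      (y.1.1 : ℕ) = (v.1.1 : ℕ) + t ∧ (y.1.2 : ℕ) + 1 = ((v.1.2 : ℕ) + 1) * d ^ t ∧
      (y.2 : ℕ) = (v.2 : ℕ) := by
  intro P
  induction P using List.reverseRecOn with
  | nil => intro v hP; exact absurd rfl hP.1.1
  | append_singleton Ps a ih =>
    intro v hP x hx
    obtain ⟨⟨hne, hlast, hleaf, hchain⟩, hmaxchain⟩ := hP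
    rw [List.getLast?_concat] at hlast
    obtain rfl : a = some v := by injection hlast
    rcases List.mem_append.mp hx with hxPs | hxa
    · have hne' : Ps ≠ [] := List.ne_nil_of_mem hxPs
      have hbl : Ps.getLast? = some (Ps.getLast hne') := List.getLast?_eq_getLast hne'
      set b := Ps.getLast hne' with hb
      obtain ⟨hchPs, -, hrel⟩ := List.isChain_append.mp hchain
      obtain ⟨hmchPs, -, hmrel⟩ := List.isChain_append.mp hmaxchain
      have hbu : gChild' d h c b (some v) := hrel b hbl (some v) rfl
      have hbmax : ∀ w', gChild' d h c w' (some v) → ¬ gLt d h c b w' := by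
        intro w' hw'
        exact hmrel b hbl (some v) rfl w' hw'
      obtain ⟨y₁, hby, hy₁l, hy₁j, hy₁i⟩ := max_child hd hc v hbu hbmax
      have hPs : IsRightmostPathTo (gLt d h c) (gChild' d h c) Ps (some y₁) := by
        refine ⟨⟨hne', ?_, ?_, hchPs⟩, hmchPs⟩
        · rw [hbl, hby]
        · intro w hw
          exact hleaf w (by rw [List.head?_append_of_ne_nil Ps hne']; exact hw)
      obtain ⟨y, t, hxy, h1, h2, h3⟩ := ih y₁ hPs x hxPs
      refine ⟨y, t + 1, hxy, by omega, ?_, by omega⟩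
      rw [pow_succ', ← mul_assoc, ← hy₁j]
      exact h2
    · simp only [List.mem_singleton] at hxa
      exact ⟨v, 0, hxa, by simp, by simp, rfl⟩

end Aux5
section Aux6
variable {d h c : ℕ}

lemma branch_left (hd : 2 ≤ d) {lu lv ju jv jq : ℕ} (hk : lv < lu)
    (hq : jq = ju / d ^ (lu - lv - 1)) (hv : jv = jq / d)
    (hio : (ju * d + 1) * d ^ lv < (jv * d + 1) * d ^ lu) : jq % d = 0 := by
  have hd0 : 0 < d := by omega
  by_contra hne
  have hY : 0 < d ^ (lu - lv - 1) := pow_pos hd0 _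
  have hXY : d ^ (lu - lv) = d ^ (lu - lv - 1) * d := by
    rw [← pow_succ]; congr 1; omega
  have hlu : d ^ lu = d ^ lv * d ^ (lu - lv) := by rw [← pow_add]; congr 1; omega
  have hio2 : (ju * d + 1) * d ^ lv < ((jv * d + 1) * d ^ (lu - lv)) * d ^ lv := by
    calc (ju * d + 1) * d ^ lv < (jv * d + 1) * d ^ lu := hio
    _ = ((jv * d + 1) * d ^ (lu - lv)) * d ^ lv := by rw [hlu]; ring
  have hio3 : ju * d + 1 < (jv * d + 1) * d ^ (lu - lv) :=
    Nat.lt_of_mul_lt_mul_right hio2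
  have hju := Nat.div_add_mod ju (d ^ (lu - lv - 1))
  rw [← hq] at hju
  have hjqm := Nat.div_add_mod jq d
  rw [← hv] at hjqm
  obtain ⟨e, he2, hju2⟩ : ∃ e, e < d ^ (lu - lv - 1) ∧ ju = d ^ (lu - lv - 1) * jq + e :=
    ⟨ju % d ^ (lu - lv - 1), Nat.mod_lt _ hY, by omega⟩
  obtain ⟨r, hr1, hjq2⟩ : ∃ r, 1 ≤ r ∧ jq = d * jv + r := ⟨jq % d, by omega, by omega⟩
  rw [hjq2] at hju2
  have hE : ju * d + 1 = jv * d * (d ^ (lu - lv - 1) * d) + r * (d ^ (lu - lv - 1) * d)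
      + e * d + 1 := by rw [hju2]; ring
  have hRX : (jv * d + 1) * d ^ (lu - lv) = jv * d * (d ^ (lu - lv - 1) * d)
      + (d ^ (lu - lv - 1) * d) := by rw [hXY]; ring
  have hge : d ^ (lu - lv - 1) * d ≤ r * (d ^ (lu - lv - 1) * d) :=
    Nat.le_mul_of_pos_left _ hr1
  rw [hRX] at hio3
  omega

lemma branch_right (hd : 2 ≤ d) {lu lv ju jv jq : ℕ} (hk : lu < lv)
    (hq : jq = jv / d ^ (lv - lu - 1)) (hu : ju = jq / d)
    (hio : (ju * d + 1) * d ^ lv < (jv * d + 1) * d ^ lu) : 1 ≤ jq % d := by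
  have hd0 : 0 < d := by omega
  by_contra hne
  have hr : jq % d = 0 := by omega
  have hY : 0 < d ^ (lv - lu - 1) := pow_pos hd0 _
  have hXY : d ^ (lv - lu) = d ^ (lv - lu - 1) * d := by
    rw [← pow_succ]; congr 1; omega
  have hlv : d ^ lv = d ^ lu * d ^ (lv - lu) := by rw [← pow_add]; congr 1; omega
  have hio2 : ((ju * d + 1) * d ^ (lv - lu)) * d ^ lu < (jv * d + 1) * d ^ lu := by
    calc ((ju * d + 1) * d ^ (lv - lu)) * d ^ lu = (ju * d + 1) * d ^ lv := by
          rw [hlv]; ring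
    _ < (jv * d + 1) * d ^ lu := hio
  have hio3 : (ju * d + 1) * d ^ (lv - lu) < jv * d + 1 :=
    Nat.lt_of_mul_lt_mul_right hio2
  have hjv := Nat.div_add_mod jv (d ^ (lv - lu - 1))
  rw [← hq] at hjv
  have hjqm := Nat.div_add_mod jq d
  rw [← hu] at hjqm
  obtain ⟨e, he2, hjv2⟩ : ∃ e, e < d ^ (lv - lu - 1) ∧ jv = d ^ (lv - lu - 1) * jq + e :=
    ⟨jv % d ^ (lv - lu - 1), Nat.mod_lt _ hY, by omega⟩
  have hjq2 : jq = d * ju := by omega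
  rw [hjq2] at hjv2
  have hE : jv * d + 1 = ju * d * (d ^ (lv - lu - 1) * d) + e * d + 1 := by
    rw [hjv2]; ring
  have hLX : (ju * d + 1) * d ^ (lv - lu) = ju * d * (d ^ (lv - lu - 1) * d)
      + (d ^ (lv - lu - 1) * d) := by rw [hXY]; ring
  have h6 : (e + 1) * d ≤ d ^ (lv - lu - 1) * d := Nat.mul_le_mul_right d (by omega)
  have h7 : (e + 1) * d = e * d + d := by ring
  rw [hLX] at hio3
  omega

lemma pred_div_pow (hd : 1 ≤ d) (M s : ℕ) (hM : 1 ≤ M) :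
    (M * d ^ s - 1) / d ^ s = M - 1 := by
  have hX : 1 ≤ d ^ s := Nat.one_le_pow _ _ (by omega)
  have h1 : (M - 1) * d ^ s = M * d ^ s - d ^ s := Nat.sub_one_mul _ _
  have h2 : d ^ s ≤ M * d ^ s := Nat.le_mul_of_pos_left _ hM
  have h3 : M * d ^ s - 1 = (M - 1) * d ^ s + (d ^ s - 1) := by omega
  rw [h3, add_comm, Nat.add_mul_div_right _ _ (by omega : 0 < d ^ s),
    Nat.div_eq_of_lt (by omega)]
  omega

lemma noio_right (hd : 2 ≤ d) {lu lv ju jv : ℕ} (hltl : lv < lu)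
    (hju2 : ju + 1 = (jv + 1) * d ^ (lu - lv)) :
    ¬ (ju * d + 1) * d ^ lv < (jv * d + 1) * d ^ lu := by
  set k := lu - lv with hk
  have e1 : d ^ lu = d ^ lv * d ^ k := by rw [← pow_add]; congr 1; omega
  have hexpand : (jv + 1) * d ^ k * d = jv * d * d ^ k + d ^ k * d := by ring
  have hju3 : (ju + 1) * d = (jv + 1) * d ^ k * d := by rw [hju2]
  have hju4 : (ju + 1) * d = ju * d + d := by ring
  have hkk : 1 ≤ k := by omega
  have hdkd : d ^ k + d ≤ d ^ k * d + 1 := by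
    have hdk : d ≤ d ^ k := by
      calc d = d ^ 1 := (pow_one d).symm
      _ ≤ d ^ k := Nat.pow_le_pow_right (by omega) hkk
    have h1 : d ^ k * 2 ≤ d ^ k * d := Nat.mul_le_mul_left _ hd
    omega
  intro hio'
  have hexpand2 : (jv * d + 1) * d ^ k = jv * d * d ^ k + d ^ k := by ring
  have hB : (jv * d + 1) * d ^ k ≤ ju * d + 1 := by omega
  have hC : (jv * d + 1) * d ^ lu = ((jv * d + 1) * d ^ k) * d ^ lv := by
    rw [e1]; ring
  have hD : ((jv * d + 1) * d ^ k) * d ^ lv ≤ (ju * d + 1) * d ^ lv :=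
    Nat.mul_le_mul_right _ hB
  omega

end Aux6
section Core
variable {d h c : ℕ}

/-- part 1 core: a node on the all-0-chain below `u` cannot reach `v`. -/
lemma core1 (hd : 2 ≤ d) (hc : 1 ≤ c) {u v y : CopyNode d h c} {t : ℕ}
    (hlt : copyLt d h c u v)
    (huv : ¬ Relation.TransGen (gChild' d h c) (some u) (some v))
    (hy1 : (y.1.1 : ℕ) = (u.1.1 : ℕ) + t) (hy2 : (y.1.2 : ℕ) = (u.1.2 : ℕ) * d ^ t)
    (hy3 : (y.2 : ℕ) = (u.2 : ℕ))
    (hyv : Relation.ReflTransGen (gChild' d h c) (some y) (some v)) : False := by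
  have hd0 : 0 < d := by omega
  obtain ⟨hlv, hjv⟩ := rtg_struct (by omega) hyv y rfl
  rcases le_or_gt (u.1.1 : ℕ) (v.1.1 : ℕ) with hcase | hcase
  · -- v is weakly below u on the all-0 chain
    have hjv2 : (v.1.2 : ℕ) = (u.1.2 : ℕ) * d ^ ((v.1.1 : ℕ) - (u.1.1 : ℕ)) := by
      rw [hjv, hy2,
        show t = ((v.1.1 : ℕ) - (u.1.1 : ℕ)) + ((y.1.1 : ℕ) - (v.1.1 : ℕ)) by omega,
        pow_add, ← mul_assoc]
      exact Nat.mul_div_cancel _ (pow_pos hd0 _)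
    have hiv : (v.2 : ℕ) ≤ (u.2 : ℕ) := by
      have := reach_left (by omega : 1 ≤ d) hyv y rfl ?_
      · omega
      · rw [hy2, hjv2, mul_assoc, ← pow_add]
        congr 2
        omega
    rcases hlt with hio | ⟨heq, hlt2⟩
    · -- inorderLt u.1 v.1 is impossible
      have hio' : ((u.1.2 : ℕ) * d + 1) * d ^ (v.1.1 : ℕ) <
          ((v.1.2 : ℕ) * d + 1) * d ^ (u.1.1 : ℕ) := hio
      rcases Nat.eq_or_lt_of_le hcase with heql | hltl
      · have hjeq : (v.1.2 : ℕ) = (u.1.2 : ℕ) := by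
          rw [hjv2, show (v.1.1 : ℕ) - (u.1.1 : ℕ) = 0 by omega, pow_zero, mul_one]
        rw [hjeq, ← heql] at hio'
        exact absurd hio' (lt_irrefl _)
      · -- v strictly below on the 0-chain: key of v is smaller
        have e1 : d ^ (v.1.1 : ℕ) = d ^ (u.1.1 : ℕ) * d ^ ((v.1.1 : ℕ) - (u.1.1 : ℕ)) := by
          rw [← pow_add]; congr 1; omega
        have hE1 : ((u.1.2 : ℕ) * d + 1) * d ^ (v.1.1 : ℕ) =
            (u.1.2 : ℕ) * d * d ^ (u.1.1 : ℕ) * d ^ ((v.1.1 : ℕ) - (u.1.1 : ℕ))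
            + d ^ (u.1.1 : ℕ) * d ^ ((v.1.1 : ℕ) - (u.1.1 : ℕ)) := by rw [e1]; ring
        have hE2 : ((v.1.2 : ℕ) * d + 1) * d ^ (u.1.1 : ℕ) =
            (u.1.2 : ℕ) * d * d ^ (u.1.1 : ℕ) * d ^ ((v.1.1 : ℕ) - (u.1.1 : ℕ))
            + d ^ (u.1.1 : ℕ) := by rw [hjv2]; ring
        have h8 : 1 ≤ d ^ ((v.1.1 : ℕ) - (u.1.1 : ℕ)) := Nat.one_le_pow _ _ hd0
        have h9 : d ^ (u.1.1 : ℕ) ≤ d ^ (u.1.1 : ℕ) * d ^ ((v.1.1 : ℕ) - (u.1.1 : ℕ)) :=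
          Nat.le_mul_of_pos_right _ (by omega)
        rw [hE1, hE2] at hio'
        omega
    · -- same tree node: copy index comparison
      omega
  · -- v is strictly above u: build a path from u to v
    obtain ⟨w, hyw, hwv, hwl⟩ :=
      rtg_split (by omega : 1 ≤ d) (u.1.1 : ℕ) hyv y rfl (by omega) (by omega)
    obtain ⟨hlw', hjw'⟩ := rtg_struct (by omega) hyw y rfl
    have hjw : (w.1.2 : ℕ) = (u.1.2 : ℕ) := by
      rw [hjw', hy2, show (y.1.1 : ℕ) - (w.1.1 : ℕ) = t by omega]
      exact Nat.mul_div_cancel _ (pow_pos hd0 _)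
    have hiw : (w.2 : ℕ) ≤ (u.2 : ℕ) := by
      have := reach_left (by omega : 1 ≤ d) hyw y rfl
        (by rw [hy2, hjw, show (y.1.1 : ℕ) - (w.1.1 : ℕ) = t by omega])
      omega
    have htg : Relation.TransGen (gChild' d h c) (some w) (some v) := by
      rcases Relation.reflTransGen_iff_eq_or_transGen.mp hwv with heq2 | htg
      · exfalso
        have : v = w := by injection heq2
        have : (v.1.1 : ℕ) = (w.1.1 : ℕ) := by rw [this]
        omega
      · exact htg
    obtain ⟨q0, hwq, hqv⟩ := Relation.TransGen.tail'_iff.mp htg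
    obtain ⟨q, rfl, hql, hqj, hqc1, hqc2⟩ := gChild'_some hqv v rfl
    obtain ⟨hlq', hjq'⟩ := rtg_struct (by omega) hwq w rfl
    have hio : ((u.1.2 : ℕ) * d + 1) * d ^ (v.1.1 : ℕ) <
        ((v.1.2 : ℕ) * d + 1) * d ^ (u.1.1 : ℕ) := by
      rcases hlt with hio | ⟨heq, -⟩
      · exact hio
      · exfalso
        have : (u.1.1 : ℕ) = (v.1.1 : ℕ) := by rw [heq]
        omega
    have hbr : (q.1.2 : ℕ) % d = 0 := by
      refine branch_left hd (lu := (u.1.1 : ℕ)) (lv := (v.1.1 : ℕ)) hcase ?_ hqj.symm hio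
      rw [hjq', hjw]
      congr 2
      omega
    obtain ⟨i2, hi2ge, hpath⟩ := mono_up hd hc hwq w rfl u.2 hiw
    have hw1u1 : w.1 = u.1 := treeNode_eq (by omega) hjw
    rw [hw1u1] at hpath
    refine huv (Relation.TransGen.tail' hpath ?_)
    refine ⟨hql, hqj, ?_, ?_⟩
    · show (v.2 : ℕ) ≤ (q.1.2 : ℕ) % d * c + (i2 : ℕ)
      rw [hbr] at hqc1 ⊢
      omega
    · show (q.1.2 : ℕ) % d * c + (i2 : ℕ) ≤ (d - 1) * c + (v.2 : ℕ)
      rw [hbr]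
      have h10 : c ≤ (d - 1) * c := Nat.le_mul_of_pos_left c (by omega)
      have := i2.isLt
      omega

/-- part 2 core: a node on the all-(d-1)-chain below `v` cannot reach `u`. -/
lemma core2 (hd : 2 ≤ d) (hc : 1 ≤ c) {u v y : CopyNode d h c} {t : ℕ}
    (hlt : copyLt d h c u v)
    (hvu : ¬ Relation.TransGen (gChild' d h c) (some v) (some u))
    (hy1 : (y.1.1 : ℕ) = (v.1.1 : ℕ) + t)
    (hy2 : (y.1.2 : ℕ) + 1 = ((v.1.2 : ℕ) + 1) * d ^ t)
    (hy3 : (y.2 : ℕ) = (v.2 : ℕ))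
    (hyu : Relation.ReflTransGen (gChild' d h c) (some y) (some u)) : False := by
  have hd0 : 0 < d := by omega
  obtain ⟨hlu, hju⟩ := rtg_struct (by omega) hyu y rfl
  have hy2' : (y.1.2 : ℕ) = ((v.1.2 : ℕ) + 1) * d ^ t - 1 := by omega
  rcases le_or_gt (v.1.1 : ℕ) (u.1.1 : ℕ) with hcase | hcase
  · -- u is weakly below v on the all-(d-1) chain
    have hju2 : (u.1.2 : ℕ) + 1 =
        ((v.1.2 : ℕ) + 1) * d ^ ((u.1.1 : ℕ) - (v.1.1 : ℕ)) := by
      have hsplit : ((v.1.2 : ℕ) + 1) * d ^ t =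
          (((v.1.2 : ℕ) + 1) * d ^ ((u.1.1 : ℕ) - (v.1.1 : ℕ)))
            * d ^ ((y.1.1 : ℕ) - (u.1.1 : ℕ)) := by
        rw [mul_assoc, ← pow_add]
        congr 2
        omega
      have hM : 1 ≤ ((v.1.2 : ℕ) + 1) * d ^ ((u.1.1 : ℕ) - (v.1.1 : ℕ)) :=
        Nat.one_le_iff_ne_zero.mpr (by positivity)
      have := pred_div_pow (by omega : 1 ≤ d)
        (((v.1.2 : ℕ) + 1) * d ^ ((u.1.1 : ℕ) - (v.1.1 : ℕ)))
        ((y.1.1 : ℕ) - (u.1.1 : ℕ)) hM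
      rw [hju, hy2', hsplit, this]
      omega
    have hiu : (v.2 : ℕ) ≤ (u.2 : ℕ) := by
      have := reach_right (by omega : 1 ≤ d) hyu y rfl ?_
      · omega
      · rw [hy2, hju2, mul_assoc, ← pow_add]
        congr 2
        omega
    rcases hlt with hio | ⟨heq, hlt2⟩
    · have hio' : ((u.1.2 : ℕ) * d + 1) * d ^ (v.1.1 : ℕ) <
          ((v.1.2 : ℕ) * d + 1) * d ^ (u.1.1 : ℕ) := hio
      rcases Nat.eq_or_lt_of_le hcase with heql | hltl
      · have hjeq : (u.1.2 : ℕ) = (v.1.2 : ℕ) := by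
          rw [show (u.1.1 : ℕ) - (v.1.1 : ℕ) = 0 by omega, pow_zero, mul_one] at hju2
          omega
        have hpow : d ^ (v.1.1 : ℕ) = d ^ (u.1.1 : ℕ) := by rw [heql]
        rw [hjeq, ← hpow] at hio'
        exact absurd hio' (lt_irrefl _)
      · exact absurd hio' (noio_right hd hltl hju2)
    · omega
  · -- u is strictly above v: build a path from v to u
    obtain ⟨w, hyw, hwu, hwl⟩ :=
      rtg_split (by omega : 1 ≤ d) (v.1.1 : ℕ) hyu y rfl (by omega) (by omega)
    obtain ⟨hlw', hjw'⟩ := rtg_struct (by omega) hyw y rfl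
    have hjw : (w.1.2 : ℕ) = (v.1.2 : ℕ) := by
      have := pred_div_pow (by omega : 1 ≤ d) ((v.1.2 : ℕ) + 1) t (by omega)
      rw [hjw', hy2', show (y.1.1 : ℕ) - (w.1.1 : ℕ) = t by omega, this]
      omega
    have hiw : (v.2 : ℕ) ≤ (w.2 : ℕ) := by
      have := reach_right (by omega : 1 ≤ d) hyw y rfl
        (by rw [hy2, hjw, show (y.1.1 : ℕ) - (w.1.1 : ℕ) = t by omega])
      omega
    have htg : Relation.TransGen (gChild' d h c) (some w) (some u) := by
      rcases Relation.reflTransGen_iff_eq_or_transGen.mp hwu with heq2 | htg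
      · exfalso
        have : u = w := by injection heq2
        have : (u.1.1 : ℕ) = (w.1.1 : ℕ) := by rw [this]
        omega
      · exact htg
    obtain ⟨q0, hwq, hqu⟩ := Relation.TransGen.tail'_iff.mp htg
    obtain ⟨q, rfl, hql, hqj, hqc1, hqc2⟩ := gChild'_some hqu u rfl
    obtain ⟨hlq', hjq'⟩ := rtg_struct (by omega) hwq w rfl
    have hio : ((u.1.2 : ℕ) * d + 1) * d ^ (v.1.1 : ℕ) <
        ((v.1.2 : ℕ) * d + 1) * d ^ (u.1.1 : ℕ) := by
      rcases hlt with hio | ⟨heq, -⟩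
      · exact hio
      · exfalso
        have : (u.1.1 : ℕ) = (v.1.1 : ℕ) := by rw [heq]
        omega
    have hbr : 1 ≤ (q.1.2 : ℕ) % d := by
      refine branch_right hd (lu := (u.1.1 : ℕ)) (lv := (v.1.1 : ℕ)) hcase ?_ hqj.symm hio
      rw [hjq', hjw]
      congr 2
      omega
    obtain ⟨i2, hi2le, hpath⟩ := mono_down hd hc hwq w rfl v.2 hiw
    have hw1v1 : w.1 = v.1 := treeNode_eq (by omega) hjw
    rw [hw1v1] at hpath
    refine hvu (Relation.TransGen.tail' hpath ?_)
    refine ⟨hql, hqj, ?_, ?_⟩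
    · show (u.2 : ℕ) ≤ (q.1.2 : ℕ) % d * c + (i2 : ℕ)
      have h10 : c ≤ (q.1.2 : ℕ) % d * c := Nat.le_mul_of_pos_left c hbr
      have := u.2.isLt
      omega
    · show (q.1.2 : ℕ) % d * c + (i2 : ℕ) ≤ (d - 1) * c + (u.2 : ℕ)
      omega

end Core
/-- Let `d ≥ 2`, `h ≥ 1`, `c ≥ 1`, and let `u < v` be copy nodes of
`G'_{d,h}` such that there is no directed path from `u` to `v` and none from `v` to `u`.
Then the left-most path to `u` does not intersect any path from a leaf to `v`, and the
right-most path to `v` does not intersect any path from a leaf to `u`. -/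
theorem stmt_16 (d h c : ℕ) (hd : 2 ≤ d) (hh : 1 ≤ h) (hc : 1 ≤ c)
    (u v : CopyNode d h c) (hlt : copyLt d h c u v)
    (huv : ¬ Relation.TransGen (gChild' d h c) (some u) (some v))
    (hvu : ¬ Relation.TransGen (gChild' d h c) (some v) (some u)) :
    (∀ P Q : List (GNode d h c),
      IsLeftmostPathTo (gLt d h c) (gChild' d h c) P (some u) →
      IsPathFromLeafTo (gChild' d h c) Q (some v) →
      ∀ x, x ∈ P → x ∉ Q) ∧
    (∀ P Q : List (GNode d h c),
      IsRightmostPathTo (gLt d h c) (gChild' d h c) P (some v) →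
      IsPathFromLeafTo (gChild' d h c) Q (some u) →
      ∀ x, x ∈ P → x ∉ Q) := by
  constructor
  · rintro P Q hP hQ x hxP hxQ
    obtain ⟨y, t, rfl, hy1, hy2, hy3⟩ := leftmost_mem hd hc P u hP x hxP
    exact core1 hd hc hlt huv hy1 hy2 hy3
      (chain'_last_rtg Q (some v) hQ.2.2.2 hQ.2.1 _ hxQ)
  · rintro P Q hP hQ x hxP hxQ
    obtain ⟨y, t, rfl, hy1, hy2, hy3⟩ := rightmost_mem hd hc P v hP x hxP
    exact core2 hd hc hlt hvu hy1 hy2 hy3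
      (chain'_last_rtg Q (some u) hQ.2.2.2 hQ.2.1 _ hxQ)
end
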